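/- arXiv:1612.06210 — 14 statements merged into one kernel-verified Lean document; each statement's English description precedes it below -/
import Mathlib

section
/- For N ≥ 0 and n ≥ 1, the hypergeometric Euler number satisfies E_{N,2n} = (2n)! · Σ_{r=1}^n (-1)^r Σ_{i_1+⋯+i_r=n, i_j ≥ 1} ((2N)!)^r / ((2N+2i_1)! ⋯ (2N+2i_r)!). -/
open Finset

private noncomputable def Thg (N r n : ℕ) : ℝ :=
  ∑ c ∈ (Finset.Nat.antidiagonalTuple r n).filter (fun c => ∀ j, 1 ≤ c j),
    ((Nat.factorial (2 * N) : ℝ)) ^ r / ∏ j, (Nat.factorial (2 * N + 2 * c j) : ℝ)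

private lemma Thg_zero_succ (N n : ℕ) : Thg N 0 (n + 1) = 0 := by
  simp [Thg, Finset.Nat.antidiagonalTuple_zero_succ]

private lemma Thg_eq_zero_of_lt (N r n : ℕ) (h : n < r) : Thg N r n = 0 := by
  unfold Thg
  rw [Finset.filter_eq_empty_iff.2, Finset.sum_empty]
  intro c hc hpos
  rw [Finset.Nat.mem_antidiagonalTuple] at hc
  have : (r : ℕ) ≤ n := by
    calc r = ∑ _j : Fin r, 1 := by simp
    _ ≤ ∑ j, c j := Finset.sum_le_sum (fun j _ => hpos j)
    _ = n := hc
  omega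

private lemma Thg_succ (N r n : ℕ) :
    Thg N (r + 1) n = ∑ i ∈ Finset.range n,
      ((Nat.factorial (2 * N) : ℝ) / (Nat.factorial (2 * N + 2 * (n - i)) : ℝ)) * Thg N r i := by
  unfold Thg
  simp_rw [Finset.mul_sum]
  rw [Finset.sum_sigma']
  refine Finset.sum_nbij' (fun c => ⟨n - c 0, Fin.tail c⟩)
    (fun p => Fin.cons (n - p.1) p.2) ?_ ?_ ?_ ?_ ?_
  · intro c hc
    simp only [Finset.mem_filter, Finset.Nat.mem_antidiagonalTuple] at hc
    obtain ⟨hsum, hpos⟩ := hc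
    have h0 : 1 ≤ c 0 := hpos 0
    have hle : c 0 ≤ n := by
      rw [← hsum, Fin.sum_univ_succ]; omega
    simp only [Finset.mem_sigma, Finset.mem_range, Finset.mem_filter,
      Finset.Nat.mem_antidiagonalTuple]
    refine ⟨by omega, ?_, fun j => hpos j.succ⟩
    have := hsum
    rw [Fin.sum_univ_succ] at this
    simp only [Fin.tail]
    omega
  · rintro ⟨i, c⟩ hp
    simp only [Finset.mem_sigma, Finset.mem_range, Finset.mem_filter,
      Finset.Nat.mem_antidiagonalTuple] at hp
    obtain ⟨hi, hsum, hpos⟩ := hp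
    simp only [Finset.mem_filter, Finset.Nat.mem_antidiagonalTuple]
    constructor
    · rw [Fin.sum_univ_succ, Fin.cons_zero]
      simp only [Fin.cons_succ]
      omega
    · intro j
      refine Fin.cases ?_ ?_ j
      · rw [Fin.cons_zero]; omega
      · intro k; rw [Fin.cons_succ]; exact hpos k
  · intro c hc
    simp only [Finset.mem_filter, Finset.Nat.mem_antidiagonalTuple] at hc
    obtain ⟨hsum, hpos⟩ := hc
    have hle : c 0 ≤ n := by rw [← hsum, Fin.sum_univ_succ]; omega
    have h1 : n - (n - c 0) = c 0 := by omega
    simp only [h1]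
    exact Fin.cons_self_tail c
  · rintro ⟨i, c⟩ hp
    simp only [Finset.mem_sigma, Finset.mem_range] at hp
    have : n - (n - i) = i := by omega
    simp [Fin.tail_cons, this]
  · intro c hc
    simp only [Finset.mem_filter, Finset.Nat.mem_antidiagonalTuple] at hc
    obtain ⟨hsum, hpos⟩ := hc
    have hle : c 0 ≤ n := by rw [← hsum, Fin.sum_univ_succ]; omega
    have h1 : n - (n - c 0) = c 0 := by omega
    simp only [h1]
    rw [Fin.prod_univ_succ, pow_succ']
    rw [div_mul_div_comm]
    congr 1

private noncomputable def ghg (N n : ℕ) : ℝ :=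
  ∑ r ∈ Finset.range (n + 1), (-1 : ℝ) ^ r * Thg N r n

private lemma ghg_zero (N : ℕ) : ghg N 0 = 1 := by
  simp [ghg, Thg, Finset.Nat.antidiagonalTuple_zero_zero]

private lemma ghg_rec (N n : ℕ) (hn : 1 ≤ n) :
    ghg N n = -∑ i ∈ Finset.range n,
      ((Nat.factorial (2 * N) : ℝ) / (Nat.factorial (2 * N + 2 * (n - i)) : ℝ)) * ghg N i := by
  obtain ⟨m, rfl⟩ : ∃ m, n = m + 1 := ⟨n - 1, by omega⟩
  unfold ghg
  rw [Finset.sum_range_succ'] -- split off r = 0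
  rw [Thg_zero_succ]
  simp only [pow_zero, one_mul, mul_zero, add_zero, pow_succ]
  simp_rw [Thg_succ, mul_comm ((-1:ℝ)^_) (-1:ℝ), mul_assoc, Finset.mul_sum, neg_one_mul,
    Finset.sum_neg_distrib]
  rw [Finset.sum_comm]
  simp only [← Finset.sum_neg_distrib, neg_neg]
  apply Finset.sum_congr rfl
  intro y hy
  rw [Finset.mem_range] at hy
  rw [← Finset.sum_subset (Finset.range_subset_range.2 (by omega : y + 1 ≤ m + 1))
    (fun r _ hr => by
      rw [Thg_eq_zero_of_lt N r y (by simpa using (Finset.mem_range.not.1 hr) |> fun h => by omega)]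
      ring)]
  exact Finset.sum_congr rfl (fun r _ => by ring)

/-- For `N ≥ 0` and `n ≥ 1`,
`E_{N,2n} = (2n)! ∑_{r=1}^n (-1)^r ∑_{i₁+⋯+i_r=n, i_j ≥ 1} ((2N)!)^r/((2N+2i₁)!⋯(2N+2i_r)!)`,
where the hypergeometric Euler numbers are given by `E_{N,0}=1`, the stated recurrence,
and `E_{N,n}=0` for odd `n`. -/
theorem hypergeometric_euler_explicit (N : ℕ) (E : ℕ → ℝ)
    (h0 : E 0 = 1)
    (hodd : ∀ n : ℕ, Odd n → E n = 0)
    (hrec : ∀ n : ℕ, 1 ≤ n →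
      E (2 * n) = -(Nat.factorial (2 * n) : ℝ) * (Nat.factorial (2 * N)) *
        ∑ i ∈ Finset.range n,
          E (2 * i) / ((Nat.factorial (2 * N + 2 * n - 2 * i) : ℝ) * (Nat.factorial (2 * i)))) :
    ∀ n : ℕ, 1 ≤ n →
      E (2 * n) = (Nat.factorial (2 * n) : ℝ) *
        ∑ r ∈ Finset.Icc 1 n, (-1 : ℝ) ^ r *
          ∑ c ∈ (Finset.Nat.antidiagonalTuple r n).filter (fun c => ∀ j, 1 ≤ c j),
            ((Nat.factorial (2 * N) : ℝ)) ^ r / ∏ j, (Nat.factorial (2 * N + 2 * c j) : ℝ) := by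
  have key : ∀ n : ℕ, E (2 * n) = (Nat.factorial (2 * n) : ℝ) * ghg N n := by
    intro n
    induction n using Nat.strong_induction_on with
    | _ n ih =>
      rcases Nat.eq_zero_or_pos n with rfl | hn
      · simpa [ghg_zero] using h0
      · rw [hrec n hn, ghg_rec N n hn]
        rw [neg_mul, neg_mul, Finset.mul_sum, mul_neg, Finset.mul_sum, ← Finset.sum_neg_distrib, ← Finset.sum_neg_distrib]
        apply Finset.sum_congr rfl
        intro i hi
        rw [Finset.mem_range] at hi
        rw [ih i hi]
        have h2 : 2 * N + 2 * n - 2 * i = 2 * N + 2 * (n - i) := by omega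
        rw [h2]
        have hfi : ((2 * i).factorial : ℝ) ≠ 0 := Nat.cast_ne_zero.2 (Nat.factorial_ne_zero _)
        have hfw : ((2 * N + 2 * (n - i)).factorial : ℝ) ≠ 0 :=
          Nat.cast_ne_zero.2 (Nat.factorial_ne_zero _)
        field_simp
  intro n hn
  rw [key n]
  congr 1
  unfold ghg
  obtain ⟨m, rfl⟩ : ∃ m, n = m + 1 := ⟨n - 1, by omega⟩
  rw [show Finset.range (m + 1 + 1) = insert 0 (Finset.Icc 1 (m + 1)) by
    ext x; simp [Finset.mem_Icc, Finset.mem_range]; omega]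
  rw [Finset.sum_insert (by simp)]
  rw [pow_zero, one_mul, Thg_zero_succ, zero_add]
  exact Finset.sum_congr rfl (fun r _ => rfl)
end

section
/- For N ≥ 0 and even n ≥ 2, E_{N,n} = n! Σ_{k=1}^{n} (-1)^k C(n+1, k+1) Σ_{i_1,…,i_k ≥ 0, i_1+⋯+i_k = n/2} ((2N)!)^k / ((2N+2i_1)! ⋯ (2N+2i_k)!). -/
open Finset PowerSeries

/-- Rewriting a sum over `antidiagonalTuple` as a sum over `finsuppAntidiag`. -/
lemma aux_sum_tuple_eq_finsupp (k m : ℕ) (f : ℕ → ℝ) :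
    ∑ c ∈ Finset.Nat.antidiagonalTuple k m, ∏ j, f (c j)
      = ∑ l ∈ Finset.finsuppAntidiag (Finset.range k) m, ∏ i ∈ Finset.range k, f (l i) := by
  refine Finset.sum_nbij'
    (i := fun c => Finsupp.onFinset (Finset.range k)
      (fun i => if h : i < k then c ⟨i, h⟩ else 0) ?_)
    (j := fun l => fun j : Fin k => l j) ?_ ?_ ?_ ?_ ?_
  · intro i hi
    simp only [ne_eq, dite_eq_right_iff, not_forall] at hi
    obtain ⟨h, -⟩ := hi
    exact Finset.mem_range.mpr h
  · intro c hc
    rw [Finset.Nat.mem_antidiagonalTuple] at hc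
    rw [Finset.mem_finsuppAntidiag]
    refine ⟨?_, Finsupp.support_onFinset_subset⟩
    rw [Finset.sum_congr rfl (fun i hi => ?_), ← hc,
      Finset.sum_range fun i => if h : i < k then c ⟨i, h⟩ else 0]
    · exact Finset.sum_congr rfl fun j _ => by rw [dif_pos j.isLt]
    · simp only [Finsupp.onFinset_apply]
  · intro l hl
    rw [Finset.mem_finsuppAntidiag] at hl
    rw [Finset.Nat.mem_antidiagonalTuple, ← Finset.sum_range fun i => l i]
    exact hl.1
  · intro c hc
    funext j
    simp only [Finsupp.onFinset_apply, j.isLt, dif_pos, Fin.eta]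
  · intro l hl
    rw [Finset.mem_finsuppAntidiag] at hl
    ext i
    simp only [Finsupp.onFinset_apply]
    split
    · rfl
    · rename_i h
      by_contra hne
      exact h (Finset.mem_range.mp (hl.2 (Finsupp.mem_support_iff.mpr (fun h0 => hne h0.symm))))
  · intro c hc
    simp only [Finsupp.onFinset_apply]
    rw [Finset.prod_range fun i => f (if h : i < k then c ⟨i, h⟩ else 0)]
    exact Finset.prod_congr rfl fun j _ => by rw [dif_pos j.isLt]

/-- The key polynomial identity `A·∑_{k=1}^n (-1)^k C(n+1,k+1) A^k = 1 - (1-A)^{n+1} - (n+1)A`. -/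
lemma aux_ring_id {R : Type*} [CommRing R] (A : R) (n : ℕ) :
    A * (∑ k ∈ Finset.Icc 1 n, (-1 : R) ^ k * ((n + 1).choose (k + 1) : R) * A ^ k)
      = 1 - (1 - A) ^ (n + 1) - ((n + 1 : ℕ) : R) * A := by
  have hsplit : ∑ k ∈ Finset.range (n + 1), (-1 : R) ^ k * ((n + 1).choose (k + 1) : R) * A ^ k
      = ((n + 1 : ℕ) : R) + ∑ k ∈ Finset.Icc 1 n, (-1 : R) ^ k * ((n + 1).choose (k + 1) : R) * A ^ k := by
    rw [Finset.sum_range_succ']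
    rw [show Finset.Icc 1 n = Finset.Ico 1 (n + 1) by rw [Finset.Ico_add_one_right_eq_Icc]]
    rw [Finset.sum_Ico_eq_sum_range]
    simp [add_comm, Nat.choose_one_right]
  have hpow : (1 - A) ^ (n + 1)
      = 1 + ∑ k ∈ Finset.range (n + 1), (-A) ^ (k + 1) * ((n + 1).choose (k + 1) : R) := by
    rw [sub_eq_add_neg, add_comm, add_pow, Finset.sum_range_succ']
    simp [add_comm]
  have hmul : A * ∑ k ∈ Finset.range (n + 1), (-1 : R) ^ k * ((n + 1).choose (k + 1) : R) * A ^ k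
      = 1 - (1 - A) ^ (n + 1) := by
    rw [hpow, Finset.mul_sum]
    rw [show (1 : R) - (1 + ∑ k ∈ Finset.range (n + 1), (-A) ^ (k + 1) * ((n + 1).choose (k + 1) : R))
      = ∑ k ∈ Finset.range (n + 1), -((-A) ^ (k + 1) * ((n + 1).choose (k + 1) : R)) by
        rw [Finset.sum_neg_distrib]; ring]
    refine Finset.sum_congr rfl fun k _ => ?_
    rw [neg_pow]
    ring
  calc A * (∑ k ∈ Finset.Icc 1 n, (-1 : R) ^ k * ((n + 1).choose (k + 1) : R) * A ^ k)
      = A * ∑ k ∈ Finset.range (n + 1), (-1 : R) ^ k * ((n + 1).choose (k + 1) : R) * A ^ k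
        - ((n + 1 : ℕ) : R) * A := by rw [hsplit]; ring
    _ = 1 - (1 - A) ^ (n + 1) - ((n + 1 : ℕ) : R) * A := by rw [hmul]

/-- For `N ≥ 0` and even `n ≥ 2`,
`E_{N,n} = n! ∑_{k=1}^n (-1)^k C(n+1,k+1) ∑_{i₁,…,i_k ≥ 0, i₁+⋯+i_k=n/2}
((2N)!)^k/((2N+2i₁)!⋯(2N+2i_k)!)`, the hypergeometric Euler numbers being defined by
`E_{N,0}=1` and the recurrence `∑_{i=0}^{n/2} E_{N,2i}/((2N+n-2i)!(2i)!)=0` for even `n ≥ 2`. -/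
theorem hypergeometric_euler_binomial_explicit (N : ℕ) (E : ℕ → ℝ)
    (h0 : E 0 = 1)
    (hrec : ∀ n : ℕ, 2 ≤ n → Even n →
      ∑ i ∈ Finset.range (n / 2 + 1),
        E (2 * i) / ((Nat.factorial (2 * N + n - 2 * i) : ℝ) * (Nat.factorial (2 * i))) = 0) :
    ∀ n : ℕ, 2 ≤ n → Even n →
      E n = (Nat.factorial n : ℝ) *
        ∑ k ∈ Finset.Icc 1 n, (-1 : ℝ) ^ k * (Nat.choose (n + 1) (k + 1) : ℝ) *
          ∑ c ∈ Finset.Nat.antidiagonalTuple k (n / 2),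
            ((Nat.factorial (2 * N) : ℝ)) ^ k / ∏ j, (Nat.factorial (2 * N + 2 * c j) : ℝ) := by
  classical
  intro n hn2 hne
  obtain ⟨m, rfl⟩ := hne
  have hmm : m + m = 2 * m := (two_mul m).symm
  have hm1 : 1 ≤ m := by omega
  rw [hmm] at hn2 ⊢
  rw [Nat.mul_div_cancel_left m (by norm_num : 0 < 2)]
  -- set up the power series
  set a : ℕ → ℝ := fun i => (Nat.factorial (2 * N) : ℝ) / (Nat.factorial (2 * N + 2 * i) : ℝ)
    with ha
  set A : PowerSeries ℝ := PowerSeries.mk a with hA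
  set u : PowerSeries ℝ := PowerSeries.mk (fun i => E (2 * i) / (Nat.factorial (2 * i) : ℝ))
    with hu
  have hAu : A * u = 1 := by
    ext idx
    rw [PowerSeries.coeff_mul]
    match idx with
    | 0 =>
      simp only [Finset.Nat.antidiagonal_zero, Finset.sum_singleton, hA, hu, coeff_mk, ha,
        Nat.mul_zero, Nat.add_zero, h0, Nat.factorial_zero, PowerSeries.coeff_zero_eq_constantCoeff,
        map_one]
      rw [div_self (by positivity), Nat.cast_one, div_one, mul_one]
    | (m' + 1) =>
      have hr := hrec (2 * (m' + 1)) (by omega) (even_two_mul _)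
      rw [Nat.mul_div_cancel_left _ (by norm_num : 0 < 2)] at hr
      rw [Finset.Nat.sum_antidiagonal_eq_sum_range_succ_mk, ← Finset.sum_range_reflect]
      rw [PowerSeries.coeff_one, if_neg (by omega)]
      calc ∑ j ∈ Finset.range (m' + 1 + 1),
            (PowerSeries.coeff (R := ℝ) (m' + 1 - j)) A *
              (PowerSeries.coeff (R := ℝ) (m' + 1 - (m' + 1 - j))) u
          = ((2 * N).factorial : ℝ) * ∑ i ∈ Finset.range (m' + 1 + 1),
              E (2 * i) / ((Nat.factorial (2 * N + 2 * (m' + 1) - 2 * i) : ℝ) *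
                (Nat.factorial (2 * i))) := by
            rw [Finset.mul_sum]
            refine Finset.sum_congr rfl fun j hj => ?_
            have hjle : j ≤ m' + 1 := by
              rw [Finset.mem_range] at hj; omega
            rw [show m' + 1 - (m' + 1 - j) = j by omega]
            simp only [hA, hu, coeff_mk, ha]
            rw [show 2 * N + 2 * (m' + 1 - j) = 2 * N + 2 * (m' + 1) - 2 * j by omega]
            rw [div_mul_div_comm, mul_comm ((2 * N + 2 * (m' + 1) - 2 * j).factorial : ℝ),
              mul_div_assoc]
        _ = 0 := by rw [hr, mul_zero]
  -- the main coefficient identity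
  have key : E (2 * m) / (Nat.factorial (2 * m) : ℝ) =
      ∑ k ∈ Finset.Icc 1 (2 * m), (-1 : ℝ) ^ k * ((2 * m + 1).choose (k + 1) : ℝ) *
        ∑ l ∈ Finset.finsuppAntidiag (Finset.range k) m, ∏ i ∈ Finset.range k, a (l i) := by
    set n' := 2 * m with hn'
    set Q : PowerSeries ℝ :=
      ∑ k ∈ Finset.Icc 1 n',
        (-1 : PowerSeries ℝ) ^ k * ((n' + 1).choose (k + 1) : PowerSeries ℝ) * A ^ k
      with hQ
    have hid : A * Q = 1 - (1 - A) ^ (n' + 1) - ((n' + 1 : ℕ) : PowerSeries ℝ) * A :=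
      aux_ring_id A n'
    have hXdvd : (PowerSeries.X : PowerSeries ℝ) ^ (n' + 1) ∣ (1 - A) ^ (n' + 1) := by
      refine pow_dvd_pow_of_dvd (PowerSeries.X_dvd_iff.mpr ?_) _
      simp only [map_sub, map_one, hA, PowerSeries.constantCoeff_mk, ha]
      rw [Nat.mul_zero, Nat.add_zero, div_self (by positivity), sub_self]
    have hQu : Q = u - u * (1 - A) ^ (n' + 1) - ((n' + 1 : ℕ) : PowerSeries ℝ) := by
      have h1 : u * (A * Q) = Q := by
        rw [← mul_assoc, mul_comm u A, hAu, one_mul]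
      calc Q = u * (A * Q) := h1.symm
        _ = u * (1 - (1 - A) ^ (n' + 1) - ((n' + 1 : ℕ) : PowerSeries ℝ) * A) := by rw [hid]
        _ = u - u * (1 - A) ^ (n' + 1) - ((n' + 1 : ℕ) : PowerSeries ℝ) * (A * u) := by ring
        _ = u - u * (1 - A) ^ (n' + 1) - ((n' + 1 : ℕ) : PowerSeries ℝ) := by rw [hAu, mul_one]
    have hcoefQ : PowerSeries.coeff (R := ℝ) m Q = E (2 * m) / (Nat.factorial (2 * m) : ℝ) := by
      rw [hQu, map_sub, map_sub]
      have hz1 : PowerSeries.coeff (R := ℝ) m (u * (1 - A) ^ (n' + 1)) = 0 := by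
        have : (PowerSeries.X : PowerSeries ℝ) ^ (n' + 1) ∣ u * (1 - A) ^ (n' + 1) :=
          Dvd.dvd.mul_left hXdvd u
        exact PowerSeries.X_pow_dvd_iff.mp this m (by omega)
      have hz2 : PowerSeries.coeff (R := ℝ) m ((n' + 1 : ℕ) : PowerSeries ℝ) = 0 := by
        rw [← map_natCast (PowerSeries.C (R := ℝ)) (n' + 1), PowerSeries.coeff_C, if_neg (by omega)]
      rw [hz1, hz2, hu, PowerSeries.coeff_mk, sub_zero, sub_zero]
    rw [← hcoefQ, hQ, map_sum]
    refine Finset.sum_congr rfl fun k hk => ?_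
    have hC : (-1 : PowerSeries ℝ) ^ k * ((n' + 1).choose (k + 1) : PowerSeries ℝ)
        = PowerSeries.C (R := ℝ) ((-1 : ℝ) ^ k * ((n' + 1).choose (k + 1) : ℝ)) := by
      rw [map_mul, map_pow, map_neg, map_one, map_natCast]
    rw [hC, PowerSeries.coeff_C_mul, hA, PowerSeries.coeff_pow]
    simp only [PowerSeries.coeff_mk]
  -- conclude
  have hfac : (Nat.factorial (2 * m) : ℝ) ≠ 0 := by positivity
  have hS : ∀ k : ℕ, ∑ c ∈ Finset.Nat.antidiagonalTuple k m,
      ((Nat.factorial (2 * N) : ℝ)) ^ k / ∏ j, (Nat.factorial (2 * N + 2 * c j) : ℝ)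
      = ∑ l ∈ Finset.finsuppAntidiag (Finset.range k) m, ∏ i ∈ Finset.range k, a (l i) := by
    intro k
    rw [← aux_sum_tuple_eq_finsupp]
    refine Finset.sum_congr rfl fun c _ => ?_
    simp only [ha]
    rw [Finset.prod_div_distrib, Finset.prod_const, Finset.card_univ, Fintype.card_fin]
  simp only [hS]
  rw [← key, mul_div_cancel₀ _ hfac]
end

section
/- For every N ≥ 0, E_{N,4} = 2·4!·(4N+5) / ((2N+1)²(2N+2)²(2N+3)(2N+4)). -/
/-- For every `N ≥ 0`, `E_{N,4} = 2·4!·(4N+5)/((2N+1)²(2N+2)²(2N+3)(2N+4))`, the hypergeometric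
Euler numbers being defined by `E_{N,0}=1`, the recurrence, and `E_{N,n}=0` for odd `n`. -/
theorem hypergeometric_euler_four (N : ℕ) (E : ℕ → ℝ)
    (h0 : E 0 = 1)
    (hodd : ∀ n : ℕ, Odd n → E n = 0)
    (hrec : ∀ n : ℕ, 2 ≤ n → Even n →
      ∑ i ∈ Finset.range (n / 2 + 1),
        E (2 * i) / ((Nat.factorial (2 * N + n - 2 * i) : ℝ) * (Nat.factorial (2 * i))) = 0) :
    E 4 = 2 * (Nat.factorial 4 : ℝ) * ((4 * N + 5 : ℕ) : ℝ) /
      (((2 * N + 1 : ℕ) : ℝ) ^ 2 * ((2 * N + 2 : ℕ) : ℝ) ^ 2 *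
        ((2 * N + 3 : ℕ) : ℝ) * ((2 * N + 4 : ℕ) : ℝ)) := by
  have h2 := hrec 2 (by norm_num) (by decide)
  have h4 := hrec 4 (by norm_num) (by decide)
  norm_num [Finset.sum_range_succ] at h2 h4
  rw [show 2 * N + 4 - 2 = 2 * N + 2 from by omega] at h4
  have hF : ((2*N).factorial : ℝ) ≠ 0 := by positivity
  have hN1 : ((N:ℝ)*2+1) ≠ 0 := by positivity
  have hN2 : ((N:ℝ)*2+2) ≠ 0 := by positivity
  have hN3 : ((N:ℝ)*2+3) ≠ 0 := by positivity
  have hN4 : ((N:ℝ)*2+4) ≠ 0 := by positivity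
  have f1 : ((2*N+2).factorial : ℝ) = ((N:ℝ)*2+2)*((N:ℝ)*2+1)*(2*N).factorial := by
    rw [show 2*N+2 = (2*N+1)+1 from rfl, Nat.factorial_succ, Nat.factorial_succ]
    push_cast; ring
  have f2 : ((2*N+4).factorial : ℝ) = ((N:ℝ)*2+4)*((N:ℝ)*2+3)*(2*N+2).factorial := by
    rw [show 2*N+4 = (2*N+3)+1 from rfl, Nat.factorial_succ,
      show 2*N+3 = (2*N+2)+1 from rfl, Nat.factorial_succ]
    push_cast; ring
  rw [h0, f1] at h2
  rw [h0, f2, f1] at h4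
  field_simp at h2 h4
  have h2' : 2 + E 2 * (((N:ℝ)*2+2)*((N:ℝ)*2+1)) = 0 := by
    have h : ((2*N).factorial:ℝ) * (2 + E 2 * (((N:ℝ)*2+2)*((N:ℝ)*2+1))) = 0 := by
      linear_combination (2*((2*N).factorial:ℝ)) * h2
    exact (mul_eq_zero.mp h).resolve_left hF
  have h4' : (((N:ℝ)*2+2)*((N:ℝ)*2+1)*2 + E 2 * (((N:ℝ)*2+4)*((N:ℝ)*2+3)*(((N:ℝ)*2+2)*((N:ℝ)*2+1))))*24
      + E 4 * (((N:ℝ)*2+4)*((N:ℝ)*2+3)*(((N:ℝ)*2+2)*((N:ℝ)*2+1))*(((N:ℝ)*2+2)*((N:ℝ)*2+1)*2)) = 0 := by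
    have h : (((2*N).factorial:ℝ))^2 * ((((N:ℝ)*2+2)*((N:ℝ)*2+1)*2 + E 2 * (((N:ℝ)*2+4)*((N:ℝ)*2+3)*(((N:ℝ)*2+2)*((N:ℝ)*2+1))))*24
      + E 4 * (((N:ℝ)*2+4)*((N:ℝ)*2+3)*(((N:ℝ)*2+2)*((N:ℝ)*2+1))*(((N:ℝ)*2+2)*((N:ℝ)*2+1)*2))) = 0 := by
      linear_combination ((((2*N).factorial:ℝ))^2*(((N:ℝ)*2+2)*((N:ℝ)*2+1))) * h4
    exact (mul_eq_zero.mp h).resolve_left (pow_ne_zero 2 hF)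
  have hfac4 : (Nat.factorial 4 : ℝ) = 24 := by norm_num [Nat.factorial]
  rw [hfac4]
  push_cast
  rw [eq_div_iff (by positivity)]
  linear_combination (-12*((N:ℝ)*2+4)*((N:ℝ)*2+3)) * h2' + (1/2) * h4'
end

section
/- For all n ≥ 1, E_{1,n} = -(n-1)·B_n, where B_n are the Bernoulli numbers. -/
open PowerSeries

noncomputable def coshSub1 : ℝ⟦X⟧ :=
  PowerSeries.mk fun m => if Even m ∧ 2 ≤ m then (1 : ℝ) / (Nat.factorial m) else 0

noncomputable def Fcand : ℝ⟦X⟧ :=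
  PowerSeries.mk fun n => (1 - (n : ℝ)) * ((bernoulli n : ℚ) : ℝ) / (Nat.factorial n)

lemma derivative_exp_real : d⁄dX ℝ (exp ℝ) = exp ℝ := by
  ext n
  rw [PowerSeries.coeff_derivative, coeff_exp, coeff_exp]
  simp only [map_div₀, map_one, map_natCast]
  have h1 : (((n+1).factorial : ℝ)) ≠ 0 := by exact_mod_cast Nat.factorial_ne_zero _
  have h2 : ((n.factorial : ℝ)) ≠ 0 := by exact_mod_cast Nat.factorial_ne_zero _
  field_simp
  rw [Nat.factorial_succ]
  push_cast
  ring

lemma two_coshSub1 : (2 : ℝ⟦X⟧) * coshSub1 = exp ℝ + evalNegHom (exp ℝ) - 2 := by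
  have h2 : (2 : ℝ⟦X⟧) = PowerSeries.C (2:ℝ) := by simp [map_ofNat]
  rw [h2]
  ext n
  rw [map_sub, map_add, PowerSeries.coeff_C_mul]
  simp only [coshSub1, PowerSeries.coeff_mk, coeff_exp, evalNegHom, coeff_rescale,
    PowerSeries.coeff_C, map_div₀, map_one, map_natCast]
  rcases Nat.even_or_odd n with he | ho
  · rcases Nat.lt_or_ge n 2 with hlt | hge
    · interval_cases n
      · norm_num
      · simp at he
    · have hn : n ≠ 0 := by omega
      rw [if_pos ⟨he, hge⟩, he.neg_one_pow, if_neg hn]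
      ring
  · have hn : n ≠ 0 := by rintro rfl; simp at ho
    rw [if_neg (by simp [Nat.not_even_iff_odd.mpr ho]), ho.neg_one_pow, if_neg hn]
    ring

lemma Fcand_eq : Fcand = bernoulliPowerSeries ℝ - X * d⁄dX ℝ (bernoulliPowerSeries ℝ) := by
  ext n
  rw [map_sub]
  cases n with
  | zero =>
      simp [Fcand, bernoulliPowerSeries, PowerSeries.coeff_zero_X_mul]
  | succ m =>
      rw [PowerSeries.coeff_succ_X_mul, PowerSeries.coeff_derivative]
      simp only [Fcand, bernoulliPowerSeries, PowerSeries.coeff_mk, map_div₀, map_natCast]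
      have h1 : (((m+1).factorial : ℝ)) ≠ 0 := by exact_mod_cast Nat.factorial_ne_zero _
      have h2 : ((m.factorial : ℝ)) ≠ 0 := by exact_mod_cast Nat.factorial_ne_zero _
      field_simp
      simp only [eq_ratCast]
      push_cast
      ring

lemma key : coshSub1 * Fcand = PowerSeries.monomial 2 ((1 : ℝ) / (Nat.factorial 2)) := by
  have hunit : IsUnit (exp ℝ) := by
    rw [PowerSeries.isUnit_iff_constantCoeff, constantCoeff_exp]
    simp
  have h2 : IsUnit (2 : ℝ⟦X⟧) := by
    rw [PowerSeries.isUnit_iff_constantCoeff]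
    simp only [map_ofNat]
    exact isUnit_iff_ne_zero.mpr (by norm_num)
  apply (h2.mul hunit).mul_left_cancel
  have hB := bernoulliPowerSeries_mul_exp_sub_one ℝ
  have hdB : d⁄dX ℝ (bernoulliPowerSeries ℝ) * (exp ℝ - 1)
      + bernoulliPowerSeries ℝ * exp ℝ = 1 := by
    have h := congrArg (d⁄dX ℝ) hB
    rw [Derivation.leibniz, map_sub, derivative_exp_real, Derivation.map_one_eq_zero,
      sub_zero, PowerSeries.derivative_X, smul_eq_mul, smul_eq_mul] at h
    linear_combination h
  have hcosh : (2 : ℝ⟦X⟧) * coshSub1 * exp ℝ = (exp ℝ - 1) ^ 2 := by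
    rw [two_coshSub1]
    linear_combination exp_mul_exp_neg_eq_one (A := ℝ)
  have hone : (2 : ℝ⟦X⟧) * PowerSeries.C ((1:ℝ)/2) = 1 := by
    rw [show (2 : ℝ⟦X⟧) = PowerSeries.C (2:ℝ) by simp [map_ofNat], ← map_mul]
    norm_num
  have hmon : PowerSeries.monomial 2 ((1 : ℝ) / (Nat.factorial 2))
      = PowerSeries.C ((1:ℝ)/2) * X ^ 2 := by
    rw [PowerSeries.X_pow_eq, PowerSeries.monomial_eq_mk, PowerSeries.monomial_eq_mk]
    ext k
    simp only [PowerSeries.coeff_mk, PowerSeries.coeff_C_mul]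
    rcases eq_or_ne k 2 with rfl | hk
    · norm_num [Nat.factorial]
    · simp [hk]
  calc (2 : ℝ⟦X⟧) * exp ℝ * (coshSub1 * Fcand)
      = ((2 : ℝ⟦X⟧) * coshSub1 * exp ℝ) * Fcand := by ring
    _ = (exp ℝ - 1) ^ 2 * (bernoulliPowerSeries ℝ - X * d⁄dX ℝ (bernoulliPowerSeries ℝ)) := by
        rw [hcosh, Fcand_eq]
    _ = (bernoulliPowerSeries ℝ * (exp ℝ - 1)) * (exp ℝ - 1)
        - X * ((d⁄dX ℝ (bernoulliPowerSeries ℝ) * (exp ℝ - 1)) * (exp ℝ - 1)) := by ring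
    _ = X * (exp ℝ - 1) - X * ((1 - bernoulliPowerSeries ℝ * exp ℝ) * (exp ℝ - 1)) := by
        rw [hB]
        congr 2
        linear_combination (exp ℝ - 1) * hdB
    _ = X * (bernoulliPowerSeries ℝ * (exp ℝ - 1)) * exp ℝ := by ring
    _ = X ^ 2 * exp ℝ := by rw [hB]; ring
    _ = (2 : ℝ⟦X⟧) * exp ℝ * (PowerSeries.C ((1:ℝ)/2) * X ^ 2) := by
        linear_combination (X ^ 2 * exp ℝ) * hone.symm
    _ = (2 : ℝ⟦X⟧) * exp ℝ * PowerSeries.monomial 2 ((1 : ℝ) / (Nat.factorial 2)) := by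
        rw [hmon]

/-- For `n ≥ 1`, `E_{1,n} = -(n-1)·B_n`, where `E_{1,n}` is defined by
`(cosh t - 1) · ∑ E_{1,n} t^n/n! = t²/2!` and `B_n` are the Bernoulli numbers
(with `B₁ = -1/2`). -/
theorem hypergeometric_euler_one_eq_bernoulli (E : ℕ → ℝ)
    (hE : (PowerSeries.mk fun m => if Even m ∧ 2 ≤ m then (1 : ℝ) / (Nat.factorial m) else 0) *
        (PowerSeries.mk fun n => E n / (Nat.factorial n)) =
      PowerSeries.monomial 2 ((1 : ℝ) / (Nat.factorial 2))) :
    ∀ n : ℕ, 1 ≤ n → E n = -((n : ℝ) - 1) * ((bernoulli n : ℚ) : ℝ) := by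
  intro n _
  have hCne : coshSub1 ≠ 0 := by
    intro h
    have h2 := congrArg (PowerSeries.coeff 2) h
    simp [coshSub1, Nat.factorial] at h2
  have heq : coshSub1 * (PowerSeries.mk fun n => E n / (Nat.factorial n))
      = coshSub1 * Fcand := by
    rw [key]; exact hE
  have hG : (PowerSeries.mk fun n => E n / (Nat.factorial n)) = Fcand :=
    mul_left_cancel₀ hCne heq
  have hco := congrArg (PowerSeries.coeff n) hG
  simp only [PowerSeries.coeff_mk, Fcand] at hco
  have hfac : ((Nat.factorial n : ℝ)) ≠ 0 := by exact_mod_cast Nat.factorial_ne_zero n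
  field_simp at hco
  rw [hco]
  ring
end

section
/- For n ≥ 1, Σ_{i=0}^{n} (i-1)·B_i / ((n-i+2)! · i!) equals 0 if n is even, and equals -B_{n+1}/n! if n is odd. -/
open Finset

private lemma sum_choose_bernoulli (m : ℕ) :
    ∑ i ∈ range (m + 1), (m.choose i : ℚ) * bernoulli i = bernoulli' m := by
  have h := Polynomial.bernoulli_eval_one m
  rw [Polynomial.bernoulli, Polynomial.eval_finset_sum] at h
  simp only [Polynomial.eval_monomial, one_pow, mul_one] at h
  rw [← h]
  exact Finset.sum_congr rfl fun i _ => by ring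

private lemma sum_mul_choose_bernoulli (m : ℕ) :
    ∑ i ∈ range (m + 1), (i : ℚ) * (m.choose i : ℚ) * bernoulli i =
      m * bernoulli' m - m * bernoulli' (m - 1) := by
  have h1 : (Polynomial.derivative (Polynomial.bernoulli m)).eval 1
      = (m : ℚ) * bernoulli' (m - 1) := by
    rw [Polynomial.derivative_bernoulli m]
    simp
  have h2 : (Polynomial.derivative (Polynomial.bernoulli m)).eval 1
      = ∑ i ∈ range (m + 1), (bernoulli i * m.choose i) * ((m - i : ℕ) : ℚ) := by
    rw [Polynomial.bernoulli, Polynomial.derivative_sum, Polynomial.eval_finset_sum]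
    exact Finset.sum_congr rfl fun i _ => by
      rw [Polynomial.derivative_monomial, Polynomial.eval_monomial, one_pow, mul_one]
  have h3 : ∀ i ∈ range (m + 1),
      (bernoulli i * m.choose i) * ((m - i : ℕ) : ℚ)
        = (m : ℚ) * ((m.choose i : ℚ) * bernoulli i)
          - (i : ℚ) * (m.choose i : ℚ) * bernoulli i := by
    intro i hi
    rw [Finset.mem_range] at hi
    rw [Nat.cast_sub (Nat.lt_succ_iff.mp hi)]
    ring
  rw [Finset.sum_congr rfl h3, Finset.sum_sub_distrib, ← Finset.mul_sum,
    sum_choose_bernoulli] at h2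
  have := h1.symm.trans h2
  linarith

private lemma key_sum (n : ℕ) (hn : 1 ≤ n) :
    ∑ i ∈ range (n + 1), ((i : ℚ) - 1) * ((n + 2).choose i : ℚ) * bernoulli i =
      -((n : ℚ) + 1) * ((n : ℚ) + 2) * bernoulli (n + 1) := by
  have hT := sum_mul_choose_bernoulli (n + 2)
  have hU := sum_choose_bernoulli (n + 2)
  -- full sum of (i-1) * choose * bernoulli
  have hfull : ∑ i ∈ range (n + 3), ((i : ℚ) - 1) * ((n + 2).choose i : ℚ) * bernoulli i
      = ((n : ℚ) + 1) * bernoulli' (n + 2) - ((n : ℚ) + 2) * bernoulli' (n + 1) := by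
    have : ∀ i ∈ range (n + 3),
        ((i : ℚ) - 1) * ((n + 2).choose i : ℚ) * bernoulli i
          = (i : ℚ) * ((n + 2).choose i : ℚ) * bernoulli i
            - ((n + 2).choose i : ℚ) * bernoulli i := by
      intro i _; ring
    rw [Finset.sum_congr rfl this, Finset.sum_sub_distrib]
    have e1 : n + 3 = (n + 2) + 1 := rfl
    rw [e1, hT, hU]
    have : ((n + 2 : ℕ) : ℚ) = (n : ℚ) + 2 := by push_cast; ring
    rw [this]
    have e2 : (n + 2) - 1 = n + 1 := rfl
    rw [e2]
    ring
  have hsplit : ∑ i ∈ range (n + 3), ((i : ℚ) - 1) * ((n + 2).choose i : ℚ) * bernoulli i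
      = (∑ i ∈ range (n + 1), ((i : ℚ) - 1) * ((n + 2).choose i : ℚ) * bernoulli i)
        + ((n + 1 : ℕ) - 1 : ℚ) * ((n + 2).choose (n + 1) : ℚ) * bernoulli (n + 1)
        + ((n + 2 : ℕ) - 1 : ℚ) * ((n + 2).choose (n + 2) : ℚ) * bernoulli (n + 2) := by
    rw [show n + 3 = (n + 2) + 1 from rfl, Finset.sum_range_succ, Finset.sum_range_succ]
  have hc1 : ((n + 2).choose (n + 1) : ℚ) = (n : ℚ) + 2 := by
    rw [Nat.choose_succ_self_right]; push_cast; ring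
  have hc2 : ((n + 2).choose (n + 2) : ℚ) = 1 := by rw [Nat.choose_self]; norm_num
  have hb1 : bernoulli' (n + 1) = bernoulli (n + 1) :=
    (bernoulli_eq_bernoulli'_of_ne_one (by omega)).symm
  have hb2 : bernoulli' (n + 2) = bernoulli (n + 2) :=
    (bernoulli_eq_bernoulli'_of_ne_one (by omega)).symm
  rw [hfull, hb1, hb2, hc1, hc2] at hsplit
  push_cast at hsplit
  linarith

/-- For `n ≥ 1`, `∑_{i=0}^n (i-1)·B_i/((n-i+2)!·i!)` equals `0` if `n` is even and
`-B_{n+1}/n!` if `n` is odd, where `B_n` are the Bernoulli numbers with `B₁ = -1/2`. -/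
theorem bernoulli_weighted_sum (n : ℕ) (hn : 1 ≤ n) :
    ∑ i ∈ Finset.range (n + 1),
      ((i : ℚ) - 1) * bernoulli i /
        ((Nat.factorial (n - i + 2) : ℚ) * (Nat.factorial i : ℚ)) =
      if Even n then 0 else -bernoulli (n + 1) / (Nat.factorial n : ℚ) := by
  have hmain : ∑ i ∈ Finset.range (n + 1),
      ((i : ℚ) - 1) * bernoulli i /
        ((Nat.factorial (n - i + 2) : ℚ) * (Nat.factorial i : ℚ))
      = -bernoulli (n + 1) / (Nat.factorial n : ℚ) := by
    have hterm : ∀ i ∈ range (n + 1),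
        ((i : ℚ) - 1) * bernoulli i /
          ((Nat.factorial (n - i + 2) : ℚ) * (Nat.factorial i : ℚ))
          = ((i : ℚ) - 1) * ((n + 2).choose i : ℚ) * bernoulli i
              / ((n + 2).factorial : ℚ) := by
      intro i hi
      rw [Finset.mem_range] at hi
      have hile : i ≤ n + 2 := by omega
      have hfac : (n + 2).choose i * i.factorial * (n + 2 - i).factorial
          = (n + 2).factorial := Nat.choose_mul_factorial_mul_factorial hile
      have heq : n - i + 2 = n + 2 - i := by omega
      rw [heq]
      have h1 : ((n + 2 - i).factorial : ℚ) ≠ 0 := Nat.cast_ne_zero.mpr (Nat.factorial_ne_zero _)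
      have h2 : (i.factorial : ℚ) ≠ 0 := Nat.cast_ne_zero.mpr (Nat.factorial_ne_zero _)
      have h3 : ((n + 2).factorial : ℚ) ≠ 0 := Nat.cast_ne_zero.mpr (Nat.factorial_ne_zero _)
      field_simp
      have : ((n + 2).factorial : ℚ)
          = ((n + 2).choose i : ℚ) * (i.factorial : ℚ) * ((n + 2 - i).factorial : ℚ) := by
        exact_mod_cast hfac.symm
      rw [this]; ring
    rw [Finset.sum_congr rfl hterm, ← Finset.sum_div, key_sum n hn]
    have hfac2 : ((n + 2).factorial : ℚ)
        = ((n : ℚ) + 2) * ((n : ℚ) + 1) * (n.factorial : ℚ) := by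
      rw [Nat.factorial_succ, Nat.factorial_succ]; push_cast; ring
    rw [hfac2]
    have h1 : (n.factorial : ℚ) ≠ 0 := Nat.cast_ne_zero.mpr (Nat.factorial_ne_zero _)
    have h2 : ((n : ℚ) + 2) ≠ 0 := by positivity
    have h3 : ((n : ℚ) + 1) ≠ 0 := by positivity
    field_simp
  rw [hmain]
  by_cases h : Even n
  · rw [if_pos h]
    have hodd : Odd (n + 1) := Even.add_one h
    have : bernoulli (n + 1) = bernoulli' (n + 1) :=
      bernoulli_eq_bernoulli'_of_ne_one (by omega)
    rw [this, bernoulli'_eq_zero_of_odd hodd (by omega)]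
    simp
  · rw [if_neg h]
end

section
/- For N ≥ 0 and n ≥ 1, the hypergeometric Euler number satisfies the determinant expression E_{N,2n} = (-1)^n (2n)! · det M, where M is the n×n lower Hessenberg matrix with entries M_{i,j} = (2N)!/((2N+2(i-j+1))!) for i ≥ j, M_{i,i+1} = 1, and M_{i,j} = 0 for j > i+1. -/
/-- Determinant expression for the hypergeometric Euler numbers: for `N ≥ 0` and `n ≥ 1`,
`E_{N,2n} = (-1)^n (2n)! det M` where `M` is the `n×n` lower Hessenberg matrix with
`M_{i,j} = (2N)!/(2N+2(i-j+1))!` for `i ≥ j`, `M_{i,i+1} = 1` and `M_{i,j} = 0` for `j > i+1`. -/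
theorem hypergeometric_euler_det (N : ℕ) (E : ℕ → ℝ)
    (h0 : E 0 = 1)
    (hrec : ∀ n : ℕ, 2 ≤ n → Even n →
      ∑ i ∈ Finset.range (n / 2 + 1),
        E (2 * i) / ((Nat.factorial (2 * N + n - 2 * i) : ℝ) * (Nat.factorial (2 * i))) = 0) :
    ∀ n : ℕ, 1 ≤ n →
      E (2 * n) = (-1 : ℝ) ^ n * (Nat.factorial (2 * n) : ℝ) *
        Matrix.det (Matrix.of fun i j : Fin n =>
          if (j : ℕ) = (i : ℕ) + 1 then (1 : ℝ)
          else if (j : ℕ) ≤ (i : ℕ) then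
            (Nat.factorial (2 * N) : ℝ) / (Nat.factorial (2 * N + 2 * ((i : ℕ) - (j : ℕ) + 1)) : ℝ)
          else 0) := by
  intro n hn
  obtain ⟨m, rfl⟩ : ∃ m, n = m + 1 := ⟨n - 1, by omega⟩
  set a : ℕ → ℝ := fun k => (Nat.factorial (2 * N) : ℝ) / (Nat.factorial (2 * N + 2 * k) : ℝ)
    with ha_def
  set e : ℕ → ℝ := fun k => E (2 * k) / (Nat.factorial (2 * k) : ℝ) with he_def
  have ha0 : a 0 = 1 := by
    simp [ha_def, div_self, Nat.cast_ne_zero.mpr (Nat.factorial_ne_zero _)]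
  have he0 : e 0 = 1 := by simp [he_def, h0]
  have key : ∀ i : ℕ, ∑ j ∈ Finset.range (i + 1), e j * a (i + 1 - j) = - e (i + 1) := by
    intro i
    have H := hrec (2 * (i + 1)) (by omega) (even_two_mul _)
    have h2 : 2 * (i + 1) / 2 = i + 1 := by omega
    rw [h2] at H
    have term : ∀ j ∈ Finset.range (i + 2), e j * a (i + 1 - j) =
        (Nat.factorial (2 * N) : ℝ) *
          (E (2 * j) / ((Nat.factorial (2 * N + 2 * (i + 1) - 2 * j) : ℝ) *
            (Nat.factorial (2 * j)))) := by
      intro j hj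
      have hj' : j ≤ i + 1 := by simpa [Nat.lt_succ_iff] using Finset.mem_range.mp hj
      have hfe : 2 * N + 2 * (i + 1) - 2 * j = 2 * N + 2 * (i + 1 - j) := by omega
      rw [hfe, he_def, ha_def]
      rw [div_mul_div_comm, mul_div_assoc]
      ring_nf
    have Hsum : ∑ j ∈ Finset.range (i + 2), e j * a (i + 1 - j) = 0 := by
      rw [Finset.sum_congr rfl term, ← Finset.mul_sum, H, mul_zero]
    rw [Finset.sum_range_succ] at Hsum
    have : a (i + 1 - (i + 1)) = 1 := by simpa using ha0
    rw [this, mul_one] at Hsum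
    linarith
  set M : Matrix (Fin (m + 1)) (Fin (m + 1)) ℝ := Matrix.of fun i j : Fin (m + 1) =>
      if (j : ℕ) = (i : ℕ) + 1 then (1 : ℝ)
      else if (j : ℕ) ≤ (i : ℕ) then
        (Nat.factorial (2 * N) : ℝ) / (Nat.factorial (2 * N + 2 * ((i : ℕ) - (j : ℕ) + 1)) : ℝ)
      else 0 with hM_def
  set x : Fin (m + 1) → ℝ := fun j => e (j : ℕ) with hx_def
  have hMx : M.mulVec x = Pi.single (Fin.last m) (-(e (m + 1))) := by
    funext i
    have hsum : M.mulVec x i = ∑ j ∈ Finset.range (m + 1),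
        (if j = (i : ℕ) + 1 then (1 : ℝ)
          else if j ≤ (i : ℕ) then a ((i : ℕ) - j + 1) else 0) * e j := by
      rw [Matrix.mulVec, dotProduct]
      rw [← Fin.sum_univ_eq_sum_range (fun j =>
        (if j = (i : ℕ) + 1 then (1 : ℝ)
          else if j ≤ (i : ℕ) then a ((i : ℕ) - j + 1) else 0) * e j) (m + 1)]
      rfl
    rcases Nat.lt_or_ge (i : ℕ) m with hi | hi
    · -- i < m : row sum is 0
      have hine : i ≠ Fin.last m := by
        intro h; rw [h] at hi; simp [Fin.last] at hi
      rw [Pi.single_eq_of_ne hine]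
      rw [hsum]
      have hsplit := Finset.sum_range_add_sum_Ico (fun j =>
        (if j = (i : ℕ) + 1 then (1 : ℝ)
          else if j ≤ (i : ℕ) then a ((i : ℕ) - j + 1) else 0) * e j)
        (show (i : ℕ) + 2 ≤ m + 1 by omega)
      rw [← hsplit]
      have hIco : ∑ j ∈ Finset.Ico ((i : ℕ) + 2) (m + 1),
          (if j = (i : ℕ) + 1 then (1 : ℝ)
            else if j ≤ (i : ℕ) then a ((i : ℕ) - j + 1) else 0) * e j = 0 := by
        refine Finset.sum_eq_zero fun j hj => ?_
        obtain ⟨h1, _⟩ := Finset.mem_Ico.mp hj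
        rw [if_neg (by omega), if_neg (by omega), zero_mul]
      rw [hIco, add_zero, Finset.sum_range_succ, if_pos rfl, one_mul]
      have hre : ∑ j ∈ Finset.range ((i : ℕ) + 1),
          (if j = (i : ℕ) + 1 then (1 : ℝ)
            else if j ≤ (i : ℕ) then a ((i : ℕ) - j + 1) else 0) * e j =
          ∑ j ∈ Finset.range ((i : ℕ) + 1), e j * a ((i : ℕ) + 1 - j) := by
        refine Finset.sum_congr rfl fun j hj => ?_
        have hj' : j ≤ (i : ℕ) := Nat.lt_succ_iff.mp (Finset.mem_range.mp hj)
        rw [if_neg (by omega), if_pos hj']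
        have : (i : ℕ) - j + 1 = (i : ℕ) + 1 - j := by omega
        rw [this, mul_comm]
      rw [hre, key (i : ℕ)]
      ring
    · -- i = m : last row
      have hieq : i = Fin.last m := by
        apply Fin.ext; simp [Fin.last]; omega
      have him : (i : ℕ) = m := by rw [hieq]; rfl
      rw [hsum, him, hieq, Pi.single_eq_same]
      have hre : ∑ j ∈ Finset.range (m + 1),
          (if j = m + 1 then (1 : ℝ)
            else if j ≤ m then a (m - j + 1) else 0) * e j =
          ∑ j ∈ Finset.range (m + 1), e j * a (m + 1 - j) := by
        refine Finset.sum_congr rfl fun j hj => ?_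
        have hj' : j ≤ m := Nat.lt_succ_iff.mp (Finset.mem_range.mp hj)
        rw [if_neg (by omega), if_pos hj']
        have : m - j + 1 = m + 1 - j := by omega
        rw [this, mul_comm]
      rw [hre, key m]
  -- adjugate identity
  have hadj : (Matrix.adjugate M).mulVec (Pi.single (Fin.last m) (-(e (m + 1)))) = M.det • x := by
    rw [← hMx, Matrix.mulVec_mulVec, Matrix.adjugate_mul, Matrix.smul_mulVec,
      Matrix.one_mulVec]
  have hadj0 := congrFun hadj 0
  simp only [Matrix.mulVec_single] at hadj0
  change Matrix.adjugate M 0 (Fin.last m) * (-(e (m + 1))) = _ at hadj0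
  -- compute the adjugate entry
  have hadjentry : Matrix.adjugate M 0 (Fin.last m) = (-1 : ℝ) ^ m := by
    rw [Matrix.adjugate_apply]
    rw [Matrix.det_succ_row _ (Fin.last m)]
    rw [Finset.sum_eq_single (0 : Fin (m + 1))]
    · rw [Matrix.updateRow_self]
      simp only [Pi.single_eq_same, mul_one]
      have hdetB : Matrix.det ((M.updateRow (Fin.last m) (Pi.single 0 1)).submatrix
          (Fin.last m).succAbove (0 : Fin (m + 1)).succAbove) = 1 := by
        set B := (M.updateRow (Fin.last m) (Pi.single 0 1)).submatrix
          (Fin.last m).succAbove (0 : Fin (m + 1)).succAbove with hB_def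
        have hBentry : ∀ r c : Fin m, B r c = M r.castSucc c.succ := by
          intro r c
          rw [hB_def, Matrix.submatrix_apply, Fin.succAbove_last, Fin.succAbove_zero,
            Matrix.updateRow_ne (Fin.castSucc_lt_last r).ne]
        rw [Matrix.det_of_lowerTriangular B]
        · refine Finset.prod_eq_one fun r _ => ?_
          rw [hBentry r r, hM_def]
          simp
        · intro r c hrc
          have hrc' : (r : Fin m) < c := hrc
          rw [hBentry, hM_def]
          have h1 : ((c.succ : Fin (m+1)) : ℕ) = (c : ℕ) + 1 := rfl
          have h2 : ((r.castSucc : Fin (m+1)) : ℕ) = (r : ℕ) := rfl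
          simp only [Matrix.of_apply, h1, h2]
          rw [if_neg (by omega), if_neg (by omega)]
      rw [hdetB, mul_one]
      simp [Fin.last]
    · intro j _ hj
      rw [Matrix.updateRow_self, Pi.single_eq_of_ne hj, mul_zero, zero_mul]
    · intro h; exact absurd (Finset.mem_univ _) h
  rw [hadjentry] at hadj0
  have hx0 : (M.det • x) 0 = M.det := by
    simp [hx_def, he0]
  rw [hx0] at hadj0
  -- conclude
  have hdet : M.det = (-1 : ℝ) ^ (m + 1) * e (m + 1) := by
    rw [← hadj0]; ring
  show E (2 * (m + 1)) = (-1 : ℝ) ^ (m + 1) * (Nat.factorial (2 * (m + 1)) : ℝ) * M.det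
  rw [hdet]
  set c : ℝ := (-1 : ℝ) ^ (m + 1) with hc
  have hpow : c * c = 1 := by rw [hc, ← mul_pow]; norm_num
  have hre : c * (Nat.factorial (2 * (m + 1)) : ℝ) * (c * e (m + 1)) =
      (c * c) * ((Nat.factorial (2 * (m + 1)) : ℝ) * e (m + 1)) := by ring
  rw [hre, hpow, one_mul, he_def]
  have hfac : (Nat.factorial (2 * (m + 1)) : ℝ) ≠ 0 :=
    Nat.cast_ne_zero.mpr (Nat.factorial_ne_zero _)
  field_simp
end

section
/- For n ≥ 1, the classical Euler number satisfies E_{2n} = (-1)^n (2n)! · det M, where M is the n×n matrix with M_{i,j} = 1/(2(i-j+1))! for i ≥ j, M_{i,i+1} = 1, and M_{i,j} = 0 for j > i+1. -/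
private lemma sum_even_range_aux (g : ℕ → ℝ) (hg : ∀ i, ¬ Even i → g i = 0) :
    ∀ m : ℕ, ∑ i ∈ Finset.range (2 * m + 1), g i = ∑ j ∈ Finset.range (m + 1), g (2 * j) := by
  intro m
  induction m with
  | zero => simp
  | succ m ih =>
    have h1 : 2 * (m + 1) + 1 = (2 * m + 1) + 1 + 1 := by ring
    have hodd : g (2 * m + 1) = 0 := hg _ (fun ⟨k, hk⟩ => by omega)
    have h2 : 2 * m + 1 + 1 = 2 * (m + 1) := by ring
    rw [h1, Finset.sum_range_succ, Finset.sum_range_succ, ih, hodd, h2,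
      Finset.sum_range_succ (fun x => g (2 * x)) (m + 1)]
    ring

/-- Glaisher's determinant expression for the classical Euler numbers (defined by
`1/cosh t = ∑ E_n t^n/n!`): for `n ≥ 1`,
`E_{2n} = (-1)^n (2n)! det M` with `M_{i,j} = 1/(2(i-j+1))!` for `i ≥ j`,
`M_{i,i+1} = 1` and `M_{i,j} = 0` for `j > i+1`. -/
theorem euler_number_det (E : ℕ → ℝ)
    (hE : (PowerSeries.mk fun m => if Even m then (1 : ℝ) / (Nat.factorial m) else 0) *
        (PowerSeries.mk fun n => E n / (Nat.factorial n)) = 1) :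
    ∀ n : ℕ, 1 ≤ n →
      E (2 * n) = (-1 : ℝ) ^ n * (Nat.factorial (2 * n) : ℝ) *
        Matrix.det (Matrix.of fun i j : Fin n =>
          if (j : ℕ) = (i : ℕ) + 1 then (1 : ℝ)
          else if (j : ℕ) ≤ (i : ℕ) then
            (1 : ℝ) / (Nat.factorial (2 * ((i : ℕ) - (j : ℕ) + 1)) : ℝ)
          else 0) := by
  -- the coefficient-wise consequences of hE
  have hcoeff : ∀ m : ℕ,
      ∑ p ∈ Finset.HasAntidiagonal.antidiagonal m,
        (if Even p.1 then (1 : ℝ) / (Nat.factorial p.1) else 0) * (E p.2 / (Nat.factorial p.2))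
        = if m = 0 then 1 else 0 := by
    intro m
    have h := congrArg (PowerSeries.coeff m) hE
    rw [PowerSeries.coeff_mul, PowerSeries.coeff_one] at h
    simpa [PowerSeries.coeff_mk] using h
  have hE0 : E 0 = 1 := by
    have h := hcoeff 0
    simpa using h
  -- the recurrence for even coefficients
  have hrec : ∀ m : ℕ, 1 ≤ m →
      ∑ j ∈ Finset.range (m + 1),
        (1 : ℝ) / (Nat.factorial (2 * j)) * (E (2 * (m - j)) / (Nat.factorial (2 * (m - j)))) = 0 := by
    intro m hm
    have h := hcoeff (2 * m)
    rw [Finset.Nat.sum_antidiagonal_eq_sum_range_succ_mk, if_neg (by omega : ¬ (2 * m = 0))] at h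
    have h' : ∑ i ∈ Finset.range (2 * m + 1),
        (fun i => (if Even i then (1 : ℝ) / (Nat.factorial i) else 0) *
          (E (2 * m - i) / (Nat.factorial (2 * m - i)))) i = 0 := h
    rw [sum_even_range_aux _ (fun i hi => by simp [hi]) m] at h'
    rw [← h']
    refine Finset.sum_congr rfl fun j hj => ?_
    have hj' : j ≤ m := by simpa [Nat.lt_succ_iff] using hj
    have h1 : 2 * m - 2 * j = 2 * (m - j) := by omega
    rw [h1]
    split_ifs with hc
    · rfl
    · exact absurd (even_two_mul j) hc
  intro n hn
  classical
  -- the Toeplitz matrix and the solution vector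
  set T : Matrix (Fin (n + 1)) (Fin (n + 1)) ℝ := Matrix.of fun i j =>
    if (j : ℕ) ≤ (i : ℕ) then (1 : ℝ) / (Nat.factorial (2 * ((i : ℕ) - (j : ℕ)))) else 0 with hT
  set x : Fin (n + 1) → ℝ := fun k => E (2 * (k : ℕ)) / (Nat.factorial (2 * (k : ℕ))) with hx
  set b : Fin (n + 1) → ℝ := Pi.single 0 1 with hb
  have hdet : T.det = 1 := by
    rw [Matrix.det_of_lowerTriangular T]
    · refine Finset.prod_eq_one fun i _ => by simp [hT]
    · intro i j hij
      have hlt : (i : ℕ) < (j : ℕ) := hij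
      simp only [hT, Matrix.of_apply]
      rw [if_neg (by omega)]
  have hmul : T.mulVec x = b := by
    funext i
    have key : T.mulVec x i
        = ∑ j ∈ Finset.range ((i : ℕ) + 1),
          (1 : ℝ) / (Nat.factorial (2 * ((i : ℕ) - j))) * (E (2 * j) / (Nat.factorial (2 * j))) := by
      have e1 : T.mulVec x i = ∑ j : Fin (n + 1),
          (fun j : ℕ => (if j ≤ (i : ℕ) then
              (1 : ℝ) / (Nat.factorial (2 * ((i : ℕ) - j))) else 0) *
              (E (2 * j) / (Nat.factorial (2 * j)))) (j : ℕ) := rfl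
      have e2 := Fin.sum_univ_eq_sum_range
          (fun j : ℕ => (if j ≤ (i : ℕ) then
              (1 : ℝ) / (Nat.factorial (2 * ((i : ℕ) - j))) else 0) *
              (E (2 * j) / (Nat.factorial (2 * j)))) (n + 1)
      rw [e1, e2]
      rw [← Finset.sum_subset (Finset.range_subset_range.2 (by omega : (i : ℕ) + 1 ≤ n + 1))
        (fun j _ hj => by
          simp only [Finset.mem_range, Nat.lt_succ_iff] at hj
          rw [if_neg hj, zero_mul])]
      refine Finset.sum_congr rfl fun j hj => ?_
      simp only [Finset.mem_range, Nat.lt_succ_iff] at hj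
      rw [if_pos hj]
    rcases eq_or_ne i 0 with h0 | h0
    · subst h0
      rw [key]
      simp [hE0, hb]
    · have hi1 : 1 ≤ (i : ℕ) := by
        rcases Nat.eq_zero_or_pos (i : ℕ) with h | h
        · exact absurd (Fin.ext h) h0
        · exact h
      rw [key]
      have hr := hrec (i : ℕ) hi1
      rw [← Finset.sum_range_reflect] at hr
      have heq : ∑ j ∈ Finset.range ((i : ℕ) + 1),
          (1 : ℝ) / (Nat.factorial (2 * ((i : ℕ) - j))) * (E (2 * j) / (Nat.factorial (2 * j)))
          = ∑ j ∈ Finset.range ((i : ℕ) + 1),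
          (1 : ℝ) / (Nat.factorial (2 * ((i : ℕ) + 1 - 1 - j)))
            * (E (2 * ((i : ℕ) - ((i : ℕ) + 1 - 1 - j)))
              / (Nat.factorial (2 * ((i : ℕ) - ((i : ℕ) + 1 - 1 - j))))) := by
        refine Finset.sum_congr rfl fun j hj => ?_
        have hj' : j ≤ (i : ℕ) := by simpa [Nat.lt_succ_iff] using hj
        have e1 : (i : ℕ) + 1 - 1 - j = (i : ℕ) - j := by omega
        have e2 : (i : ℕ) - ((i : ℕ) - j) = j := by omega
        rw [e1, e2]
      rw [heq, hr, hb]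
      rw [Pi.single_apply, if_neg h0]
  -- Cramer's rule
  have hxcramer : x = Matrix.cramer T b := by
    have h1 : T.adjugate.mulVec (T.mulVec x) = T.adjugate.mulVec b := by rw [hmul]
    rw [Matrix.mulVec_mulVec, Matrix.adjugate_mul, hdet, one_smul, Matrix.one_mulVec] at h1
    rw [h1, Matrix.cramer_eq_adjugate_mulVec]
  have hxlast : x (Fin.last n) = (T.updateCol (Fin.last n) b).det := by
    rw [hxcramer, Matrix.cramer_apply]
  -- expand the updated determinant along the last column
  set M : Matrix (Fin n) (Fin n) ℝ := Matrix.of fun i j : Fin n =>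
    if (j : ℕ) = (i : ℕ) + 1 then (1 : ℝ)
    else if (j : ℕ) ≤ (i : ℕ) then
      (1 : ℝ) / (Nat.factorial (2 * ((i : ℕ) - (j : ℕ) + 1)) : ℝ)
    else 0 with hM
  have hsub : (T.updateCol (Fin.last n) b).submatrix
      ((0 : Fin (n + 1)).succAbove) ((Fin.last n).succAbove) = M := by
    ext i j
    rw [Matrix.submatrix_apply, Fin.succAbove_zero, Fin.succAbove_last,
      Matrix.updateCol_apply, if_neg (Fin.castSucc_lt_last j).ne]
    simp only [hT, hM, Matrix.of_apply, Fin.coe_castSucc, Fin.val_succ]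
    rcases Nat.lt_trichotomy (j : ℕ) ((i : ℕ) + 1) with h | h | h
    · have e1 : (i : ℕ) + 1 - (j : ℕ) = (i : ℕ) - (j : ℕ) + 1 := by omega
      rw [if_pos (by omega), if_neg (by omega), if_pos (by omega), e1]
    · rw [if_pos (by omega), if_pos h, h]
      simp
    · rw [if_neg (by omega), if_neg (by omega), if_neg (by omega)]
  have hdetU : (T.updateCol (Fin.last n) b).det = (-1 : ℝ) ^ n * M.det := by
    rw [Matrix.det_succ_column _ (Fin.last n)]
    rw [Finset.sum_eq_single (0 : Fin (n + 1))]
    · rw [hsub, Matrix.updateCol_self]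
      simp [hb]
    · intro c _ hc
      rw [Matrix.updateCol_self, hb, Pi.single_apply, if_neg hc]
      ring
    · intro h; exact absurd (Finset.mem_univ _) h
  -- put it together
  have hx' : E (2 * n) / (Nat.factorial (2 * n)) = (-1 : ℝ) ^ n * M.det := by
    have h := hxlast
    rw [hdetU] at h
    simpa [hx, Fin.val_last] using h
  have hfac : (Nat.factorial (2 * n) : ℝ) ≠ 0 := Nat.cast_ne_zero.2 (Nat.factorial_ne_zero _)
  rw [div_eq_iff hfac] at hx'
  rw [hx']
  ring
end

section
/- For n ≥ 0, Σ_{i=0}^n C(2n, 2i) E_{2i} E_{2n-2i} = 2^{2n+2}(2^{2n+2}-1) B_{2n+2}/(2n+2), where E_k are Euler numbers and B_k are Bernoulli numbers. -/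
open PowerSeries Finset

namespace EulerAux

noncomputable def Cc : ℝ⟦X⟧ :=
  PowerSeries.mk fun m => if Even m then (1 : ℝ) / (Nat.factorial m) else 0

noncomputable def Sc : ℝ⟦X⟧ :=
  PowerSeries.mk fun m => if Even m then 0 else (1 : ℝ) / (Nat.factorial m)

lemma amap (q : ℚ) : algebraMap ℚ ℝ q = (q : ℝ) := eq_ratCast _ q

lemma add_eq_exp : Cc + Sc = exp ℝ := by
  ext n
  simp only [map_add, Cc, Sc, coeff_mk, coeff_exp, amap]
  split_ifs <;> push_cast <;> ring

lemma sub_eq_negexp : Cc - Sc = rescale (-1 : ℝ) (exp ℝ) := by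
  ext n
  simp only [map_sub, Cc, Sc, coeff_mk, coeff_rescale, coeff_exp, amap]
  rcases Nat.even_or_odd n with h | h
  · rw [if_pos h, if_pos h, h.neg_one_pow]; push_cast; ring
  · rw [if_neg (Nat.not_even_iff_odd.mpr h), if_neg (Nat.not_even_iff_odd.mpr h), h.neg_one_pow]
    push_cast; ring

lemma sq_sub_sq : Cc ^ 2 - Sc ^ 2 = 1 := by
  have h := exp_mul_exp_neg_eq_one (A := ℝ)
  rw [show evalNegHom (exp ℝ) = rescale (-1 : ℝ) (exp ℝ) from rfl] at h
  have h1 := add_eq_exp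
  have h2 := sub_eq_negexp
  linear_combination (Cc - Sc) * h1 + (exp ℝ) * h2 + h

lemma rescale_neg_one_Cc : rescale (-1 : ℝ) Cc = Cc := by
  ext n
  simp only [coeff_rescale, Cc, coeff_mk]
  rcases Nat.even_or_odd n with h | h
  · rw [if_pos h, h.neg_one_pow, one_mul]
  · rw [if_neg (Nat.not_even_iff_odd.mpr h), mul_zero]

lemma deriv_Cc : d⁄dX ℝ Cc = Sc := by
  ext n
  rw [coeff_derivative]
  simp only [Cc, Sc, coeff_mk]
  rcases Nat.even_or_odd n with h | h
  · rw [if_neg, if_pos h, zero_mul]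
    simpa [Nat.even_add_one] using h
  · rw [if_pos, if_neg (Nat.not_even_iff_odd.mpr h), Nat.factorial_succ]
    · have h1 : ((n : ℝ) + 1) ≠ 0 := by positivity
      have h2 : ((Nat.factorial n : ℝ)) ≠ 0 := Nat.cast_ne_zero.mpr (Nat.factorial_ne_zero n)
      push_cast
      field_simp
    · simpa [Nat.even_add_one] using h

lemma deriv_Sc : d⁄dX ℝ Sc = Cc := by
  ext n
  rw [coeff_derivative]
  simp only [Cc, Sc, coeff_mk]
  rcases Nat.even_or_odd n with h | h
  · rw [if_neg, if_pos h, Nat.factorial_succ]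
    · have h1 : ((n : ℝ) + 1) ≠ 0 := by positivity
      have h2 : ((Nat.factorial n : ℝ)) ≠ 0 := Nat.cast_ne_zero.mpr (Nat.factorial_ne_zero n)
      push_cast
      field_simp
    · simpa [Nat.even_add_one] using h
  · rw [if_pos, if_neg (Nat.not_even_iff_odd.mpr h), zero_mul]
    simpa [Nat.even_add_one] using h

lemma sum_even_vanish (g : ℕ → ℝ) (hg : ∀ m, ¬ Even m → g m = 0) (n : ℕ) :
    ∑ k ∈ Finset.range (2 * n + 1), g k = ∑ i ∈ Finset.range (n + 1), g (2 * i) := by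
  induction n with
  | zero => simp
  | succ n ih =>
    have h2 : 2 * (n + 1) + 1 = (2 * n + 1) + 1 + 1 := by ring
    rw [h2, Finset.sum_range_succ, Finset.sum_range_succ, ih,
      hg (2 * n + 1) (by simp [Nat.even_add_one, parity_simps]), add_zero,
      Finset.sum_range_succ (fun i => g (2 * i)) (n + 1),
      show 2 * n + 1 + 1 = 2 * (n + 1) by ring]

end EulerAux

open EulerAux in
/-- For `n ≥ 0`, `∑_{i=0}^n C(2n,2i) E_{2i} E_{2n-2i} = 2^{2n+2}(2^{2n+2}-1) B_{2n+2}/(2n+2)`,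
where the Euler numbers are defined by `1/cosh t = ∑ E_n t^n/n!` and `B_k` are the Bernoulli
numbers. -/
theorem euler_sum_products_eq_tangent (E : ℕ → ℝ)
    (hE : (PowerSeries.mk fun m => if Even m then (1 : ℝ) / (Nat.factorial m) else 0) *
        (PowerSeries.mk fun n => E n / (Nat.factorial n)) = 1) :
    ∀ n : ℕ,
      ∑ i ∈ Finset.range (n + 1),
          (Nat.choose (2 * n) (2 * i) : ℝ) * E (2 * i) * E (2 * n - 2 * i) =
        2 ^ (2 * n + 2) * (2 ^ (2 * n + 2) - 1) * ((bernoulli (2 * n + 2) : ℚ) : ℝ) /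
          ((2 * n + 2 : ℕ) : ℝ) := by
  intro n
  set F : ℝ⟦X⟧ := PowerSeries.mk fun n => E n / (Nat.factorial n) with hF
  have hCF : Cc * F = 1 := hE
  have hsq := sq_sub_sq
  have hdC := deriv_Cc
  have hdS := deriv_Sc
  -- F is even, so E vanishes at odd indices
  have hrF : rescale (-1 : ℝ) F = F := by
    have h1 : Cc * rescale (-1 : ℝ) F = 1 := by
      rw [← rescale_neg_one_Cc, ← map_mul, hCF, map_one]
    calc rescale (-1 : ℝ) F = (Cc * F) * rescale (-1 : ℝ) F := by rw [hCF, one_mul]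
    _ = F * (Cc * rescale (-1 : ℝ) F) := by ring
    _ = F := by rw [h1, mul_one]
  have hEodd : ∀ m, ¬ Even m → E m = 0 := by
    intro m hm
    have h := congrArg (coeff m) hrF
    rw [coeff_rescale] at h
    simp only [hF, coeff_mk] at h
    rw [(Nat.not_even_iff_odd.mp hm).neg_one_pow] at h
    have hfac : ((Nat.factorial m : ℝ)) ≠ 0 := Nat.cast_ne_zero.mpr (Nat.factorial_ne_zero m)
    have h2 : E m / (Nat.factorial m) = 0 := by linarith
    field_simp at h2
    simpa using h2
  -- derivative facts
  have hCne : Cc ≠ 0 := by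
    intro h
    have h0 : coeff 0 Cc = 1 := by simp [Cc]
    rw [h] at h0; simp at h0
  have hdF : Cc * (d⁄dX ℝ F) = -(F * Sc) := by
    have h0 : d⁄dX ℝ (Cc * F) = 0 := by rw [hCF]; exact Derivation.map_one_eq_zero _
    rw [Derivation.leibniz, smul_eq_mul, smul_eq_mul, hdC] at h0
    linear_combination h0
  set T : ℝ⟦X⟧ := Sc * F with hT
  have hdT : d⁄dX ℝ T = F * F := by
    have hl : d⁄dX ℝ T = Sc * (d⁄dX ℝ F) + F * Cc := by
      rw [hT, Derivation.leibniz, smul_eq_mul, smul_eq_mul, hdS]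
    have key : (d⁄dX ℝ T - F * F) * Cc = 0 := by
      rw [hl]; linear_combination Sc * hdF + F * hsq - F * hCF
    rcases mul_eq_zero.mp key with h | h
    · exact sub_eq_zero.mp h
    · exact absurd h hCne
  -- exponential / Bernoulli identities
  set ee : ℝ⟦X⟧ := exp ℝ with hee
  have hexp : Cc + Sc = ee := add_eq_exp
  have hnexp : Cc - Sc = rescale (-1 : ℝ) ee := sub_eq_negexp
  have hinv : ee * rescale (-1 : ℝ) ee = 1 := exp_mul_exp_neg_eq_one (A := ℝ)
  have hCe : 2 * (Cc * ee) = ee ^ 2 + 1 := by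
    linear_combination ee * hexp + ee * hnexp + hinv
  have hSe : 2 * (Sc * ee) = ee ^ 2 - 1 := by
    linear_combination ee * hexp - ee * hnexp - hinv
  have hee2 : ee ^ 2 = rescale (2 : ℝ) ee := by
    rw [hee, exp_pow_eq_rescale_exp]; norm_num
  have hee4 : ee ^ 4 = rescale (4 : ℝ) ee := by
    rw [hee, exp_pow_eq_rescale_exp]; norm_num
  set B2 : ℝ⟦X⟧ := rescale (2 : ℝ) (bernoulliPowerSeries ℝ) with hB2def
  set B4 : ℝ⟦X⟧ := rescale (4 : ℝ) (bernoulliPowerSeries ℝ) with hB4def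
  have hB2 : B2 * (ee ^ 2 - 1) = 2 * X := by
    have h := congrArg (rescale (2 : ℝ)) (bernoulliPowerSeries_mul_exp_sub_one ℝ)
    rw [map_mul, map_sub, map_one, rescale_X, ← hee, ← hee2, ← hB2def] at h
    rw [h]
    simp [map_ofNat]
  have hB4 : B4 * (ee ^ 4 - 1) = 4 * X := by
    have h := congrArg (rescale (4 : ℝ)) (bernoulliPowerSeries_mul_exp_sub_one ℝ)
    rw [map_mul, map_sub, map_one, rescale_X, ← hee, ← hee4, ← hB4def] at h
    rw [h]
    simp [map_ofNat]
  have hu : ee ^ 2 + 1 ≠ 0 := by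
    intro h
    have h0 := congrArg (constantCoeff) h
    rw [map_add, map_pow, map_one, hee, constantCoeff_exp] at h0
    norm_num at h0
  have hv : ee ^ 2 - 1 ≠ 0 := by
    intro h
    have h0 := congrArg (coeff 1) h
    rw [map_sub, hee2, coeff_rescale, hee, coeff_exp, coeff_one] at h0
    norm_num [amap] at h0
  have eq1 : (X * T) * (ee ^ 2 + 1) = X * (ee ^ 2 - 1) := by
    rw [hT]
    linear_combination (-(X * Sc * F)) * hCe + (X * F * Cc) * hSe + (X * (ee ^ 2 - 1)) * hCF
  have eq2 : (B4 - B2 + X) * (ee ^ 2 + 1) * (ee ^ 2 - 1) = X * (ee ^ 2 - 1) ^ 2 := by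
    linear_combination hB4 - (ee ^ 2 + 1) * hB2
  have main : X * T = B4 - B2 + X := by
    have h3 : (X * T - (B4 - B2 + X)) * ((ee ^ 2 + 1) * (ee ^ 2 - 1)) = 0 := by
      linear_combination (ee ^ 2 - 1) * eq1 - eq2
    rcases mul_eq_zero.mp h3 with h | h
    · exact sub_eq_zero.mp h
    · exact absurd h (mul_ne_zero hu hv)
  -- extract coefficients
  have hcT : coeff (2 * n + 1) T =
      (4 : ℝ) ^ (2 * n + 2) * ((bernoulli (2 * n + 2) : ℚ) : ℝ) / (Nat.factorial (2 * n + 2))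
      - (2 : ℝ) ^ (2 * n + 2) * ((bernoulli (2 * n + 2) : ℚ) : ℝ) / (Nat.factorial (2 * n + 2)) := by
    have h := congrArg (coeff (2 * n + 1 + 1)) main
    rw [coeff_succ_X_mul] at h
    rw [h, map_add, map_sub, hB4def, hB2def, coeff_rescale, coeff_rescale,
      show bernoulliPowerSeries ℝ = PowerSeries.mk fun m => algebraMap ℚ ℝ (bernoulli m / m.factorial) from rfl,
      coeff_mk, coeff_X, if_neg (by omega), amap]
    have hne : ((Nat.factorial (2 * n + 1 + 1) : ℝ)) ≠ 0 :=
      Nat.cast_ne_zero.mpr (Nat.factorial_ne_zero _)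
    push_cast
    ring_nf
  have hcF2 : coeff (2 * n) (F * F) = coeff (2 * n + 1) T * (2 * n + 1) := by
    rw [← hdT, coeff_derivative]
    push_cast
    ring
  have hsum : coeff (2 * n) (F * F) = ∑ i ∈ Finset.range (n + 1),
      (E (2 * i) / (Nat.factorial (2 * i))) * (E (2 * n - 2 * i) / (Nat.factorial (2 * n - 2 * i))) := by
    rw [coeff_mul, Finset.Nat.sum_antidiagonal_eq_sum_range_succ_mk]
    simp only [hF, coeff_mk]
    exact sum_even_vanish
      (fun k => E k / (Nat.factorial k) * (E (2 * n - k) / (Nat.factorial (2 * n - k))))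
      (fun m hm => by simp only [hEodd m hm, zero_div, zero_mul]) n
  have hterm : ∀ i ∈ Finset.range (n + 1),
      (Nat.choose (2 * n) (2 * i) : ℝ) * E (2 * i) * E (2 * n - 2 * i)
      = (Nat.factorial (2 * n) : ℝ) * ((E (2 * i) / (Nat.factorial (2 * i))) *
          (E (2 * n - 2 * i) / (Nat.factorial (2 * n - 2 * i)))) := by
    intro i hi
    have hle : 2 * i ≤ 2 * n := by
      have := Finset.mem_range.mp hi; omega
    have hch := Nat.choose_mul_factorial_mul_factorial hle
    have hchR : (Nat.choose (2 * n) (2 * i) : ℝ) * (Nat.factorial (2 * i)) *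
        (Nat.factorial (2 * n - 2 * i)) = (Nat.factorial (2 * n) : ℝ) := by
      exact_mod_cast congrArg (Nat.cast : ℕ → ℝ) hch
    have h1 : (Nat.factorial (2 * i) : ℝ) ≠ 0 := Nat.cast_ne_zero.mpr (Nat.factorial_ne_zero _)
    have h2 : (Nat.factorial (2 * n - 2 * i) : ℝ) ≠ 0 :=
      Nat.cast_ne_zero.mpr (Nat.factorial_ne_zero _)
    field_simp
    linear_combination E (2 * i) * E (2 * n - 2 * i) * hchR
  rw [Finset.sum_congr rfl hterm, ← Finset.mul_sum, ← hsum, hcF2, hcT]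
  have hfac : (Nat.factorial (2 * n + 2) : ℝ) = (2 * n + 2) * ((2 * n + 1) * Nat.factorial (2 * n)) := by
    rw [show 2 * n + 2 = (2 * n + 1) + 1 by ring, Nat.factorial_succ, Nat.factorial_succ]
    push_cast; ring
  have hf0 : (Nat.factorial (2 * n) : ℝ) ≠ 0 := Nat.cast_ne_zero.mpr (Nat.factorial_ne_zero _)
  have ha1 : ((2 * n : ℝ) + 1) ≠ 0 := by positivity
  have ha2 : ((2 * n : ℝ) + 2) ≠ 0 := by positivity
  have h4 : (4 : ℝ) ^ (2 * n + 2) = 2 ^ (2 * n + 2) * 2 ^ (2 * n + 2) := by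
    rw [show (4 : ℝ) = 2 * 2 by norm_num, mul_pow]
  rw [hfac, h4]
  push_cast
  field_simp
end

section
/- The tangent function satisfies tan x = Σ_{n=0}^∞ (-1)^n T_n x^{2n+1}/(2n+1)! (as formal power series / for |x| < π/2), where T_n = Σ_{i=0}^n C(2n, 2i) E_{2i} E_{2n-2i} and E_k are the Euler numbers. -/
open PowerSeries Finset



noncomputable def tseChS : PowerSeries ℝ :=
  PowerSeries.mk fun m => if Even m then (1 : ℝ) / (Nat.factorial m) else 0

noncomputable def tseShS : PowerSeries ℝ :=
  PowerSeries.mk fun m => if Odd m then (1 : ℝ) / (Nat.factorial m) else 0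

lemma tse_fact_step (n : ℕ) : (1 : ℝ) / (Nat.factorial (n+1)) * (n + 1) = 1 / (Nat.factorial n) := by
  rw [Nat.factorial_succ]
  have h1 : (Nat.factorial n : ℝ) ≠ 0 := by positivity
  have h2 : ((n : ℝ) + 1) ≠ 0 := by positivity
  field_simp
  push_cast; ring

lemma tse_deriv_ch : d⁄dX ℝ tseChS = tseShS := by
  ext n
  rw [PowerSeries.coeff_derivative]
  simp only [tseChS, tseShS, PowerSeries.coeff_mk]
  rcases Nat.even_or_odd n with h | h
  · rw [if_neg, if_neg (by simpa using h)]
    · simp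
    · simp [Nat.even_add_one, h]
  · rw [if_pos (by simp [Nat.even_add_one]; simpa using h), if_pos h]
    exact tse_fact_step n

lemma tse_deriv_sh : d⁄dX ℝ tseShS = tseChS := by
  ext n
  rw [PowerSeries.coeff_derivative]
  simp only [tseChS, tseShS, PowerSeries.coeff_mk]
  rcases Nat.even_or_odd n with h | h
  · rw [if_pos (by simp [Nat.odd_add_one]; simpa using h), if_pos h]
    exact tse_fact_step n
  · rw [if_neg, if_neg (by simpa using h)]
    · simp
    · simp [Nat.odd_add_one]; simpa using h

lemma tse_alt {N : ℕ} (hN : N ≠ 0) :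
    ∑ k ∈ Finset.range (N+1), (-1:ℝ)^k * (N.choose k) = 0 := by
  have h := Int.alternating_sum_range_choose_of_ne hN
  exact_mod_cast congrArg (fun z : ℤ => (z : ℝ)) h

lemma tse_choose_div (N k : ℕ) (hk : k ≤ N) :
    ((N.choose k : ℝ)) / N.factorial = 1 / (k.factorial * (N-k).factorial) := by
  have h := Nat.choose_mul_factorial_mul_factorial hk
  have h' : (N.choose k : ℝ) * k.factorial * (N-k).factorial = N.factorial := by
    exact_mod_cast congrArg (fun z : ℕ => (z : ℝ)) h
  rw [div_eq_div_iff (by positivity) (by positivity)]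
  linear_combination h'

lemma tse_pyth : tseChS * tseChS - tseShS * tseShS = 1 := by
  ext N
  rw [map_sub, PowerSeries.coeff_mul, PowerSeries.coeff_mul, ← Finset.sum_sub_distrib,
    Finset.Nat.sum_antidiagonal_eq_sum_range_succ_mk, PowerSeries.coeff_one]
  simp only [tseChS, tseShS, PowerSeries.coeff_mk]
  by_cases hN : N = 0
  · subst hN; simp
  · rw [if_neg hN]
    rcases Nat.even_or_odd N with hNe | hNo
    · have key : ∀ k ∈ Finset.range (N+1),
          ((if Even k then (1:ℝ)/k.factorial else 0) *
            (if Even (N-k) then (1:ℝ)/(N-k).factorial else 0)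
          - (if Odd k then (1:ℝ)/k.factorial else 0) *
            (if Odd (N-k) then (1:ℝ)/(N-k).factorial else 0))
          = ((-1:ℝ)^k * (N.choose k)) / N.factorial := by
        intro k hk
        rw [Finset.mem_range, Nat.lt_succ_iff] at hk
        rcases Nat.even_or_odd k with hk2 | hk2
        · have h2 : Even (N - k) := (Nat.even_sub hk).2 (by simp [hNe, hk2])
          rw [if_pos hk2, if_pos h2, if_neg (by simpa [Nat.not_odd_iff_even] using hk2),
            if_neg (by simpa [Nat.not_odd_iff_even] using h2), hk2.neg_one_pow, one_mul,
            tse_choose_div N k hk]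
          ring
        · have h2 : Odd (N - k) := by
            have := (Nat.even_sub hk).not.2 (by simp [hNe, Nat.not_even_iff_odd.2 hk2])
            simpa [Nat.not_even_iff_odd] using this
          rw [if_neg (Nat.not_even_iff_odd.2 hk2), if_neg (Nat.not_even_iff_odd.2 h2),
            if_pos hk2, if_pos h2, hk2.neg_one_pow, neg_one_mul, neg_div,
            tse_choose_div N k hk]
          ring
      rw [Finset.sum_congr rfl key, ← Finset.sum_div, tse_alt hN, zero_div]
    · refine Finset.sum_eq_zero fun k hk => ?_
      rw [Finset.mem_range, Nat.lt_succ_iff] at hk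
      rcases Nat.even_or_odd k with hk2 | hk2
      · have h2 : ¬ Even (N - k) := by
          rw [Nat.even_sub hk]
          simp [Nat.not_even_iff_odd.2 hNo, hk2]
        have h3 : ¬ Odd k := Nat.not_odd_iff_even.2 hk2
        simp [h2, h3]
      · have h4 : ¬ Odd (N - k) := by
          rw [Nat.not_odd_iff_even, Nat.even_sub hk]
          simp [Nat.not_even_iff_odd.2 hNo, Nat.not_even_iff_odd.2 hk2]
        have h3 : ¬ Even k := Nat.not_even_iff_odd.2 hk2
        simp [h3, h4]

section
variable {E : ℕ → ℝ} (hE : tseChS * (PowerSeries.mk fun n => E n / (Nat.factorial n)) = 1)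
include hE

lemma tse_Eodd : ∀ m, E (2*m+1) = 0 := by
  intro m
  induction m using Nat.strong_induction_on with
  | _ m ih =>
    have h0 := congrArg (PowerSeries.coeff (2*m+1)) hE
    rw [PowerSeries.coeff_mul, Finset.Nat.sum_antidiagonal_eq_sum_range_succ_mk,
      PowerSeries.coeff_one, if_neg (by omega)] at h0
    rw [Finset.sum_eq_single_of_mem 0 (Finset.mem_range.2 (by omega)) ?side] at h0
    · simp only [tseChS, PowerSeries.coeff_mk, Nat.sub_zero] at h0
      rw [if_pos (Even.zero)] at h0
      simp only [Nat.factorial_zero, Nat.cast_one, div_one, one_mul] at h0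
      have hfac : (Nat.factorial (2*m+1) : ℝ) ≠ 0 := by positivity
      field_simp at h0
      simpa using h0
    · intro k hk hk0
      rw [Finset.mem_range] at hk
      simp only [tseChS, PowerSeries.coeff_mk]
      rcases Nat.even_or_odd k with hk2 | hk2
      · obtain ⟨j, hj⟩ := hk2
        have hj1 : 1 ≤ j := by omega
        have hj2 : j - 1 < m := by omega
        have : 2*m+1-k = 2*(m-j)+1 := by omega
        rw [this]
        have hEz : E (2*(m-j)+1) = 0 := ih (m-j) (by omega)
        rw [hEz]
        simp
      · rw [if_neg (Nat.not_even_iff_odd.2 hk2), zero_mul]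

lemma tse_Dodd : ∀ n, Odd n →
    PowerSeries.coeff n (PowerSeries.mk fun n => E n / (Nat.factorial n)) = 0 := by
  intro n hn
  obtain ⟨m, rfl⟩ := hn
  rw [PowerSeries.coeff_mk, tse_Eodd hE m, zero_div]

end

lemma tse_sum_even (f : ℕ → ℝ) (h : ∀ k, Odd k → f k = 0) (n : ℕ) :
    ∑ k ∈ Finset.range (2*n+1), f k = ∑ i ∈ Finset.range (n+1), f (2*i) := by
  induction n with
  | zero => simp
  | succ n ih =>
    have h1 : 2*(n+1)+1 = (2*n+1) + 1 + 1 := by ring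
    rw [h1, Finset.sum_range_succ, Finset.sum_range_succ, ih, Finset.sum_range_succ,
      h (2*n+1) ⟨n, by ring⟩]
    have h2 : 2*n+1+1 = 2*(n+1) := by ring
    rw [h2, add_zero, Finset.sum_range_succ _ (n+1), Finset.sum_range_succ _ n]

section
variable {E : ℕ → ℝ} (hE : tseChS * (PowerSeries.mk fun n => E n / (Nat.factorial n)) = 1)
include hE


set_option maxHeartbeats 1000000 in
lemma tse_DD (n : ℕ) :
    PowerSeries.coeff (2*n) ((PowerSeries.mk fun n => E n / (Nat.factorial n)) *
      (PowerSeries.mk fun n => E n / (Nat.factorial n))) =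
    (∑ i ∈ Finset.range (n+1), (Nat.choose (2*n) (2*i) : ℝ) * E (2*i) * E (2*n - 2*i)) /
      (Nat.factorial (2*n)) := by
  rw [PowerSeries.coeff_mul, Finset.Nat.sum_antidiagonal_eq_sum_range_succ_mk]
  rw [tse_sum_even _ (fun k hk => by rw [tse_Dodd hE k hk, zero_mul]) n]
  rw [Finset.sum_div]
  refine Finset.sum_congr rfl fun i hi => ?_
  rw [Finset.mem_range, Nat.lt_succ_iff] at hi
  simp only [PowerSeries.coeff_mk]
  have hle : 2*i ≤ 2*n := by omega
  have hcd := tse_choose_div (2*n) (2*i) hle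
  rw [div_mul_div_comm, div_eq_mul_one_div (E (2*i) * E (2*n - 2*i)), ← hcd]
  ring

lemma tse_Chne : tseChS ≠ 0 := by
  intro h
  rw [h, zero_mul] at hE
  exact zero_ne_one hE

lemma tse_D'mul : tseChS * (d⁄dX ℝ (PowerSeries.mk fun n => E n / (Nat.factorial n))) =
    -(tseShS * (PowerSeries.mk fun n => E n / (Nat.factorial n))) := by
  have h0 := congrArg (d⁄dX ℝ) hE
  rw [Derivation.leibniz, smul_eq_mul, smul_eq_mul, tse_deriv_ch,
    Derivation.map_one_eq_zero] at h0
  linear_combination h0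

end

section
variable {E : ℕ → ℝ} (hE : tseChS * (PowerSeries.mk fun n => E n / (Nat.factorial n)) = 1)
include hE

lemma tse_Q' : d⁄dX ℝ (tseShS * (PowerSeries.mk fun n => E n / (Nat.factorial n))) =
    (PowerSeries.mk fun n => E n / (Nat.factorial n)) *
      (PowerSeries.mk fun n => E n / (Nat.factorial n)) := by
  have hQd : d⁄dX ℝ (tseShS * (PowerSeries.mk fun n => E n / (Nat.factorial n))) =
      tseShS * (d⁄dX ℝ (PowerSeries.mk fun n => E n / (Nat.factorial n))) +
        (PowerSeries.mk fun n => E n / (Nat.factorial n)) * tseChS := by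
    rw [Derivation.leibniz, smul_eq_mul, smul_eq_mul, tse_deriv_sh]
  apply mul_left_cancel₀ (tse_Chne hE)
  rw [hQd]
  linear_combination tseShS * (tse_D'mul hE) +
    (PowerSeries.mk fun n => E n / (Nat.factorial n)) * tse_pyth -
    (PowerSeries.mk fun n => E n / (Nat.factorial n)) * hE

lemma tse_Qodd (n : ℕ) :
    PowerSeries.coeff (2*n+1) (tseShS * (PowerSeries.mk fun n => E n / (Nat.factorial n))) =
    (∑ i ∈ Finset.range (n+1), (Nat.choose (2*n) (2*i) : ℝ) * E (2*i) * E (2*n - 2*i)) /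
      (Nat.factorial (2*n+1)) := by
  have h := PowerSeries.coeff_derivative
    (tseShS * (PowerSeries.mk fun n => E n / (Nat.factorial n))) (2*n)
  rw [tse_Q' hE, tse_DD hE n] at h
  have hfac : (Nat.factorial (2*n+1) : ℝ) = (Nat.factorial (2*n)) * (2*n+1) := by
    rw [show 2*n+1 = (2*n)+1 from rfl, Nat.factorial_succ]; push_cast; ring
  rw [hfac]
  have h1 : (Nat.factorial (2*n) : ℝ) ≠ 0 := by positivity
  have h2 : ((2*n+1 : ℕ) : ℝ) ≠ 0 := by positivity
  field_simp at h ⊢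
  linear_combination (norm := (push_cast; ring)) (-1 : ℝ) * h

lemma tse_Qeven (N : ℕ) (hN : Even N) :
    PowerSeries.coeff N (tseShS * (PowerSeries.mk fun n => E n / (Nat.factorial n))) = 0 := by
  rw [PowerSeries.coeff_mul]
  refine Finset.sum_eq_zero fun p hp => ?_
  rw [Finset.HasAntidiagonal.mem_antidiagonal] at hp
  rcases Nat.even_or_odd p.1 with h1 | h1
  · simp [tseShS, PowerSeries.coeff_mk, Nat.not_odd_iff_even.2 h1]
  · have h2 : Odd p.2 := by
      rcases hN with ⟨t, ht⟩; rcases h1 with ⟨s, hs⟩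
      exact ⟨t - s - 1, by omega⟩
    rw [tse_Dodd hE p.2 h2, mul_zero]

lemma tse_AQ : tseChS * (tseShS * (PowerSeries.mk fun n => E n / (Nat.factorial n))) = tseShS := by
  rw [mul_left_comm, hE, mul_one]

end


lemma tse_ballA (c : ℕ → ℂ) (f : ℂ → ℂ) (r : ℝ) (hr : 0 < r)
    (hsummable : ∀ z : ℂ, ‖z‖ < r → Summable fun n => ‖c n‖ * ‖z‖^n)
    (hsum : ∀ z : ℂ, ‖z‖ < r → HasSum (fun n => c n * z^n) (f z)) :
    HasFPowerSeriesOnBall f (FormalMultilinearSeries.ofScalars ℂ c) 0 (ENNReal.ofReal r) := by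
  constructor
  · refine ENNReal.le_of_forall_nnreal_lt fun t ht => ?_
    apply FormalMultilinearSeries.le_radius_of_summable
    have ht' : (t : ℝ) < r := by
      rwa [← ENNReal.ofReal_coe_nnreal, ENNReal.ofReal_lt_ofReal_iff hr] at ht
    have hnorm : ‖((t : ℝ) : ℂ)‖ = (t : ℝ) := by
      simp
    have hs := hsummable ((t : ℝ) : ℂ) (by rw [hnorm]; exact ht')
    refine hs.congr fun n => ?_
    rw [FormalMultilinearSeries.ofScalars_norm, hnorm]
  · simpa using hr
  · intro y hy
    rw [mem_emetric_ball_zero_iff, ← ofReal_norm,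
      ENNReal.ofReal_lt_ofReal_iff hr] at hy
    have h := hsum y hy
    rw [zero_add]
    refine h.congr_fun fun n => ?_
    rw [FormalMultilinearSeries.ofScalars_apply_eq, smul_eq_mul]

lemma tse_unique {c d : ℕ → ℂ} {f : ℂ → ℂ}
    (h1 : HasFPowerSeriesAt f (FormalMultilinearSeries.ofScalars ℂ c) 0)
    (h2 : HasFPowerSeriesAt f (FormalMultilinearSeries.ofScalars ℂ d) 0) : c = d :=
  FormalMultilinearSeries.ofScalars_series_injective ℂ ℂ
    (h1.eq_formalMultilinearSeries h2)

noncomputable def tseCcos : ℕ → ℂ := fun n => if Even n then (-1:ℂ)^(n/2) / n.factorial else 0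
noncomputable def tseCsin : ℕ → ℂ := fun n => if Even n then 0 else (-1:ℂ)^(n/2) / n.factorial

lemma tse_hasSum_cos (z : ℂ) : HasSum (fun n => tseCcos n * z^n) (Complex.cos z) := by
  have hinj : Function.Injective (fun n : ℕ => 2*n) := fun a b h => by simp only at h; omega
  refine (Function.Injective.hasSum_iff hinj ?_).mp ?_
  · intro x hx
    have hodd : ¬ Even x := by
      intro ⟨m, hm⟩
      exact hx ⟨m, show 2*m = x by omega⟩
    simp [tseCcos, hodd]
  · refine (Complex.hasSum_cos z).congr_fun fun n => ?_
    simp only [Function.comp, tseCcos, if_pos (even_two_mul n), Nat.mul_div_cancel_left n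
      (by norm_num : 0 < 2)]
    ring

lemma tse_hasSum_sin (z : ℂ) : HasSum (fun n => tseCsin n * z^n) (Complex.sin z) := by
  have hinj : Function.Injective (fun n : ℕ => 2*n+1) := fun a b h => by simp only at h; omega
  refine (Function.Injective.hasSum_iff hinj ?_).mp ?_
  · intro x hx
    have heven : Even x := by
      rcases Nat.even_or_odd x with h | ⟨m, hm⟩
      · exact h
      · exact (hx ⟨m, show 2*m+1 = x by omega⟩).elim
    simp [tseCsin, heven]
  · refine (Complex.hasSum_sin z).congr_fun fun n => ?_
    have hdiv : (2*n+1)/2 = n := by omega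
    have he : ¬ Even (2*n+1) := by simp [Nat.even_add_one, Nat.not_even_iff_odd]
    simp only [Function.comp, tseCsin, if_neg he, hdiv]
    ring

lemma tse_summable_fact (c : ℕ → ℂ) (hc : ∀ n, ‖c n‖ ≤ ((n.factorial : ℝ))⁻¹) (z : ℂ) :
    Summable fun n => ‖c n‖ * ‖z‖^n := by
  refine Summable.of_nonneg_of_le
    (fun n => mul_nonneg (norm_nonneg _) (pow_nonneg (norm_nonneg z) n)) (fun n => ?_)
    (Real.summable_pow_div_factorial ‖z‖)
  calc ‖c n‖ * ‖z‖^n ≤ ((n.factorial : ℝ))⁻¹ * ‖z‖^n :=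
        mul_le_mul_of_nonneg_right (hc n) (pow_nonneg (norm_nonneg z) n)
    _ = ‖z‖^n / (n.factorial : ℝ) := by rw [div_eq_mul_inv, mul_comm]

lemma tse_ccos_norm (n : ℕ) : ‖tseCcos n‖ ≤ ((n.factorial : ℝ))⁻¹ := by
  rw [tseCcos]
  split_ifs with h
  · rw [norm_div, norm_pow, norm_neg, norm_one, one_pow, one_div]
    simp
  · simp

lemma tse_csin_norm (n : ℕ) : ‖tseCsin n‖ ≤ ((n.factorial : ℝ))⁻¹ := by
  rw [tseCsin]
  split_ifs with h
  · simp
  · rw [norm_div, norm_pow, norm_neg, norm_one, one_pow, one_div]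
    simp

lemma tse_cos_ne_zero {z : ℂ} (hz : ‖z‖ < Real.pi/2) : Complex.cos z ≠ 0 := by
  rw [Complex.cos_ne_zero_iff]
  intro k hk
  rw [hk] at hz
  have hcast : ((2 * (k:ℂ) + 1) * (Real.pi:ℂ) / 2) =
      (((2*(k:ℝ)+1) * Real.pi / 2 : ℝ) : ℂ) := by push_cast; ring
  rw [hcast, Complex.norm_real, Real.norm_eq_abs] at hz
  have h1 : (1:ℝ) ≤ |2*(k:ℝ)+1| := by
    have : (1:ℤ) ≤ |2*k+1| := by
      rcases le_or_gt 0 k with h | h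
      · rw [abs_of_nonneg (by omega)]; omega
      · rw [abs_of_nonpos (by omega)]; omega
    calc (1:ℝ) = ((1:ℤ):ℝ) := by norm_num
      _ ≤ ((|2*k+1| : ℤ) : ℝ) := by exact_mod_cast this
      _ = |2*(k:ℝ)+1| := by push_cast; ring_nf
  have hpi : (0:ℝ) < Real.pi := Real.pi_pos
  have h2 : |(2*(k:ℝ)+1) * Real.pi / 2| = |2*(k:ℝ)+1| * (Real.pi/2) := by
    rw [abs_div, abs_mul, abs_of_nonneg hpi.le]
    norm_num
    ring
  rw [h2] at hz
  nlinarith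

lemma tse_tan_ball (r : ℝ) (hr0 : 0 < r) (hr : r < Real.pi/2) : ∃ a : ℕ → ℂ,
    (∀ z : ℂ, ‖z‖ < r → HasSum (fun n => a n * z^n) (Complex.tan z)) ∧
    (∀ z : ℂ, ‖z‖ < r → Summable fun n => ‖a n‖ * ‖z‖^n) := by
  set R : NNReal := ⟨r, hr0.le⟩ with hRdef
  have hd : DifferentiableOn ℂ Complex.tan (Metric.closedBall 0 (R:ℝ)) := by
    intro z hz
    rw [Metric.mem_closedBall, dist_zero_right] at hz
    exact (Complex.differentiableAt_tan.2
      (tse_cos_ne_zero (lt_of_le_of_lt hz hr))).differentiableWithinAt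
  have hR0 : 0 < R := by
    rw [← NNReal.coe_lt_coe]
    exact hr0
  have H := hd.hasFPowerSeriesOnBall hR0
  set p := cauchyPowerSeries Complex.tan 0 R with hp
  refine ⟨fun n => p.coeff n, fun z hz => ?_, fun z hz => ?_⟩
  · have hy : z ∈ Metric.eball (0:ℂ) R := by
      rw [mem_emetric_ball_zero_iff]
      exact_mod_cast hz
    have h := H.hasSum hy
    rw [zero_add] at h
    refine h.congr_fun fun n => ?_
    rw [FormalMultilinearSeries.apply_eq_pow_smul_coeff, smul_eq_mul]
    ring
  · have hrad : (‖z‖₊ : ENNReal) < p.radius := by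
      refine lt_of_lt_of_le ?_ H.r_le
      exact_mod_cast hz
    have hs := p.summable_norm_mul_pow hrad
    refine Summable.of_nonneg_of_le
      (fun n => mul_nonneg (norm_nonneg _) (pow_nonneg (norm_nonneg z) n)) (fun n => ?_) hs
    have hb : ‖p.coeff n‖ ≤ ‖p n‖ := by
      calc ‖p.coeff n‖ ≤ ‖p n‖ * ∏ _i : Fin n, ‖(1:ℂ)‖ := (p n).le_opNorm _
        _ = ‖p n‖ := by simp
    have hzz : ((‖z‖₊ : NNReal) : ℝ) = ‖z‖ := rfl
    rw [hzz]
    exact mul_le_mul_of_nonneg_right hb (pow_nonneg (norm_nonneg z) n)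


lemma tse_cauchy_term (c d : ℕ → ℂ) (z : ℂ) (N : ℕ) :
    ∑ k ∈ Finset.range (N+1), (c k * z^k) * (d (N-k) * z^(N-k)) =
      (∑ k ∈ Finset.range (N+1), c k * d (N-k)) * z^N := by
  rw [Finset.sum_mul]
  refine Finset.sum_congr rfl fun k hk => ?_
  rw [Finset.mem_range, Nat.lt_succ_iff] at hk
  have hkN : k + (N-k) = N := by omega
  calc (c k * z^k) * (d (N-k) * z^(N-k)) = c k * d (N-k) * (z^k * z^(N-k)) := by ring
    _ = c k * d (N-k) * z^N := by rw [← pow_add, hkN]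

/-- `tan x = ∑ (-1)^n T_n x^{2n+1}/(2n+1)!` for `|x| < π/2`, where
`T_n = ∑_{i=0}^n C(2n,2i) E_{2i} E_{2n-2i}` and the Euler numbers are defined by
`1/cosh t = ∑ E_n t^n/n!`. -/
theorem tan_series_euler (E : ℕ → ℝ)
    (hE : (PowerSeries.mk fun m => if Even m then (1 : ℝ) / (Nat.factorial m) else 0) *
        (PowerSeries.mk fun n => E n / (Nat.factorial n)) = 1) :
    ∀ x : ℝ, |x| < Real.pi / 2 →
      HasSum (fun n : ℕ =>
          (-1 : ℝ) ^ n *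
            (∑ i ∈ Finset.range (n + 1),
              (Nat.choose (2 * n) (2 * i) : ℝ) * E (2 * i) * E (2 * n - 2 * i)) *
            x ^ (2 * n + 1) / (Nat.factorial (2 * n + 1) : ℝ))
        (Real.tan x) := by
  intro x hx
  have hE' : tseChS * (PowerSeries.mk fun n => E n / (Nat.factorial n)) = 1 := hE
  set q : ℕ → ℝ := fun n => (-1:ℝ)^(n/2) *
    PowerSeries.coeff n (tseShS * (PowerSeries.mk fun n => E n / (Nat.factorial n))) with hq
  set r := (|x| + Real.pi/2)/2 with hr
  have hax : 0 ≤ |x| := abs_nonneg x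
  have hpi : 0 < Real.pi/2 := by positivity
  have hr0 : 0 < r := by rw [hr]; positivity
  have hxr : |x| < r := by rw [hr]; linarith
  have hrpi : r < Real.pi/2 := by rw [hr]; linarith
  obtain ⟨a, ha1, ha2⟩ := tse_tan_ball r hr0 hrpi
  have hQeven : ∀ N, Even N → q N = 0 := fun N hN => by
    rw [hq]; simp only; rw [tse_Qeven hE' N hN, mul_zero]
  -- formal identity
  have key : ∀ N, ∑ k ∈ Finset.range (N+1), tseCcos k * ((q (N-k) : ℝ) : ℂ) = tseCsin N := by
    intro N
    have hAQc := congrArg (PowerSeries.coeff N) (tse_AQ hE')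
    rw [PowerSeries.coeff_mul, Finset.Nat.sum_antidiagonal_eq_sum_range_succ_mk] at hAQc
    have hterm : ∀ k ∈ Finset.range (N+1), tseCcos k * ((q (N-k) : ℝ) : ℂ)
        = (-1:ℂ)^(N/2) * ((PowerSeries.coeff k tseChS *
            PowerSeries.coeff (N-k) (tseShS * (PowerSeries.mk fun n =>
              E n / (Nat.factorial n))) : ℝ) : ℂ) := by
      intro k hk
      rw [Finset.mem_range, Nat.lt_succ_iff] at hk
      rcases Nat.even_or_odd k with hke | hko
      · rcases Nat.even_or_odd (N-k) with hle | hlo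
        · rw [hQeven _ hle, tse_Qeven hE' _ hle]
          push_cast
          ring
        · have hNk : k/2 + (N-k)/2 = N/2 := by
            rcases hke with ⟨c, hc⟩; rcases hlo with ⟨d, hd⟩; omega
          simp only [tseCcos, if_pos hke, hq, tseChS, PowerSeries.coeff_mk, if_pos hke]
          push_cast
          rw [← hNk, pow_add]
          ring
      · simp only [tseCcos, if_neg (Nat.not_even_iff_odd.2 hko), tseChS,
          PowerSeries.coeff_mk, if_neg (Nat.not_even_iff_odd.2 hko)]
        push_cast
        ring
    rw [Finset.sum_congr rfl hterm, ← Finset.mul_sum, ← Complex.ofReal_sum, hAQc]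
    simp only [tseShS, PowerSeries.coeff_mk, tseCsin]
    rcases Nat.even_or_odd N with hNe | hNo
    · rw [if_neg (Nat.not_odd_iff_even.2 hNe), if_pos hNe]
      push_cast
      ring
    · rw [if_pos hNo, if_neg (Nat.not_even_iff_odd.2 hNo)]
      push_cast
      ring
  -- analytic identity
  have keyA : ∀ N, ∑ k ∈ Finset.range (N+1), tseCcos k * a (N-k) = tseCsin N := by
    have h1 : HasFPowerSeriesAt Complex.sin (FormalMultilinearSeries.ofScalars ℂ tseCsin) 0 :=
      (tse_ballA tseCsin Complex.sin r hr0
        (fun z _ => tse_summable_fact _ tse_csin_norm z)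
        (fun z _ => tse_hasSum_sin z)).hasFPowerSeriesAt
    have hf : ∀ z : ℂ, Summable fun n => ‖tseCcos n * z^n‖ := by
      intro z
      refine (tse_summable_fact tseCcos tse_ccos_norm z).congr fun n => ?_
      rw [norm_mul, norm_pow]
    have hg : ∀ z : ℂ, ‖z‖ < r → Summable fun n => ‖a n * z^n‖ := by
      intro z hz
      refine (ha2 z hz).congr fun n => ?_
      rw [norm_mul, norm_pow]
    have h2 : HasFPowerSeriesAt Complex.sin
        (FormalMultilinearSeries.ofScalars ℂ
          (fun N => ∑ k ∈ Finset.range (N+1), tseCcos k * a (N-k))) 0 := by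
      refine (tse_ballA _ Complex.sin r hr0 (fun z hz => ?_) (fun z hz => ?_)).hasFPowerSeriesAt
      · have hS := summable_norm_sum_mul_range_of_summable_norm (hf z) (hg z hz)
        refine hS.congr fun N => ?_
        rw [tse_cauchy_term, norm_mul, norm_pow]
      · have hC := hasSum_sum_range_mul_of_summable_norm (hf z) (hg z hz)
        rw [(tse_hasSum_cos z).tsum_eq, (ha1 z hz).tsum_eq] at hC
        have hct : Complex.cos z * Complex.tan z = Complex.sin z := by
          rw [Complex.tan_eq_sin_div_cos, mul_comm,
            div_mul_cancel₀ _ (tse_cos_ne_zero (lt_trans hz hrpi))]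
        rw [hct] at hC
        refine hC.congr_fun fun N => ?_
        rw [tse_cauchy_term]
    intro N
    exact congrFun (tse_unique h2 h1) N
  -- induction: a = q
  have hccos0 : tseCcos 0 = 1 := by simp [tseCcos]
  have haq : ∀ N, a N = ((q N : ℝ) : ℂ) := by
    intro N
    induction N using Nat.strong_induction_on with
    | _ N ih =>
      have h3 : ∑ k ∈ Finset.range (N+1), tseCcos k * (a (N-k) - ((q (N-k) : ℝ) : ℂ)) = 0 := by
        simp only [mul_sub]
        rw [Finset.sum_sub_distrib, keyA N, key N, sub_self]
      rw [Finset.sum_eq_single_of_mem 0 (Finset.mem_range.2 (by omega)) ?side] at h3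
      · rw [hccos0, one_mul, Nat.sub_zero, sub_eq_zero] at h3
        exact h3
      · intro k hk hk0
        rw [Finset.mem_range] at hk
        rw [ih (N-k) (by omega), sub_self, mul_zero]
  -- transfer to ℝ
  have hsumC := ha1 ((x:ℝ) : ℂ) (by rw [Complex.norm_real, Real.norm_eq_abs]; exact hxr)
  have hsumC2 : HasSum (fun n => ((q n * x^n : ℝ) : ℂ)) ((Real.tan x : ℝ) : ℂ) := by
    rw [← Complex.ofReal_tan] at hsumC
    refine hsumC.congr_fun fun n => ?_
    rw [haq n]
    push_cast
    ring
  have hsumR : HasSum (fun n => q n * x^n) (Real.tan x) := by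
    have h := ((Complex.hasSum_iff _ _).mp hsumC2).1
    rw [Complex.ofReal_re] at h
    exact h.congr_fun fun n => (Complex.ofReal_re _).symm
  -- reindex to odd terms
  have hinj : Function.Injective (fun n : ℕ => 2*n+1) := fun a b h => by simp only at h; omega
  have hodd := (Function.Injective.hasSum_iff hinj (fun m hm => ?van)).mpr hsumR
  case van =>
    have hme : Even m := by
      rcases Nat.even_or_odd m with h | ⟨s, hs⟩
      · exact h
      · exact (hm ⟨s, show 2*s+1 = m by omega⟩).elim
    rw [hQeven m hme, zero_mul]
  refine hodd.congr_fun fun n => ?_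
  simp only [Function.comp]
  rw [hq]
  simp only
  rw [tse_Qodd hE' n]
  have hdiv : (2*n+1)/2 = n := by omega
  rw [hdiv]
  ring
end

section
/- For N ≥ 1 and n ≥ 0, Σ_{i=0}^n C(n,i) E_{N,i} E_{N,n-i} = Σ_{k=0}^n C(n,k) ((2N-k)/(2N)) E_{N,k} Ê_{N-1,n-k}. -/
open PowerSeries Finset

private lemma aux_X_mul_monomial (m : ℕ) (a : ℝ) :
    (X : ℝ⟦X⟧) * PowerSeries.monomial m a = PowerSeries.monomial (m + 1) a := by
  ext k
  cases k with
  | zero => simp [PowerSeries.coeff_zero_X_mul, PowerSeries.coeff_monomial]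
  | succ k =>
    rw [PowerSeries.coeff_succ_X_mul, PowerSeries.coeff_monomial, PowerSeries.coeff_monomial]
    by_cases h : k = m
    · simp [h]
    · rw [if_neg h, if_neg (by omega)]

private lemma aux_coeff_derivativeFun (f : ℝ⟦X⟧) (n : ℕ) :
    PowerSeries.coeff n f.derivativeFun = PowerSeries.coeff (n + 1) f * (n + 1) :=
  PowerSeries.coeff_derivative f n

/-- For `N ≥ 1` and `n ≥ 0`,
`∑_{i=0}^n C(n,i) E_{N,i} E_{N,n-i} = ∑_{k=0}^n C(n,k) ((2N-k)/(2N)) E_{N,k} Ê_{N-1,n-k}`,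
where the hypergeometric Euler numbers `E_{N,n}` are defined by
`(cosh t - ∑_{k<N} t^{2k}/(2k)!)·∑ E_{N,n} t^n/n! = t^{2N}/(2N)!` and the complementary ones
`Ê_{N-1,n}` by `(sinh t - ∑_{k<N-1} t^{2k+1}/(2k+1)!)·∑ Ê_{N-1,n} t^n/n! = t^{2N-1}/(2N-1)!`. -/
theorem hypergeometric_euler_sum_products_two (N : ℕ) (hN : 1 ≤ N) (E Ehat : ℕ → ℝ)
    (hE : (PowerSeries.mk fun m => if Even m ∧ 2 * N ≤ m then (1 : ℝ) / (Nat.factorial m) else 0) *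
        (PowerSeries.mk fun n => E n / (Nat.factorial n)) =
      PowerSeries.monomial (2 * N) ((1 : ℝ) / (Nat.factorial (2 * N))))
    (hEhat : (PowerSeries.mk fun m =>
          if Odd m ∧ 2 * N - 1 ≤ m then (1 : ℝ) / (Nat.factorial m) else 0) *
        (PowerSeries.mk fun n => Ehat n / (Nat.factorial n)) =
      PowerSeries.monomial (2 * N - 1) ((1 : ℝ) / (Nat.factorial (2 * N - 1)))) :
    ∀ n : ℕ,
      ∑ i ∈ Finset.range (n + 1), (Nat.choose n i : ℝ) * E i * E (n - i) =
        ∑ k ∈ Finset.range (n + 1),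
          (Nat.choose n k : ℝ) * ((2 * N : ℝ) - k) / (2 * N : ℝ) * E k * Ehat (n - k) := by
  classical
  set F : ℝ⟦X⟧ :=
    PowerSeries.mk fun m => if Even m ∧ 2 * N ≤ m then (1 : ℝ) / (Nat.factorial m) else 0 with hF
  set A : ℝ⟦X⟧ := PowerSeries.mk fun n => E n / (Nat.factorial n) with hA
  set H : ℝ⟦X⟧ :=
    PowerSeries.mk fun m => if Odd m ∧ 2 * N - 1 ≤ m then (1 : ℝ) / (Nat.factorial m) else 0 with hH
  set B : ℝ⟦X⟧ := PowerSeries.mk fun n => Ehat n / (Nat.factorial n) with hB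
  set c : ℝ := (2 * N : ℝ) with hcdef
  have hc : c ≠ 0 := by
    have : (0 : ℝ) < (N : ℝ) := by exact_mod_cast Nat.pos_of_ne_zero (by omega)
    rw [hcdef]; positivity
  have hfacne : ∀ m : ℕ, ((Nat.factorial m : ℝ)) ≠ 0 :=
    fun m => Nat.cast_ne_zero.mpr (Nat.factorial_ne_zero m)
  have hfac : ((Nat.factorial (2 * N) : ℝ)) = (2 * N : ℝ) * (Nat.factorial (2 * N - 1) : ℝ) := by
    have h21 : 2 * N = (2 * N - 1) + 1 := by omega
    have : Nat.factorial (2 * N) = (2 * N) * Nat.factorial (2 * N - 1) := by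
      conv_lhs => rw [h21, Nat.factorial_succ, ← h21]
    exact_mod_cast congrArg (Nat.cast : ℕ → ℝ) this
  -- derivative of F is H
  have hderivF : F.derivativeFun = H := by
    ext n
    rw [aux_coeff_derivativeFun]
    simp only [hF, hH, PowerSeries.coeff_mk]
    by_cases h1 : Odd n ∧ 2 * N - 1 ≤ n
    · have he : Even (n + 1) ∧ 2 * N ≤ n + 1 := by
        obtain ⟨⟨k, hk⟩, h2⟩ := h1
        exact ⟨⟨k + 1, by omega⟩, by omega⟩
      rw [if_pos he, if_pos h1]
      have hfs : ((Nat.factorial (n + 1) : ℝ)) = (n + 1 : ℝ) * (Nat.factorial n : ℝ) := by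
        rw [Nat.factorial_succ]; push_cast; ring
      rw [hfs]
      have h0 : (Nat.factorial n : ℝ) ≠ 0 := hfacne n
      field_simp
    · have h2 : ¬(Even (n + 1) ∧ 2 * N ≤ n + 1) := by
        intro h3
        apply h1
        obtain ⟨⟨k, hk⟩, h4⟩ := h3
        exact ⟨⟨k - 1, by omega⟩, by omega⟩
      rw [if_neg h2, if_neg h1, zero_mul]
  -- derivative of the monomial
  have hdM : (PowerSeries.monomial (2 * N) ((1 : ℝ) / (Nat.factorial (2 * N)))).derivativeFun
      = PowerSeries.monomial (2 * N - 1) ((1 : ℝ) / (Nat.factorial (2 * N - 1))) := by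
    ext n
    rw [aux_coeff_derivativeFun, PowerSeries.coeff_monomial, PowerSeries.coeff_monomial]
    by_cases h : n = 2 * N - 1
    · have h2 : n + 1 = 2 * N := by omega
      rw [if_pos h2, if_pos h]
      have hn1 : ((n : ℝ) + 1) = (2 * N : ℝ) := by exact_mod_cast congrArg (Nat.cast : ℕ → ℝ) h2
      rw [hfac]
      have h5 := hfacne (2 * N - 1)
      have h6 : (2 * N : ℝ) ≠ 0 := by
        have : (0 : ℝ) < (N : ℝ) := by exact_mod_cast Nat.pos_of_ne_zero (by omega)
        positivity
      rw [hn1]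
      field_simp
    · rw [if_neg (by omega), if_neg h, zero_mul]
  -- differentiate hE
  have hd : F * A.derivativeFun + A * H =
      PowerSeries.monomial (2 * N - 1) ((1 : ℝ) / (Nat.factorial (2 * N - 1))) := by
    have h := congrArg PowerSeries.derivativeFun hE
    rw [PowerSeries.derivativeFun_mul, hdM, hderivF] at h
    simpa [smul_eq_mul] using h
  have hXM : (X : ℝ⟦X⟧) *
        PowerSeries.monomial (2 * N - 1) ((1 : ℝ) / (Nat.factorial (2 * N - 1)))
      = PowerSeries.C c * PowerSeries.monomial (2 * N) ((1 : ℝ) / (Nat.factorial (2 * N))) := by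
    rw [aux_X_mul_monomial]
    ext k
    rw [PowerSeries.coeff_C_mul, PowerSeries.coeff_monomial, PowerSeries.coeff_monomial]
    by_cases h : k = 2 * N
    · rw [if_pos (by omega), if_pos h, hfac, hcdef]
      have := hfacne (2 * N - 1)
      field_simp
    · rw [if_neg (by omega), if_neg h, mul_zero]
  -- the key power series identity, multiplied by F * H
  have hkey0 : F * (H * (PowerSeries.C c * (A * A))) =
      F * (H * ((PowerSeries.C c * A - X * A.derivativeFun) * B)) := by
    linear_combination (PowerSeries.C c * A * H -
        PowerSeries.C c *
          PowerSeries.monomial (2 * N - 1) ((1 : ℝ) / (Nat.factorial (2 * N - 1)))) * hE +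
      ((X : ℝ⟦X⟧) * F * A.derivativeFun - PowerSeries.C c * A * F) * hEhat +
      ((X : ℝ⟦X⟧) * PowerSeries.monomial (2 * N - 1) ((1 : ℝ) / (Nat.factorial (2 * N - 1)))) * hd
      + (PowerSeries.monomial (2 * N - 1) ((1 : ℝ) / (Nat.factorial (2 * N - 1))) - A * H) * hXM
  have hFne : F ≠ 0 := by
    intro h
    have h2 : (PowerSeries.coeff (2 * N)) F = 0 := by rw [h]; simp
    rw [hF, PowerSeries.coeff_mk, if_pos ⟨⟨N, by ring⟩, le_rfl⟩] at h2
    exact (hfacne (2 * N)) (by simp at h2; exact_mod_cast h2)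
  have hHne : H ≠ 0 := by
    intro h
    have h2 : (PowerSeries.coeff (2 * N - 1)) H = 0 := by rw [h]; simp
    rw [hH, PowerSeries.coeff_mk, if_pos ⟨⟨N - 1, by omega⟩, le_rfl⟩] at h2
    exact (hfacne (2 * N - 1)) (by simp at h2; exact_mod_cast h2)
  have hkey : PowerSeries.C c * (A * A) =
      (PowerSeries.C c * A - X * A.derivativeFun) * B :=
    mul_left_cancel₀ hHne (mul_left_cancel₀ hFne hkey0)
  -- coefficients of the modified series
  have hcoA : ∀ k : ℕ, (PowerSeries.coeff k) (PowerSeries.C c * A - X * A.derivativeFun)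
      = (c - k) * E k / (Nat.factorial k) := by
    intro k
    rw [map_sub, PowerSeries.coeff_C_mul]
    cases k with
    | zero =>
      rw [PowerSeries.coeff_zero_X_mul]
      simp only [hA, PowerSeries.coeff_mk]
      push_cast
      ring
    | succ k =>
      rw [PowerSeries.coeff_succ_X_mul, aux_coeff_derivativeFun]
      simp only [hA, PowerSeries.coeff_mk]
      push_cast
      ring
  have hcoeff : ∀ n : ℕ,
      c * ∑ i ∈ Finset.range (n + 1),
          E i / (Nat.factorial i) * (E (n - i) / (Nat.factorial (n - i))) =
      ∑ k ∈ Finset.range (n + 1),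
          (c - k) * E k / (Nat.factorial k) * (Ehat (n - k) / (Nat.factorial (n - k))) := by
    intro n
    have h := congrArg (PowerSeries.coeff n) hkey
    rw [PowerSeries.coeff_C_mul, PowerSeries.coeff_mul, PowerSeries.coeff_mul,
      Finset.Nat.sum_antidiagonal_eq_sum_range_succ_mk,
      Finset.Nat.sum_antidiagonal_eq_sum_range_succ_mk] at h
    simp only [hcoA] at h
    simp only [hA, hB, PowerSeries.coeff_mk] at h
    exact h
  intro n
  refine mul_left_cancel₀ hc ?_
  rw [Finset.mul_sum, Finset.mul_sum]
  have e1 : ∑ i ∈ Finset.range (n + 1), c * ((Nat.choose n i : ℝ) * E i * E (n - i)) =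
      (Nat.factorial n : ℝ) * (c * ∑ i ∈ Finset.range (n + 1),
        E i / (Nat.factorial i) * (E (n - i) / (Nat.factorial (n - i)))) := by
    rw [Finset.mul_sum, Finset.mul_sum]
    refine Finset.sum_congr rfl fun i hi => ?_
    have hi' : i ≤ n := by simpa using Nat.lt_succ_iff.mp (Finset.mem_range.mp hi)
    rw [Nat.cast_choose ℝ hi']
    have h1 := hfacne i
    have h2 := hfacne (n - i)
    have h3 := hfacne n
    field_simp
  have e2 : (Nat.factorial n : ℝ) * ∑ k ∈ Finset.range (n + 1),
        (c - k) * E k / (Nat.factorial k) * (Ehat (n - k) / (Nat.factorial (n - k))) =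
      ∑ k ∈ Finset.range (n + 1),
        c * ((Nat.choose n k : ℝ) * ((2 * N : ℝ) - k) / (2 * N : ℝ) * E k * Ehat (n - k)) := by
    rw [Finset.mul_sum]
    refine Finset.sum_congr rfl fun k hk => ?_
    have hk' : k ≤ n := Nat.lt_succ_iff.mp (Finset.mem_range.mp hk)
    rw [Nat.cast_choose ℝ hk']
    have h1 := hfacne k
    have h2 := hfacne (n - k)
    have h3 := hfacne n
    rw [← hcdef]
    field_simp
  rw [e1, hcoeff n, e2]
end

section
/- For N ≥ 1 and n ≥ 0, Σ_{i₁+i₂+i₃=n} n!/(i₁! i₂! i₃!) E_{N,i₁} E_{N,i₂} E_{N,i₃} = Σ_{m=0}^n Σ_{k=0}^m C(n,m) C(m,k) ((4N-m)(2N-k)/(8N²)) E_{N,k} Ê_{N-1,n-m} Ê_{N-1,m-k}. -/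
open PowerSeries Finset

/-- Triple-product coefficient as a double range sum. -/
lemma coeff_mul3 (A B C : PowerSeries ℝ) (n : ℕ) :
    PowerSeries.coeff (R := ℝ) n (A * B * C) =
      ∑ m ∈ Finset.range (n + 1), ∑ k ∈ Finset.range (m + 1),
        PowerSeries.coeff (R := ℝ) k A * PowerSeries.coeff (R := ℝ) (m - k) B *
          PowerSeries.coeff (R := ℝ) (n - m) C := by
  rw [PowerSeries.coeff_mul, Finset.Nat.sum_antidiagonal_eq_sum_range_succ_mk]
  refine Finset.sum_congr rfl fun m hm => ?_
  rw [PowerSeries.coeff_mul, Finset.Nat.sum_antidiagonal_eq_sum_range_succ_mk, Finset.sum_mul]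

/-- Sum over `antidiagonalTuple 3 n` as a double range sum. -/
lemma tuple3_sum (f : ℕ → ℕ → ℕ → ℝ) (n : ℕ) :
    ∑ c ∈ Finset.Nat.antidiagonalTuple 3 n, f (c 0) (c 1) (c 2) =
      ∑ m ∈ Finset.range (n + 1), ∑ k ∈ Finset.range (m + 1), f k (m - k) (n - m) := by
  rw [Finset.sum_sigma' (Finset.range (n+1)) (fun m => Finset.range (m+1))
      (fun m k => f k (m - k) (n - m))]
  refine Finset.sum_nbij' (fun c => ⟨c 0 + c 1, c 0⟩)
    (fun p => ![p.2, p.1 - p.2, n - p.1]) ?_ ?_ ?_ ?_ ?_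
  · intro c hc
    rw [Finset.Nat.mem_antidiagonalTuple] at hc
    rw [Fin.sum_univ_three] at hc
    simp only [Finset.mem_sigma, Finset.mem_range]
    omega
  · intro p hp
    simp only [Finset.mem_sigma, Finset.mem_range] at hp
    rw [Finset.Nat.mem_antidiagonalTuple, Fin.sum_univ_three]
    simp only [Matrix.cons_val_zero, Matrix.cons_val_one, Matrix.head_cons,
      Matrix.cons_val_two, Matrix.tail_cons]
    omega
  · intro c hc
    rw [Finset.Nat.mem_antidiagonalTuple, Fin.sum_univ_three] at hc
    funext i
    fin_cases i <;> simp <;> omega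
  · intro p hp
    simp only [Finset.mem_sigma, Finset.mem_range] at hp
    ext <;> simp <;> omega
  · intro c hc
    rw [Finset.Nat.mem_antidiagonalTuple, Fin.sum_univ_three] at hc
    have h1 : c 0 + c 1 - c 0 = c 1 := by omega
    have h2 : n - (c 0 + c 1) = c 2 := by omega
    rw [h1, h2]

open PowerSeries Finset

lemma monoCX (k : ℕ) (r : ℝ) : (PowerSeries.monomial (R := ℝ) k) r = PowerSeries.C (R := ℝ) r * X ^ k := by
  rw [X_pow_eq, ← smul_eq_C_mul, ← map_smul, smul_eq_mul, mul_one]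

lemma derivCX (k : ℕ) (r : ℝ) :
    PowerSeries.derivative ℝ (PowerSeries.C (R := ℝ) r * X ^ (k + 1)) =
      PowerSeries.C (R := ℝ) ((k + 1 : ℕ) * r) * X ^ k := by
  ext n
  simp only [coeff_derivative, coeff_C_mul, coeff_X_pow]
  split_ifs with h1 h2
  · subst h2; push_cast; ring
  · omega
  · omega
  · ring

open PowerSeries Finset

lemma fact_val (n : ℕ) : ((1 : ℝ) / (Nat.factorial (n + 1))) * ((n : ℝ) + 1) =
    1 / (Nat.factorial n) := by
  have h0 : ((Nat.factorial n : ℝ)) ≠ 0 := Nat.cast_ne_zero.mpr n.factorial_ne_zero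
  have h1 : ((n : ℝ) + 1) ≠ 0 := by positivity
  rw [Nat.factorial_succ]
  push_cast
  field_simp

lemma derivF (a : ℕ) :
    PowerSeries.derivative ℝ (PowerSeries.mk fun m =>
        if Even m ∧ 2 * a + 2 ≤ m then (1 : ℝ) / (Nat.factorial m) else 0) =
      PowerSeries.mk fun m => if Odd m ∧ 2 * a + 1 ≤ m then (1 : ℝ) / (Nat.factorial m) else 0 := by
  ext n
  rw [coeff_derivative, coeff_mk, coeff_mk]
  by_cases h : Odd n ∧ 2 * a + 1 ≤ n
  · rw [if_pos, if_pos h]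
    · exact fact_val n
    · refine ⟨?_, by omega⟩
      simp only [Nat.even_iff, Nat.odd_iff] at h ⊢; omega
  · rw [if_neg, if_neg h, zero_mul]
    intro hc
    exact h ⟨by simp only [Nat.even_iff, Nat.odd_iff] at hc ⊢; omega, by omega⟩

lemma derivG (a : ℕ) :
    PowerSeries.derivative ℝ (PowerSeries.mk fun m =>
        if Odd m ∧ 2 * a + 1 ≤ m then (1 : ℝ) / (Nat.factorial m) else 0) =
      (PowerSeries.mk fun m =>
        if Even m ∧ 2 * a + 2 ≤ m then (1 : ℝ) / (Nat.factorial m) else 0) +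
      PowerSeries.C (R := ℝ) ((1 : ℝ) / (Nat.factorial (2 * a))) * X ^ (2 * a) := by
  ext n
  rw [coeff_derivative, map_add, coeff_mk, coeff_mk, coeff_C_mul, coeff_X_pow]
  by_cases h0 : n = 2 * a
  · subst h0
    rw [if_pos, if_neg (by omega), if_pos rfl, mul_one, zero_add]
    · exact fact_val (2 * a)
    · exact ⟨by simp [Nat.odd_iff], le_refl _⟩
  · rw [if_neg h0, mul_zero, add_zero]
    by_cases h : Even n ∧ 2 * a + 2 ≤ n
    · rw [if_pos, if_pos h]
      · exact fact_val n
      · refine ⟨?_, by omega⟩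
        simp only [Nat.even_iff, Nat.odd_iff] at h ⊢; omega
    · rw [if_neg, if_neg h, zero_mul]
      intro hc
      refine h ⟨?_, ?_⟩
      · simp only [Nat.even_iff, Nat.odd_iff] at hc ⊢; omega
      · rcases hc with ⟨hodd, hle⟩
        simp only [Nat.even_iff, Nat.odd_iff] at hodd
        omega

open PowerSeries Finset

lemma coeff_TE (u : ℕ → ℝ) (k : ℕ) :
    PowerSeries.coeff (R := ℝ) k (X * PowerSeries.derivative ℝ
        (PowerSeries.mk fun n => u n / (Nat.factorial n))) =
      (k : ℝ) * (u k / (Nat.factorial k)) := by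
  cases k with
  | zero => simp
  | succ j =>
    rw [coeff_succ_X_mul, coeff_derivative, coeff_mk]
    push_cast
    ring

lemma coeff_T2 (u : ℕ → ℝ) (k : ℕ) :
    PowerSeries.coeff (R := ℝ) k (X * PowerSeries.derivative ℝ
          (PowerSeries.mk fun n => u n / (Nat.factorial n)) +
        X ^ 2 * PowerSeries.derivative ℝ (PowerSeries.derivative ℝ
          (PowerSeries.mk fun n => u n / (Nat.factorial n)))) =
      (k : ℝ) ^ 2 * (u k / (Nat.factorial k)) := by
  rw [map_add, coeff_TE]
  match k with
  | 0 => simp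
  | 1 =>
    rw [show (1 : ℕ) = 0 + 1 from rfl, coeff_X_pow_mul']
    norm_num
  | (j + 2) =>
    rw [show j + 2 = j + 2 from rfl, coeff_X_pow_mul (n := 2) (d := j),
      coeff_derivative, coeff_derivative, coeff_mk]
    push_cast
    ring

open PowerSeries Finset

lemma derivXpow (k : ℕ) :
    PowerSeries.derivative ℝ ((X : PowerSeries ℝ) ^ (k + 1)) =
      ((k : PowerSeries ℝ) + 1) * X ^ k := by
  rw [Derivation.leibniz_pow, derivative_X, Nat.add_sub_cancel, smul_eq_mul, mul_one,
    nsmul_eq_mul]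
  push_cast
  ring

lemma series_key (a : ℕ) (Ca Cc F G EE H : PowerSeries ℝ)
    (hCa : ((a : ℕ) : PowerSeries ℝ) = Ca)
    (hDCa : PowerSeries.derivative ℝ Ca = 0)
    (hDCc : PowerSeries.derivative ℝ Cc = 0)
    (h1 : F * EE = Cc * X ^ (2 * a + 2))
    (h2 : G * H = (2 * Ca + 2) * Cc * X ^ (2 * a + 1))
    (hDF : PowerSeries.derivative ℝ F = G)
    (hDG : PowerSeries.derivative ℝ G = F + (2 * Ca + 1) * ((2 * Ca + 2) * Cc) * X ^ (2 * a))
    (hF : F ≠ 0) (hG : G ≠ 0) :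
    (8 * (Ca + 1) ^ 2) * (EE * EE * EE) =
      (8 * (Ca + 1) ^ 2) * (EE * H * H)
        - (6 * (Ca + 1)) * ((X * PowerSeries.derivative ℝ EE) * H * H)
        - (2 * (Ca + 1)) * (EE * (X * PowerSeries.derivative ℝ H) * H)
        + (X * PowerSeries.derivative ℝ EE
            + X ^ 2 * PowerSeries.derivative ℝ (PowerSeries.derivative ℝ EE)) * H * H
        + (X * PowerSeries.derivative ℝ EE) * (X * PowerSeries.derivative ℝ H) * H := by
  have hD2 : PowerSeries.derivative ℝ (2 : PowerSeries ℝ) = 0 := by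
    rw [show (2 : PowerSeries ℝ) = PowerSeries.C (R := ℝ) 2 from (map_ofNat _ 2).symm, derivative_C]
  have hD1 : PowerSeries.derivative ℝ (1 : PowerSeries ℝ) = 0 := by
    rw [show (1 : PowerSeries ℝ) = PowerSeries.C (R := ℝ) 1 from (map_one _).symm, derivative_C]
  have hx2 : PowerSeries.derivative ℝ ((X : PowerSeries ℝ) ^ (2 * a + 2)) =
      (2 * Ca + 2) * X ^ (2 * a + 1) := by
    have h := derivXpow (2 * a + 1)
    rw [show 2 * a + 1 + 1 = 2 * a + 2 by omega] at h
    rw [h, ← hCa]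
    push_cast
    ring
  have hx1 : PowerSeries.derivative ℝ ((X : PowerSeries ℝ) ^ (2 * a + 1)) =
      (2 * Ca + 1) * X ^ (2 * a) := by
    have h := derivXpow (2 * a)
    rw [h, ← hCa]
    push_cast
    ring
  set D := PowerSeries.derivative ℝ with hD
  -- first derivative relations
  have hDE : F * D EE = (2 * Ca + 2) * Cc * X ^ (2 * a + 1) - G * EE := by
    have h := congrArg D h1
    simp only [Derivation.leibniz, map_add, smul_eq_mul, hDF, hDCa, hDCc, hD2, hD1,
      hx2, mul_zero, zero_mul, add_zero, zero_add] at h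
    linear_combination h
  have hDH : G * D H = (2 * Ca + 1) * ((2 * Ca + 2) * Cc) * X ^ (2 * a) - F * H
      - (2 * Ca + 1) * ((2 * Ca + 2) * Cc) * X ^ (2 * a) * H := by
    have h := congrArg D h2
    simp only [Derivation.leibniz, map_add, smul_eq_mul, hDG, hDCa, hDCc, hD2, hD1,
      hx1, mul_zero, zero_mul, add_zero, zero_add] at h
    linear_combination h
  have hD2E : F * D (D EE) = (2 * Ca + 1) * ((2 * Ca + 2) * Cc) * X ^ (2 * a)
      - F * EE - (2 * Ca + 1) * ((2 * Ca + 2) * Cc) * X ^ (2 * a) * EE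
      - 2 * (G * D EE) := by
    have h := congrArg D hDE
    simp only [Derivation.leibniz, map_add, map_sub, smul_eq_mul, hDF, hDG, hDCa, hDCc,
      hD2, hD1, hx1, mul_zero, zero_mul, add_zero, zero_add] at h
    linear_combination h
  -- second-level relations
  have r3 : F * (F * (X * D EE)) =
      (2*Ca+2)*Cc*X^(2*a+2)*F - Cc*X^(2*a+3)*G := by
    linear_combination X*F*hDE - X*G*h1
  have r4 : G * (G * (X * D H)) =
      (2*Ca+1)*((2*Ca+2)*Cc)*X^(2*a+1)*G - (2*Ca+2)*Cc*X^(2*a+2)*F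
        - (2*Ca+1)*((2*Ca+2)*Cc)*((2*Ca+2)*Cc)*X^(4*a+2) := by
    linear_combination X*G*hDH - (X*F + (2*Ca+1)*((2*Ca+2)*Cc)*X^(2*a+1))*h2
  have r5 : F * (F * (F * (X * D EE + X^2 * D (D EE)))) =
      (2*Ca+2)*(2*Ca+2)*Cc*X^(2*a+2)*(F*F) - Cc*X^(2*a+4)*(F*F)
        - (2*Ca+1)*((2*Ca+2)*Cc)*Cc*X^(4*a+4)*F
        - (4*Ca+5)*Cc*X^(2*a+3)*(F*G) + 2*Cc*X^(2*a+4)*(G*G) := by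
    linear_combination F*r3 + X^2*F^2*hD2E - X^2*F^2*h1
      - (2*Ca+1)*((2*Ca+2)*Cc)*X^(2*a+2)*F*h1 - 2*X^2*F*G*hDE + 2*X^2*G^2*h1
  -- triple-product reductions
  have T0 : (F*F*F*(G*G*G)) * (EE*EE*EE) = Cc*Cc*Cc*X^(6*a+6)*(G*G*G) := by
    linear_combination (G*G*G*((F*EE)*(F*EE) + (F*EE)*(Cc*X^(2*a+2))
       + (Cc*X^(2*a+2))*(Cc*X^(2*a+2))))*h1
  have T1 : (F*F*F*(G*G*G)) * (EE*H*H) =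
      (Cc*X^(2*a+2))*((2*Ca+2)*Cc*X^(2*a+1))*((2*Ca+2)*Cc*X^(2*a+1))*(F*F*G) := by
    linear_combination (F*F*G*(G*H)*(G*H))*h1
      + (F*F*G*(Cc*X^(2*a+2))*(G*H + (2*Ca+2)*Cc*X^(2*a+1)))*h2
  have T2 : (F*F*F*(G*G*G)) * ((X * D EE)*H*H) =
      ((2*Ca+2)*Cc*X^(2*a+2)*F - Cc*X^(2*a+3)*G)
        *((2*Ca+2)*Cc*X^(2*a+1))*((2*Ca+2)*Cc*X^(2*a+1))*(F*G) := by
    linear_combination (F*G*(G*H)*(G*H))*r3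
      + (F*G*((2*Ca+2)*Cc*X^(2*a+2)*F - Cc*X^(2*a+3)*G)*(G*H + (2*Ca+2)*Cc*X^(2*a+1)))*h2
  have T3 : (F*F*F*(G*G*G)) * (EE*(X * D H)*H) =
      (Cc*X^(2*a+2))
        *((2*Ca+1)*((2*Ca+2)*Cc)*X^(2*a+1)*G - (2*Ca+2)*Cc*X^(2*a+2)*F
          - (2*Ca+1)*((2*Ca+2)*Cc)*((2*Ca+2)*Cc)*X^(4*a+2))
        *((2*Ca+2)*Cc*X^(2*a+1))*(F*F) := by
    linear_combination (F*F*(G*(G*(X * D H)))*(G*H))*h1 + (F*F*(Cc*X^(2*a+2))*(G*H))*r4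
      + (F*F*(Cc*X^(2*a+2))*((2*Ca+1)*((2*Ca+2)*Cc)*X^(2*a+1)*G - (2*Ca+2)*Cc*X^(2*a+2)*F
          - (2*Ca+1)*((2*Ca+2)*Cc)*((2*Ca+2)*Cc)*X^(4*a+2)))*h2
  have T4 : (F*F*F*(G*G*G)) * ((X * D EE + X^2 * D (D EE))*H*H) =
      ((2*Ca+2)*(2*Ca+2)*Cc*X^(2*a+2)*(F*F) - Cc*X^(2*a+4)*(F*F)
        - (2*Ca+1)*((2*Ca+2)*Cc)*Cc*X^(4*a+4)*F
        - (4*Ca+5)*Cc*X^(2*a+3)*(F*G) + 2*Cc*X^(2*a+4)*(G*G))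
        *((2*Ca+2)*Cc*X^(2*a+1))*((2*Ca+2)*Cc*X^(2*a+1))*G := by
    linear_combination (G*(G*H)*(G*H))*r5
      + (G*((2*Ca+2)*(2*Ca+2)*Cc*X^(2*a+2)*(F*F) - Cc*X^(2*a+4)*(F*F)
        - (2*Ca+1)*((2*Ca+2)*Cc)*Cc*X^(4*a+4)*F
        - (4*Ca+5)*Cc*X^(2*a+3)*(F*G) + 2*Cc*X^(2*a+4)*(G*G))
        *(G*H + (2*Ca+2)*Cc*X^(2*a+1)))*h2
  have T5 : (F*F*F*(G*G*G)) * ((X * D EE)*(X * D H)*H) =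
      ((2*Ca+2)*Cc*X^(2*a+2)*F - Cc*X^(2*a+3)*G)
        *((2*Ca+1)*((2*Ca+2)*Cc)*X^(2*a+1)*G - (2*Ca+2)*Cc*X^(2*a+2)*F
          - (2*Ca+1)*((2*Ca+2)*Cc)*((2*Ca+2)*Cc)*X^(4*a+2))
        *((2*Ca+2)*Cc*X^(2*a+1))*F := by
    linear_combination (F*(G*(G*(X * D H)))*(G*H))*r3
      + (F*((2*Ca+2)*Cc*X^(2*a+2)*F - Cc*X^(2*a+3)*G)*(G*H))*r4
      + (F*((2*Ca+2)*Cc*X^(2*a+2)*F - Cc*X^(2*a+3)*G)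
          *((2*Ca+1)*((2*Ca+2)*Cc)*X^(2*a+1)*G - (2*Ca+2)*Cc*X^(2*a+2)*F
            - (2*Ca+1)*((2*Ca+2)*Cc)*((2*Ca+2)*Cc)*X^(4*a+2)))*h2
  have KEY : (F*F*F*(G*G*G)) * ((8 * (Ca + 1) ^ 2) * (EE * EE * EE)) =
      (F*F*F*(G*G*G)) * ((8 * (Ca + 1) ^ 2) * (EE * H * H)
        - (6 * (Ca + 1)) * ((X * D EE) * H * H)
        - (2 * (Ca + 1)) * (EE * (X * D H) * H)
        + (X * D EE + X ^ 2 * D (D EE)) * H * H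
        + (X * D EE) * (X * D H) * H) := by
    linear_combination (8*(Ca+1)^2)*T0 - (8*(Ca+1)^2)*T1 + (6*(Ca+1))*T2
      + (2*(Ca+1))*T3 - T4 - T5
  exact mul_left_cancel₀
    (mul_ne_zero (mul_ne_zero (mul_ne_zero hF hF) hF)
      (mul_ne_zero (mul_ne_zero hG hG) hG)) KEY

/-- For `N ≥ 1` and `n ≥ 0`,
`∑_{i₁+i₂+i₃=n} n!/(i₁!i₂!i₃!) E_{N,i₁}E_{N,i₂}E_{N,i₃}
  = ∑_{m=0}^n ∑_{k=0}^m C(n,m)C(m,k) ((4N-m)(2N-k)/(8N²)) E_{N,k} Ê_{N-1,n-m} Ê_{N-1,m-k}`,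
with `E` and `Ê` the (complementary) hypergeometric Euler numbers defined by their
generating functions. -/
theorem hypergeometric_euler_sum_products_three (N : ℕ) (hN : 1 ≤ N) (E Ehat : ℕ → ℝ)
    (hE : (PowerSeries.mk fun m => if Even m ∧ 2 * N ≤ m then (1 : ℝ) / (Nat.factorial m) else 0) *
        (PowerSeries.mk fun n => E n / (Nat.factorial n)) =
      PowerSeries.monomial (R := ℝ) (2 * N) ((1 : ℝ) / (Nat.factorial (2 * N))))
    (hEhat : (PowerSeries.mk fun m =>
          if Odd m ∧ 2 * N - 1 ≤ m then (1 : ℝ) / (Nat.factorial m) else 0) *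
        (PowerSeries.mk fun n => Ehat n / (Nat.factorial n)) =
      PowerSeries.monomial (R := ℝ) (2 * N - 1) ((1 : ℝ) / (Nat.factorial (2 * N - 1)))) :
    ∀ n : ℕ,
      ∑ c ∈ Finset.Nat.antidiagonalTuple 3 n,
          ((Nat.factorial n : ℝ) / ∏ j, (Nat.factorial (c j) : ℝ)) * ∏ j, E (c j) =
        ∑ m ∈ Finset.range (n + 1), ∑ k ∈ Finset.range (m + 1),
          (Nat.choose n m : ℝ) * (Nat.choose m k : ℝ) *
            (((4 * N : ℝ) - m) * ((2 * N : ℝ) - k) / (8 * (N : ℝ) ^ 2)) *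
            E k * Ehat (n - m) * Ehat (m - k) := by
  obtain ⟨a, rfl⟩ : ∃ a, N = a + 1 := ⟨N - 1, by omega⟩
  simp only [show 2 * (a + 1) = 2 * a + 2 by ring, show 2 * a + 2 - 1 = 2 * a + 1 by omega]
    at hE hEhat
  have hfac : ∀ m : ℕ, ((Nat.factorial m : ℝ)) ≠ 0 :=
    fun m => Nat.cast_ne_zero.mpr m.factorial_ne_zero
  -- real constant facts
  have hd : (1 : ℝ) / (Nat.factorial (2 * a + 1)) =
      (2 * (a : ℝ) + 2) * ((1 : ℝ) / (Nat.factorial (2 * a + 2))) := by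
    have h := fact_val (2 * a + 1)
    rw [show 2 * a + 1 + 1 = 2 * a + 2 by omega] at h
    push_cast at h
    linear_combination -h
  have he : (1 : ℝ) / (Nat.factorial (2 * a)) =
      (2 * (a : ℝ) + 1) * ((2 * (a : ℝ) + 2) * ((1 : ℝ) / (Nat.factorial (2 * a + 2)))) := by
    have h := fact_val (2 * a)
    rw [show 2 * a + 1 = 2 * a + 1 from rfl] at h
    push_cast at h
    rw [← h, hd]
    ring
  -- instantiate the series identity
  have hkey := series_key a (PowerSeries.C (R := ℝ) (a : ℝ))
    (PowerSeries.C (R := ℝ) ((1 : ℝ) / (Nat.factorial (2 * a + 2))))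
    (PowerSeries.mk fun m => if Even m ∧ 2 * a + 2 ≤ m then (1 : ℝ) / (Nat.factorial m) else 0)
    (PowerSeries.mk fun m => if Odd m ∧ 2 * a + 1 ≤ m then (1 : ℝ) / (Nat.factorial m) else 0)
    (PowerSeries.mk fun n => E n / (Nat.factorial n))
    (PowerSeries.mk fun n => Ehat n / (Nat.factorial n))
    (by rw [map_natCast])
    derivative_C derivative_C
    (by rw [hE, monoCX])
    (by rw [hEhat, monoCX, hd]; simp [map_mul, map_add, map_ofNat])
    (derivF a)
    (by rw [derivG a, he]; simp [map_mul, map_add, map_ofNat])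
    (by
      intro h0
      have hc := congrArg (PowerSeries.coeff (R := ℝ) (2 * a + 2)) h0
      rw [PowerSeries.coeff_mk, if_pos ⟨⟨a + 1, by ring⟩, le_refl _⟩, map_zero] at hc
      have hp : (0 : ℝ) < 1 / (Nat.factorial (2 * a + 2) : ℝ) := by positivity
      exact hp.ne' hc)
    (by
      intro h0
      have hc := congrArg (PowerSeries.coeff (R := ℝ) (2 * a + 1)) h0
      rw [PowerSeries.coeff_mk, if_pos ⟨⟨a, by ring⟩, le_refl _⟩, map_zero] at hc
      have hp : (0 : ℝ) < 1 / (Nat.factorial (2 * a + 1) : ℝ) := by positivity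
      exact hp.ne' hc)
  -- rewrite scalar constants in C-form
  rw [show (8 * (PowerSeries.C (R := ℝ) (a : ℝ) + 1) ^ 2 : PowerSeries ℝ) =
        PowerSeries.C (R := ℝ) (8 * ((a : ℝ) + 1) ^ 2) by
      simp [map_mul, map_add, map_pow, map_ofNat],
    show (6 * (PowerSeries.C (R := ℝ) (a : ℝ) + 1) : PowerSeries ℝ) =
        PowerSeries.C (R := ℝ) (6 * ((a : ℝ) + 1)) by simp [map_mul, map_add, map_ofNat],
    show (2 * (PowerSeries.C (R := ℝ) (a : ℝ) + 1) : PowerSeries ℝ) =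
        PowerSeries.C (R := ℝ) (2 * ((a : ℝ) + 1)) by simp [map_mul, map_add, map_ofNat]] at hkey
  intro n
  have hco := congrArg (PowerSeries.coeff (R := ℝ) n) hkey
  rw [map_add, map_add, map_sub, map_sub, coeff_C_mul, coeff_C_mul, coeff_C_mul,
    coeff_C_mul, coeff_mul3, coeff_mul3, coeff_mul3, coeff_mul3, coeff_mul3, coeff_mul3]
    at hco
  simp only [PowerSeries.coeff_mk, coeff_TE, coeff_T2] at hco
  have hne : (8 * ((a : ℝ) + 1) ^ 2) ≠ 0 := by positivity
  have hco2 : 8 * ((a : ℝ) + 1) ^ 2 *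
      ∑ m ∈ Finset.range (n + 1), ∑ k ∈ Finset.range (m + 1),
        E k / (k.factorial : ℝ) * (E (m - k) / ((m - k).factorial : ℝ)) *
          (E (n - m) / ((n - m).factorial : ℝ)) =
      ∑ m ∈ Finset.range (n + 1), ∑ k ∈ Finset.range (m + 1),
        (8 * ((a : ℝ) + 1) ^ 2 - 6 * ((a : ℝ) + 1) * k - 2 * ((a : ℝ) + 1) * ((m - k : ℕ) : ℝ)
            + (k : ℝ) ^ 2 + (k : ℝ) * ((m - k : ℕ) : ℝ)) *
          (Ehat (n - m) / ((n - m).factorial : ℝ)) * (Ehat (m - k) / ((m - k).factorial : ℝ)) *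
          (E k / (k.factorial : ℝ)) := by
    rw [hco]
    simp only [Finset.mul_sum, ← Finset.sum_sub_distrib, ← Finset.sum_add_distrib]
    exact Finset.sum_congr rfl fun m _ => Finset.sum_congr rfl fun k _ => by ring
  have hL1 : ∑ c ∈ Finset.Nat.antidiagonalTuple 3 n,
      ((n.factorial : ℝ) / ∏ j, (((c j).factorial : ℝ))) * ∏ j, E (c j) =
      ∑ m ∈ Finset.range (n + 1), ∑ k ∈ Finset.range (m + 1),
        (n.factorial : ℝ) * (E k / (k.factorial : ℝ) * (E (m - k) / ((m - k).factorial : ℝ)) *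
          (E (n - m) / ((n - m).factorial : ℝ))) := by
    have ht := tuple3_sum (fun x y z => ((n.factorial : ℝ) / ((x.factorial : ℝ) *
      (y.factorial : ℝ) * (z.factorial : ℝ))) * (E x * E y * E z)) n
    refine Eq.trans (Eq.trans ?_ ht) ?_
    · exact Finset.sum_congr rfl fun c _ => by
        rw [Fin.prod_univ_three, Fin.prod_univ_three]
    · refine Finset.sum_congr rfl fun m _ => Finset.sum_congr rfl fun k _ => ?_
      show ((n.factorial : ℝ) / ((k.factorial : ℝ) * (((m - k).factorial : ℝ)) *
        (((n - m).factorial : ℝ)))) * (E k * E (m - k) * E (n - m)) = _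
      have h1 := hfac k; have h2 := hfac (m - k); have h3 := hfac (n - m)
      field_simp
  calc ∑ c ∈ Finset.Nat.antidiagonalTuple 3 n,
      ((n.factorial : ℝ) / ∏ j, (((c j).factorial : ℝ))) * ∏ j, E (c j)
      = ∑ m ∈ Finset.range (n + 1), ∑ k ∈ Finset.range (m + 1),
          (n.factorial : ℝ) * (E k / (k.factorial : ℝ) * (E (m - k) / ((m - k).factorial : ℝ)) *
            (E (n - m) / ((n - m).factorial : ℝ))) := hL1
    _ = ((n.factorial : ℝ) / (8 * ((a : ℝ) + 1) ^ 2)) * (8 * ((a : ℝ) + 1) ^ 2 *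
          ∑ m ∈ Finset.range (n + 1), ∑ k ∈ Finset.range (m + 1),
            E k / (k.factorial : ℝ) * (E (m - k) / ((m - k).factorial : ℝ)) *
              (E (n - m) / ((n - m).factorial : ℝ))) := by
        rw [← mul_assoc, div_mul_cancel₀ _ hne, Finset.mul_sum]
        exact Finset.sum_congr rfl fun m _ => by rw [Finset.mul_sum]
    _ = ((n.factorial : ℝ) / (8 * ((a : ℝ) + 1) ^ 2)) *
          ∑ m ∈ Finset.range (n + 1), ∑ k ∈ Finset.range (m + 1),
            (8 * ((a : ℝ) + 1) ^ 2 - 6 * ((a : ℝ) + 1) * k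
                - 2 * ((a : ℝ) + 1) * ((m - k : ℕ) : ℝ)
                + (k : ℝ) ^ 2 + (k : ℝ) * ((m - k : ℕ) : ℝ)) *
              (Ehat (n - m) / ((n - m).factorial : ℝ)) *
              (Ehat (m - k) / ((m - k).factorial : ℝ)) * (E k / (k.factorial : ℝ)) := by
        rw [hco2]
    _ = ∑ m ∈ Finset.range (n + 1), ∑ k ∈ Finset.range (m + 1),
          (n.choose m : ℝ) * (m.choose k : ℝ) *
            ((4 * ((a + 1 : ℕ) : ℝ) - m) * (2 * ((a + 1 : ℕ) : ℝ) - k) /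
              (8 * ((a + 1 : ℕ) : ℝ) ^ 2)) * E k * Ehat (n - m) * Ehat (m - k) := by
        rw [Finset.mul_sum]
        refine Finset.sum_congr rfl fun m hm => ?_
        rw [Finset.mul_sum]
        refine Finset.sum_congr rfl fun k hk => ?_
        have hmn : m ≤ n := Nat.lt_succ_iff.mp (Finset.mem_range.mp hm)
        have hkm : k ≤ m := Nat.lt_succ_iff.mp (Finset.mem_range.mp hk)
        have h1 := hfac k; have h2 := hfac (m - k); have h3 := hfac (n - m)
        have h4 := hfac m; have h5 := hfac n
        rw [Nat.cast_choose ℝ hmn, Nat.cast_choose ℝ hkm]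
        push_cast [Nat.cast_sub hkm]
        field_simp
        ring
end

section
/- For N ≥ 0 and n ≥ 1, Ê_{N,2n} = (2n)! Σ_{k=1}^{n} (-1)^k Σ_{i_1+⋯+i_k=n, i_j ≥ 1} ((2N+1)!)^k / ((2N+2i_1+1)! ⋯ (2N+2i_k+1)!). -/
noncomputable def CHE.T (b : ℕ → ℝ) (k n : ℕ) : ℝ :=
  ∑ c ∈ (Finset.Nat.antidiagonalTuple k n).filter (fun c => ∀ j, 1 ≤ c j), ∏ j, b (c j)

noncomputable def CHE.A (b : ℕ → ℝ) (n : ℕ) : ℝ :=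
  ∑ k ∈ Finset.range (n + 1), (-1 : ℝ) ^ k * CHE.T b k n

namespace CHE

lemma T_zero (b : ℕ → ℝ) : T b 0 0 = 1 := by
  simp [T, Finset.Nat.antidiagonalTuple_zero_zero]

lemma T_vanish (b : ℕ → ℝ) {k n : ℕ} (h : n < k) : T b k n = 0 := by
  unfold T
  refine Finset.sum_eq_zero fun c hc => absurd hc ?_
  intro hc
  simp only [Finset.mem_filter, Finset.Nat.mem_antidiagonalTuple] at hc
  obtain ⟨hsum, hpos⟩ := hc
  have : k ≤ ∑ j, c j := by
    calc k = ∑ _j : Fin k, 1 := by simp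
    _ ≤ ∑ j, c j := Finset.sum_le_sum fun j _ => hpos j
  omega

lemma T_succ (b : ℕ → ℝ) (k n : ℕ) :
    T b (k + 1) n = ∑ m ∈ Finset.Icc 1 n, b m * T b k (n - m) := by
  unfold T
  simp only [Finset.mul_sum]
  rw [Finset.sum_sigma']
  refine Finset.sum_nbij' (fun c => (⟨c 0, Fin.tail c⟩ : Σ _m : ℕ, Fin _ → ℕ))
    (fun p => Fin.cons p.1 p.2) ?_ ?_ ?_ ?_ ?_
  · intro c hc
    simp only [Finset.mem_filter, Finset.Nat.mem_antidiagonalTuple] at hc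
    obtain ⟨hsum, hpos⟩ := hc
    rw [Fin.sum_univ_succ] at hsum
    simp only [Finset.mem_sigma, Finset.mem_Icc, Finset.mem_filter,
      Finset.Nat.mem_antidiagonalTuple]
    refine ⟨⟨hpos 0, by omega⟩, by simp only [Fin.tail]; omega, fun j => hpos j.succ⟩
  · intro p hp
    simp only [Finset.mem_sigma, Finset.mem_Icc, Finset.mem_filter,
      Finset.Nat.mem_antidiagonalTuple] at hp
    obtain ⟨⟨h1, h2⟩, hsum, hpos⟩ := hp
    simp only [Finset.mem_filter, Finset.Nat.mem_antidiagonalTuple]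
    constructor
    · rw [Fin.sum_univ_succ]; simp only [Fin.cons_zero, Fin.cons_succ]; omega
    · intro j
      refine Fin.cases ?_ ?_ j
      · simpa using h1
      · intro i; simpa using hpos i
  · intro c hc; simp
  · intro p hp; simp
  · intro c hc
    rw [Fin.prod_univ_succ]
    rfl

lemma A_rec (b : ℕ → ℝ) (n : ℕ) (hn : 1 ≤ n) :
    A b n = -∑ m ∈ Finset.Icc 1 n, b m * A b (n - m) := by
  have key : ∀ m ∈ Finset.Icc 1 n, b m * A b (n - m) =
      ∑ k ∈ Finset.range (n + 1), (-1 : ℝ) ^ k * (b m * T b k (n - m)) := by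
    intro m hm
    simp only [Finset.mem_Icc] at hm
    unfold A
    rw [Finset.mul_sum]
    rw [Finset.sum_subset (Finset.range_subset_range.mpr (by omega : n - m + 1 ≤ n + 1))]
    · apply Finset.sum_congr rfl; intro k _; ring
    · intro k hk hk2
      simp only [Finset.mem_range] at hk hk2
      rw [T_vanish b (by omega)]
      ring
  rw [Finset.sum_congr rfl key, Finset.sum_comm]
  have step : ∀ k ∈ Finset.range (n + 1),
      (∑ m ∈ Finset.Icc 1 n, (-1 : ℝ) ^ k * (b m * T b k (n - m)))
        = (-1 : ℝ) ^ k * T b (k + 1) n := by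
    intro k _
    rw [T_succ, Finset.mul_sum]
  rw [Finset.sum_congr rfl step]
  unfold A
  rw [Finset.sum_range_succ' (fun k => (-1 : ℝ) ^ k * T b k n) n]
  have h0 : T b 0 n = 0 := by
    unfold T
    rcases Nat.exists_eq_add_of_le hn with ⟨j, rfl⟩
    simp [Finset.Nat.antidiagonalTuple_zero_succ, Nat.add_comm]
  rw [h0]
  have hlast : T b (n + 1) n = 0 := T_vanish b (by omega)
  rw [Finset.sum_range_succ, hlast]
  simp only [mul_zero, add_zero, pow_zero, mul_zero]
  rw [← Finset.sum_neg_distrib]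
  apply Finset.sum_congr rfl
  intro k _
  ring

end CHE

lemma CHE.A_Icc (b : ℕ → ℝ) (n : ℕ) (hn : 1 ≤ n) :
    CHE.A b n = ∑ k ∈ Finset.Icc 1 n, (-1 : ℝ) ^ k * CHE.T b k n := by
  unfold CHE.A
  rw [Finset.sum_range_succ' (fun k => (-1 : ℝ) ^ k * CHE.T b k n) n]
  have h0 : CHE.T b 0 n = 0 := by
    unfold CHE.T
    rcases Nat.exists_eq_add_of_le hn with ⟨j, rfl⟩
    simp [Finset.Nat.antidiagonalTuple_zero_succ, Nat.add_comm]
  rw [h0, ← Finset.Ico_add_one_right_eq_Icc, Finset.sum_Ico_eq_sum_range]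
  simp only [pow_zero, one_mul, add_zero, Nat.add_sub_cancel]
  exact Finset.sum_congr rfl fun i _ => by rw [Nat.add_comm 1 i]

/-- For `N ≥ 0` and `n ≥ 1`,
`Ê_{N,2n} = (2n)! ∑_{k=1}^n (-1)^k ∑_{i₁+⋯+i_k=n, i_j ≥ 1}
((2N+1)!)^k/((2N+2i₁+1)!⋯(2N+2i_k+1)!)`, the complementary hypergeometric Euler numbers being
defined by `Ê_{N,0}=1`, `Ê_{N,n}=0` for odd `n`, and the stated recurrence. -/
theorem complementary_hypergeometric_euler_explicit (N : ℕ) (Ehat : ℕ → ℝ)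
    (h0 : Ehat 0 = 1)
    (hodd : ∀ n : ℕ, Odd n → Ehat n = 0)
    (hrec : ∀ n : ℕ, 1 ≤ n →
      Ehat (2 * n) = -(Nat.factorial (2 * n) : ℝ) * (Nat.factorial (2 * N + 1)) *
        ∑ i ∈ Finset.range n,
          Ehat (2 * i) /
            ((Nat.factorial (2 * N + 2 * n - 2 * i + 1) : ℝ) * (Nat.factorial (2 * i)))) :
    ∀ n : ℕ, 1 ≤ n →
      Ehat (2 * n) = (Nat.factorial (2 * n) : ℝ) *
        ∑ k ∈ Finset.Icc 1 n, (-1 : ℝ) ^ k *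
          ∑ c ∈ (Finset.Nat.antidiagonalTuple k n).filter (fun c => ∀ j, 1 ≤ c j),
            ((Nat.factorial (2 * N + 1) : ℝ)) ^ k /
              ∏ j, (Nat.factorial (2 * N + 2 * c j + 1) : ℝ) := by
  set b : ℕ → ℝ := fun m => (Nat.factorial (2 * N + 1) : ℝ) / (Nat.factorial (2 * N + 2 * m + 1) : ℝ) with hb
  have hT : ∀ k n : ℕ, CHE.T b k n =
      ∑ c ∈ (Finset.Nat.antidiagonalTuple k n).filter (fun c => ∀ j, 1 ≤ c j),
        ((Nat.factorial (2 * N + 1) : ℝ)) ^ k /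
          ∏ j, (Nat.factorial (2 * N + 2 * c j + 1) : ℝ) := by
    intro k n
    unfold CHE.T
    refine Finset.sum_congr rfl fun c _ => ?_
    rw [hb]
    rw [Finset.prod_div_distrib, Finset.prod_const]
    simp
  -- key: Ehat (2*n) = (2*n)! * A b n for all n ≥ 1
  have key : ∀ n : ℕ, 1 ≤ n → Ehat (2 * n) = (Nat.factorial (2 * n) : ℝ) * CHE.A b n := by
    intro n
    induction n using Nat.strong_induction_on with
    | _ n ih =>
      intro hn
      rw [hrec n hn]
      have hterm : ∀ i ∈ Finset.range n,
          Ehat (2 * i) /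
            ((Nat.factorial (2 * N + 2 * n - 2 * i + 1) : ℝ) * (Nat.factorial (2 * i)))
          = CHE.A b i / (Nat.factorial (2 * N + 2 * (n - i) + 1) : ℝ) := by
        intro i hi
        simp only [Finset.mem_range] at hi
        have hidx : 2 * N + 2 * n - 2 * i + 1 = 2 * N + 2 * (n - i) + 1 := by omega
        rw [hidx]
        have hE : Ehat (2 * i) = (Nat.factorial (2 * i) : ℝ) * CHE.A b i := by
          rcases Nat.eq_zero_or_pos i with rfl | hipos
          · simp [h0, CHE.A, CHE.T_zero]
          · exact ih i hi hipos
        rw [hE, mul_comm ((Nat.factorial (2 * N + 2 * (n - i) + 1) : ℝ)) _,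
          mul_div_mul_left _ _ (by exact_mod_cast (Nat.factorial_ne_zero (2 * i)))]
      rw [Finset.sum_congr rfl hterm]
      have step : -(Nat.factorial (2 * n) : ℝ) * (Nat.factorial (2 * N + 1)) *
          ∑ i ∈ Finset.range n, CHE.A b i / (Nat.factorial (2 * N + 2 * (n - i) + 1) : ℝ)
          = (Nat.factorial (2 * n) : ℝ) *
            (-∑ i ∈ Finset.range n, b (n - i) * CHE.A b i) := by
        rw [neg_mul, neg_mul, mul_neg, mul_assoc, Finset.mul_sum]
        congr 2
        refine Finset.sum_congr rfl fun i _ => ?_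
        simp only [hb]
        ring
      rw [step]
      have reidx : ∑ i ∈ Finset.range n, b (n - i) * CHE.A b i
          = ∑ m ∈ Finset.Icc 1 n, b m * CHE.A b (n - m) := by
        rw [← Finset.Ico_add_one_right_eq_Icc, Finset.sum_Ico_eq_sum_range, Nat.add_sub_cancel,
          ← Finset.sum_range_reflect (fun i => b (n - i) * CHE.A b i) n]
        refine Finset.sum_congr rfl fun j hj => ?_
        simp only [Finset.mem_range] at hj
        have h1 : n - (n - 1 - j) = 1 + j := by omega
        have h2 : n - 1 - j = n - (1 + j) := by omega
        rw [h1, h2]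
      rw [reidx, ← CHE.A_rec b n hn]
  intro n hn
  rw [key n hn, CHE.A_Icc b n hn]
  congr 1
  exact Finset.sum_congr rfl fun k _ => by rw [hT]
end

section
/- For every N ≥ 0, Ê_{N,2} = -2/((2N+2)(2N+3)) and Ê_{N,4} = 2·4!·(4N+7)/((2N+2)²(2N+3)²(2N+4)(2N+5)). -/
/-- For every `N ≥ 0`, `Ê_{N,2} = -2/((2N+2)(2N+3))` and
`Ê_{N,4} = 2·4!·(4N+7)/((2N+2)²(2N+3)²(2N+4)(2N+5))`, the complementary hypergeometric Euler
numbers being defined by `Ê_{N,0}=1` and the recurrence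
`∑_{i=0}^{n/2} Ê_{N,2i}/((2N+n-2i+1)!(2i)!)=0` for even `n ≥ 2`. -/
theorem complementary_hypergeometric_euler_values (N : ℕ) (Ehat : ℕ → ℝ)
    (h0 : Ehat 0 = 1)
    (hrec : ∀ n : ℕ, 2 ≤ n → Even n →
      ∑ i ∈ Finset.range (n / 2 + 1),
        Ehat (2 * i) /
          ((Nat.factorial (2 * N + n - 2 * i + 1) : ℝ) * (Nat.factorial (2 * i))) = 0) :
    Ehat 2 = -2 / (((2 * N + 2 : ℕ) : ℝ) * ((2 * N + 3 : ℕ) : ℝ)) ∧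
    Ehat 4 = 2 * (Nat.factorial 4 : ℝ) * ((4 * N + 7 : ℕ) : ℝ) /
      (((2 * N + 2 : ℕ) : ℝ) ^ 2 * ((2 * N + 3 : ℕ) : ℝ) ^ 2 *
        ((2 * N + 4 : ℕ) : ℝ) * ((2 * N + 5 : ℕ) : ℝ)) := by
  have h2 := hrec 2 le_rfl (by decide)
  have h4 := hrec 4 (by norm_num) (by decide)
  norm_num [Finset.sum_range_succ] at h2 h4
  have hf4 : ((Nat.factorial 4 : ℕ) : ℝ) = 24 := by norm_num [Nat.factorial]
  have e4 : 2 * N + 4 - 2 + 1 = 2 * N + 2 + 1 := by omega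
  rw [e4] at h4
  set a : ℝ := (Nat.factorial (2 * N + 1) : ℝ) with ha
  have ha0 : a ≠ 0 := Nat.cast_ne_zero.mpr (Nat.factorial_ne_zero _)
  have f3 : (Nat.factorial (2 * N + 2 + 1) : ℝ) = (2 * N + 3) * ((2 * N + 2) * a) := by
    have h : Nat.factorial (2 * N + 2 + 1)
        = (2 * N + 3) * ((2 * N + 2) * Nat.factorial (2 * N + 1)) := by
      show Nat.factorial ((2 * N + 1) + 1 + 1) = _
      rw [Nat.factorial_succ, Nat.factorial_succ]
    rw [h]; push_cast; ring
  have f5 : (Nat.factorial (2 * N + 4 + 1) : ℝ)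
      = (2 * N + 5) * ((2 * N + 4) * ((2 * N + 3) * ((2 * N + 2) * a))) := by
    have h : Nat.factorial (2 * N + 4 + 1)
        = (2 * N + 5) * ((2 * N + 4) * ((2 * N + 3) * ((2 * N + 2)
          * Nat.factorial (2 * N + 1)))) := by
      show Nat.factorial ((2 * N + 1) + 1 + 1 + 1 + 1) = _
      rw [Nat.factorial_succ, Nat.factorial_succ, Nat.factorial_succ, Nat.factorial_succ]
    rw [h]; push_cast; ring
  rw [f3] at h2
  rw [f5, f3] at h4
  have hN2 : ((2:ℝ) * N + 2) ≠ 0 := by positivity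
  have hN3 : ((2:ℝ) * N + 3) ≠ 0 := by positivity
  have hN4 : ((2:ℝ) * N + 4) ≠ 0 := by positivity
  have hN5 : ((2:ℝ) * N + 5) ≠ 0 := by positivity
  rw [h0] at h2 h4
  have hE2 : Ehat 2 = -2 / ((2 * N + 2) * (2 * N + 3)) := by
    field_simp at h2 ⊢
    have hstep : (Ehat 2 * ((2 * (N:ℝ) + 2) * (2 * N + 3)) + 2) * a = 0 := by
      linear_combination (2 * a) * h2
    have := (mul_eq_zero.mp hstep).resolve_right ha0
    linarith
  have hE4 : Ehat 4 = 2 * 24 * (4 * N + 7) /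
      ((2 * N + 2) ^ 2 * (2 * N + 3) ^ 2 * (2 * N + 4) * (2 * N + 5)) := by
    rw [hE2] at h4
    field_simp at h4 ⊢
    have hstep : (Ehat 4 * ((2 * (N:ℝ) + 2) ^ 2 * (2 * N + 3) ^ 2 * (2 * N + 4) * (2 * N + 5))
        - 2 * 24 * (4 * N + 7)) * (((2 * (N:ℝ) + 2) * (2 * N + 3)) * (2 * a ^ 2)) = 0 := by
      linear_combination (((2 * (N:ℝ) + 2) * (2 * N + 3)) * (2 * a ^ 2)) * h4
    have hne : (((2 * (N:ℝ) + 2) * (2 * N + 3)) * (2 * a ^ 2)) ≠ 0 := by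
      apply mul_ne_zero (mul_ne_zero hN2 hN3)
      exact mul_ne_zero two_ne_zero (pow_ne_zero _ ha0)
    have := (mul_eq_zero.mp hstep).resolve_right hne
    linarith
  constructor
  · rw [hE2]; push_cast; ring_nf
  · rw [hE4]; norm_num [Nat.factorial]
end

section
/- For N ≥ 0 and n ≥ 1, E_{N,2n} = (2n)! Σ_{t_1+2t_2+⋯+n t_n = n} multinomial(t_1+⋯+t_n; t_1,…,t_n) (-1)^{t_1+⋯+t_n} Π_{j=1}^n ((2N)!/(2N+2j)!)^{t_j}, where the sum is over nonnegative integers t_1,…,t_n with t_1+2t_2+⋯+n t_n = n and multinomial(s; t_1,…,t_n) = s!/(t_1!⋯t_n!). -/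
open Finset

namespace HET

noncomputable def aa (N k : ℕ) : ℝ := (Nat.factorial (2*N) : ℝ) / (Nat.factorial (2*N + 2*k) : ℝ)

def TT (n m : ℕ) : Finset (Fin n → ℕ) :=
  (Fintype.piFinset fun _ : Fin n => Finset.range (m+1)).filter
    (fun t => ∑ j : Fin n, ((j : ℕ) + 1) * t j = m)

lemma mem_TT {n m : ℕ} {t : Fin n → ℕ} : t ∈ TT n m ↔ ∑ j : Fin n, ((j : ℕ) + 1) * t j = m := by
  constructor
  · intro h; exact (Finset.mem_filter.mp h).2
  · intro h
    refine Finset.mem_filter.mpr ⟨?_, h⟩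
    refine Fintype.mem_piFinset.mpr fun j => ?_
    rw [Finset.mem_range]
    have h1 : ((j : ℕ) + 1) * t j ≤ m := h ▸ Finset.single_le_sum
      (f := fun j : Fin n => ((j : ℕ) + 1) * t j) (fun _ _ => Nat.zero_le _) (Finset.mem_univ j)
    have : t j ≤ ((j : ℕ) + 1) * t j := Nat.le_mul_of_pos_left _ (Nat.succ_pos _)
    omega

lemma TT_zero_of_ge {n m : ℕ} {t : Fin n → ℕ} (ht : t ∈ TT n m) {j : Fin n} (hj : m ≤ (j : ℕ)) :
    t j = 0 := by
  have h := mem_TT.mp ht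
  have h1 : ((j : ℕ) + 1) * t j ≤ m := h ▸ Finset.single_le_sum
    (f := fun j : Fin n => ((j : ℕ) + 1) * t j) (fun _ _ => Nat.zero_le _) (Finset.mem_univ j)
  by_contra hne
  have : (j : ℕ) + 1 ≤ ((j : ℕ) + 1) * t j := Nat.le_mul_of_pos_right _ (Nat.pos_of_ne_zero hne)
  omega

noncomputable def Mr {n : ℕ} (t : Fin n → ℕ) : ℝ :=
  (Nat.factorial (∑ j, t j) : ℝ) / ∏ j, (Nat.factorial (t j) : ℝ)

lemma fact_ne (k : ℕ) : (Nat.factorial k : ℝ) ≠ 0 := by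
  exact_mod_cast Nat.factorial_ne_zero k

lemma prod_fact_ne {n : ℕ} (t : Fin n → ℕ) : (∏ j, (Nat.factorial (t j) : ℝ)) ≠ 0 :=
  Finset.prod_ne_zero_iff.mpr fun j _ => fact_ne _

lemma multinomial_eq_Mr {n : ℕ} (t : Fin n → ℕ) :
    (Nat.multinomial Finset.univ t : ℝ) = Mr t := by
  have h := Nat.multinomial_spec Finset.univ t
  have h2 : (∏ j, (Nat.factorial (t j) : ℝ)) * (Nat.multinomial Finset.univ t : ℝ)
      = (Nat.factorial (∑ j, t j) : ℝ) := by exact_mod_cast congrArg (Nat.cast : ℕ → ℝ) h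
  rw [Mr, eq_div_iff (prod_fact_ne t), mul_comm]
  exact h2

noncomputable def term (N n : ℕ) (t : Fin n → ℕ) : ℝ :=
  Mr t * (-1 : ℝ) ^ (∑ j, t j) * ∏ j : Fin n, (aa N ((j : ℕ) + 1)) ^ (t j)

noncomputable def W (N n m : ℕ) : ℝ := ∑ t ∈ TT n m, term N n t


lemma prod_restrict {M : Type*} [CommMonoid M] {m n : ℕ} (h : m ≤ n) (t : Fin n → ℕ)
    (hvan : ∀ j : Fin n, m ≤ (j : ℕ) → t j = 0) (f : ℕ → ℕ → M) (hf : ∀ i, f i 0 = 1) :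
    ∏ i : Fin n, f (i : ℕ) (t i) = ∏ i : Fin m, f (i : ℕ) (t (Fin.castLE h i)) := by
  set g : ℕ → M := fun k => if hk : k < n then f k (t ⟨k, hk⟩) else 1 with hg
  have h1 : ∏ i : Fin n, f (i : ℕ) (t i) = ∏ i ∈ Finset.range n, g i := by
    rw [← Fin.prod_univ_eq_prod_range g n]
    apply Finset.prod_congr rfl
    intro i _
    simp [hg, i.isLt]
  have h2 : ∏ i : Fin m, f (i : ℕ) (t (Fin.castLE h i)) = ∏ i ∈ Finset.range m, g i := by
    rw [← Fin.prod_univ_eq_prod_range g m]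
    apply Finset.prod_congr rfl
    intro i _
    have hi : (i : ℕ) < n := lt_of_lt_of_le i.isLt h
    simp only [hg, dif_pos hi]
    rfl
  rw [h1, h2, Finset.range_eq_Ico, Finset.range_eq_Ico, ← Finset.prod_Ico_consecutive _ (Nat.zero_le m) h]
  have h3 : ∏ i ∈ Finset.Ico m n, g i = 1 := by
    apply Finset.prod_eq_one
    intro i hi
    obtain ⟨hi1, hi2⟩ := Finset.mem_Ico.mp hi
    simp only [hg, dif_pos hi2]
    rw [hvan ⟨i, hi2⟩ hi1, hf]
  rw [h3, mul_one]

lemma sum_restrict {m n : ℕ} (h : m ≤ n) (t : Fin n → ℕ)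
    (hvan : ∀ j : Fin n, m ≤ (j : ℕ) → t j = 0) (f : ℕ → ℕ → ℕ) (hf : ∀ i, f i 0 = 0) :
    ∑ i : Fin n, f (i : ℕ) (t i) = ∑ i : Fin m, f (i : ℕ) (t (Fin.castLE h i)) := by
  have := prod_restrict (M := Multiplicative ℕ) h t hvan
    (fun i k => Multiplicative.ofAdd (f i k)) (fun i => by simp [hf])
  simpa [← ofAdd_sum] using this


-- extension map
def ext' (m n : ℕ) (s : Fin m → ℕ) : Fin n → ℕ :=
  fun i => if hi : (i : ℕ) < m then s ⟨i, hi⟩ else 0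

lemma ext'_castLE {m n : ℕ} (h : m ≤ n) (s : Fin m → ℕ) (i : Fin m) :
    ext' m n s (Fin.castLE h i) = s i := by
  simp [ext', i.isLt]

lemma ext'_van {m n : ℕ} (s : Fin m → ℕ) (j : Fin n) (hj : m ≤ (j : ℕ)) : ext' m n s j = 0 := by
  simp [ext', Nat.not_lt.mpr hj]

lemma W_pad (N : ℕ) {m n : ℕ} (h : m ≤ n) : W N n m = W N m m := by
  apply Finset.sum_nbij' (fun t => fun i : Fin m => t (Fin.castLE h i)) (ext' m n)
  · intro t ht
    rw [mem_TT]
    rw [← sum_restrict h t (fun j hj => TT_zero_of_ge ht hj)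
      (fun i k => (i+1) * k) (fun i => by ring)]
    exact mem_TT.mp ht
  · intro s hs
    rw [mem_TT]
    rw [sum_restrict h (ext' m n s) (fun j hj => ext'_van s j hj)
      (fun i k => (i+1) * k) (fun i => by ring)]
    have : ∀ i : Fin m, ext' m n s (Fin.castLE h i) = s i := ext'_castLE h s
    simp only [this]
    exact mem_TT.mp hs
  · intro t ht
    funext i
    by_cases hi : (i : ℕ) < m
    · simp only [ext', dif_pos hi]
      congr 1
    · simp only [ext', dif_neg hi]
      exact (TT_zero_of_ge ht (Nat.not_lt.mp hi)).symm
  · intro s hs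
    funext i
    exact ext'_castLE h s i
  · intro t ht
    have hvan := fun j hj => TT_zero_of_ge ht (j := j) hj
    have hsum : ∑ i : Fin n, t i = ∑ i : Fin m, t (Fin.castLE h i) :=
      sum_restrict h t hvan (fun _ k => k) (fun _ => rfl)
    have hfact : ∏ i : Fin n, (Nat.factorial (t i) : ℝ) =
        ∏ i : Fin m, (Nat.factorial (t (Fin.castLE h i)) : ℝ) :=
      prod_restrict h t hvan (fun _ k => (Nat.factorial k : ℝ)) (fun _ => by simp)
    have hpow : ∏ i : Fin n, (aa N ((i : ℕ) + 1)) ^ (t i) =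
        ∏ i : Fin m, (aa N ((i : ℕ) + 1)) ^ (t (Fin.castLE h i)) :=
      prod_restrict h t hvan (fun i k => (aa N (i + 1)) ^ k) (fun _ => pow_zero _)
    simp only [term, Mr, hsum, hfact, hpow]


-- basic facts about update
lemma sum_update_sub {n : ℕ} (t : Fin n → ℕ) (j : Fin n) (hj : 0 < t j) :
    ∑ i, Function.update t j (t j - 1) i = (∑ i, t i) - 1 := by
  rw [Finset.sum_update_of_mem (Finset.mem_univ j)]
  have h : t j ≤ ∑ i, t i := Finset.single_le_sum (fun _ _ => Nat.zero_le _) (Finset.mem_univ j)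
  have h2 : ∑ i, t i = t j + ∑ i ∈ Finset.univ \ {j}, t i := by
    rw [← Finset.sum_update_of_mem (Finset.mem_univ j)]
    simp
  omega

lemma prod_update_fact {n : ℕ} (t : Fin n → ℕ) (j : Fin n) (hj : 0 < t j) :
    (∏ i, (Nat.factorial (Function.update t j (t j - 1) i) : ℝ)) * (t j : ℝ)
      = ∏ i, (Nat.factorial (t i) : ℝ) := by
  have hrw : ∀ i, (Nat.factorial (Function.update t j (t j - 1) i) : ℝ)
      = Function.update (fun k => (Nat.factorial (t k) : ℝ)) j
          ((Nat.factorial (t j - 1) : ℝ)) i := fun i =>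
    Function.apply_update (fun _ k => ((Nat.factorial k : ℕ) : ℝ)) t j (t j - 1) i
  simp only [hrw]
  rw [Finset.prod_update_of_mem (Finset.mem_univ j)]
  have h2 : ∏ i, (Nat.factorial (t i) : ℝ)
      = (Nat.factorial (t j) : ℝ) * ∏ i ∈ Finset.univ \ {j}, (Nat.factorial (t i) : ℝ) := by
    rw [← Finset.prod_update_of_mem (Finset.mem_univ j)]
    simp
  rw [h2]
  have h3 : (Nat.factorial (t j) : ℝ) = (t j : ℝ) * (Nat.factorial (t j - 1) : ℝ) := by
    obtain ⟨k, hk⟩ : ∃ k, t j = k + 1 := ⟨t j - 1, by omega⟩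
    rw [hk]
    simp [Nat.factorial_succ]
  rw [h3]; ring


-- decrement identity
lemma Mr_decrement {n : ℕ} (t : Fin n → ℕ) (ht : 0 < ∑ j, t j) :
    Mr t = ∑ j ∈ Finset.univ.filter (fun j : Fin n => 0 < t j),
      Mr (Function.update t j (t j - 1)) := by
  have key : ∀ j ∈ Finset.univ.filter (fun j : Fin n => 0 < t j),
      Mr (Function.update t j (t j - 1))
        = (Nat.factorial ((∑ i, t i) - 1) : ℝ) / (∏ i, (Nat.factorial (t i) : ℝ)) * (t j : ℝ) := by
    intro j hj
    have hj' : 0 < t j := (Finset.mem_filter.mp hj).2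
    rw [Mr, sum_update_sub t j hj']
    have hP := prod_update_fact t j hj'
    have hP' := prod_fact_ne (Function.update t j (t j - 1))
    have hPt := prod_fact_ne t
    have htj : (t j : ℝ) ≠ 0 := by exact_mod_cast Nat.pos_iff_ne_zero.mp hj'
    field_simp
    rw [← hP]
  rw [Finset.sum_congr rfl key, ← Finset.mul_sum, Mr]
  have hsum : ∑ j ∈ Finset.univ.filter (fun j : Fin n => 0 < t j), (t j : ℝ)
      = ((∑ j, t j : ℕ) : ℝ) := by
    push_cast
    rw [Finset.sum_filter]
    apply Finset.sum_congr rfl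
    intro j _
    by_cases h : 0 < t j
    · simp [h]
    · simp [h, Nat.eq_zero_of_not_pos h]
  rw [hsum]
  have hfac : (Nat.factorial (∑ j, t j) : ℝ)
      = (Nat.factorial ((∑ j, t j) - 1) : ℝ) * ((∑ j, t j : ℕ) : ℝ) := by
    obtain ⟨k, hk⟩ : ∃ k, (∑ j, t j) = k + 1 := ⟨(∑ j, t j) - 1, by omega⟩
    rw [hk]
    simp [Nat.factorial_succ]
    push_cast
    ring
  rw [hfac]
  field_simp


variable {n : ℕ}

lemma update_sum {M : Type*} [AddCommMonoid M] (g : Fin n → ℕ → M) (t : Fin n → ℕ)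
    (j : Fin n) (v : ℕ) :
    ∑ i, g i (Function.update t j v i) = g j v + ∑ i ∈ Finset.univ \ {j}, g i (t i) := by
  have hrw : ∀ i, g i (Function.update t j v i)
      = Function.update (fun k => g k (t k)) j (g j v) i := fun i =>
    Function.apply_update (fun k a => g k a) t j v i
  simp only [hrw]
  rw [Finset.sum_update_of_mem (Finset.mem_univ j)]

lemma plain_sum {M : Type*} [AddCommMonoid M] (g : Fin n → ℕ → M) (t : Fin n → ℕ) (j : Fin n) :
    ∑ i, g i (t i) = g j (t j) + ∑ i ∈ Finset.univ \ {j}, g i (t i) := by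
  have := update_sum g t j (t j)
  simpa [Function.update_eq_self] using this

lemma update_prod {M : Type*} [CommMonoid M] (g : Fin n → ℕ → M) (t : Fin n → ℕ)
    (j : Fin n) (v : ℕ) :
    ∏ i, g i (Function.update t j v i) = g j v * ∏ i ∈ Finset.univ \ {j}, g i (t i) := by
  have hrw : ∀ i, g i (Function.update t j v i)
      = Function.update (fun k => g k (t k)) j (g j v) i := fun i =>
    Function.apply_update (fun k a => g k a) t j v i
  simp only [hrw]
  rw [Finset.prod_update_of_mem (Finset.mem_univ j)]

lemma plain_prod {M : Type*} [CommMonoid M] (g : Fin n → ℕ → M) (t : Fin n → ℕ) (j : Fin n) :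
    ∏ i, g i (t i) = g j (t j) * ∏ i ∈ Finset.univ \ {j}, g i (t i) := by
  have := update_prod g t j (t j)
  simpa [Function.update_eq_self] using this


lemma aa_pos (N k : ℕ) : 0 < aa N k := by
  apply div_pos <;> exact_mod_cast Nat.factorial_pos _

lemma inner_bij (N n : ℕ) (j : Fin n) :
    ∑ t ∈ (TT n n).filter (fun t => 0 < t j),
      Mr (Function.update t j (t j - 1)) * (-1:ℝ)^(∑ i, t i) * ∏ i : Fin n, (aa N ((i:ℕ)+1))^(t i)
    = (-(aa N ((j:ℕ)+1))) * W N n (n - ((j:ℕ)+1)) := by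
  rw [W, Finset.mul_sum]
  apply Finset.sum_nbij' (fun t => Function.update t j (t j - 1))
    (fun s => Function.update s j (s j + 1))
  · intro t ht
    obtain ⟨ht1, hj⟩ := Finset.mem_filter.mp ht
    have ht2 := mem_TT.mp ht1
    rw [mem_TT]
    have h1 := update_sum (fun i k => ((i : ℕ)+1)*k) t j (t j - 1)
    have h2 := plain_sum (fun i k => ((i : ℕ)+1)*k) t j
    rw [h1]
    rw [h2] at ht2
    have hjn : (j : ℕ) + 1 ≤ n := j.isLt
    have hmul : ((j:ℕ)+1) * t j = ((j:ℕ)+1) * (t j - 1) + ((j:ℕ)+1) := by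
      conv_lhs => rw [show t j = (t j - 1) + 1 from by omega]
      rw [Nat.mul_succ]
    omega
  · intro s hs
    have hs2 := mem_TT.mp hs
    refine Finset.mem_filter.mpr ⟨?_, by simp⟩
    rw [mem_TT]
    have h1 := update_sum (fun i k => ((i : ℕ)+1)*k) s j (s j + 1)
    have h2 := plain_sum (fun i k => ((i : ℕ)+1)*k) s j
    rw [h1]
    rw [h2] at hs2
    have hjn : (j : ℕ) + 1 ≤ n := j.isLt
    have hmul : ((j:ℕ)+1) * (s j + 1) = ((j:ℕ)+1) * s j + ((j:ℕ)+1) := Nat.mul_succ _ _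
    omega
  · intro t ht
    have hj : 0 < t j := (Finset.mem_filter.mp ht).2
    funext i
    rcases eq_or_ne i j with rfl | hij
    · simp
      omega
    · simp [Function.update_of_ne hij]
  · intro s hs
    funext i
    rcases eq_or_ne i j with rfl | hij
    · simp
    · simp [Function.update_of_ne hij]
  · intro t ht
    obtain ⟨ht1, hj⟩ := Finset.mem_filter.mp ht
    set s := Function.update t j (t j - 1) with hsdef
    have hsumt : ∑ i, t i = (∑ i, s i) + 1 := by
      have h1 := update_sum (fun _ k => k) t j (t j - 1)
      have h2 := plain_sum (fun _ k => k) t j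
      rw [hsdef, h1, h2]
      omega
    have hprod : ∏ i : Fin n, (aa N ((i : ℕ)+1))^(t i)
        = (aa N ((j : ℕ)+1)) * ∏ i : Fin n, (aa N ((i : ℕ)+1))^(s i) := by
      have h1 := update_prod (fun i k => (aa N ((i : ℕ)+1))^k) t j (t j - 1)
      have h2 := plain_prod (fun i k => (aa N ((i : ℕ)+1))^k) t j
      rw [hsdef, h1, h2]
      have h3 : (aa N ((j : ℕ)+1))^(t j) = (aa N ((j : ℕ)+1)) * (aa N ((j : ℕ)+1))^(t j - 1) := by
        obtain ⟨k, hk⟩ : ∃ k, t j = k + 1 := ⟨t j - 1, by omega⟩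
        rw [hk]
        simp [pow_succ]
        ring
      rw [h3]
      ring
    rw [term, hsumt, hprod, pow_succ]
    ring

lemma W_rec (N n : ℕ) (hn : 1 ≤ n) :
    W N n n = ∑ j : Fin n, (-(aa N ((j : ℕ)+1))) * W N n (n - ((j : ℕ)+1)) := by
  rw [W]
  have step1 : ∀ t ∈ TT n n, term N n t
      = ∑ j ∈ Finset.univ.filter (fun j : Fin n => 0 < t j),
          Mr (Function.update t j (t j - 1)) * (-1:ℝ)^(∑ i, t i)
            * ∏ i : Fin n, (aa N ((i : ℕ)+1))^(t i) := by
    intro t ht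
    have hpos : 0 < ∑ i, t i := by
      rcases Nat.eq_zero_or_pos (∑ i, t i) with h | h
      · exfalso
        have h0 : ∀ i ∈ Finset.univ, t i = 0 := fun i _ =>
          (Finset.sum_eq_zero_iff.mp h) i (Finset.mem_univ i)
        have := mem_TT.mp ht
        rw [Finset.sum_eq_zero (fun i hi => by rw [h0 i hi, Nat.mul_zero])] at this
        omega
      · exact h
    rw [term, Mr_decrement t hpos, Finset.sum_mul, Finset.sum_mul]
  rw [Finset.sum_congr rfl step1]
  simp only [Finset.sum_filter]
  rw [Finset.sum_comm]
  apply Finset.sum_congr rfl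
  intro j _
  rw [← Finset.sum_filter]
  exact inner_bij N n j


lemma W_zero (N : ℕ) : W N 0 0 = 1 := by
  have h : TT 0 0 = {fun i : Fin 0 => 0} := by
    ext t
    simp only [mem_TT, Finset.mem_singleton]
    constructor
    · intro _; funext i; exact i.elim0
    · intro ht; simp
  rw [W, h, Finset.sum_singleton, term, Mr]
  simp

lemma W_rec' (N m : ℕ) (hm : 1 ≤ m) :
    W N m m = ∑ i ∈ Finset.range m, (-(aa N (m - i))) * W N i i := by
  rw [W_rec N m hm]
  have hpad : ∀ j : Fin m, (-(aa N ((j : ℕ)+1))) * W N m (m - ((j : ℕ)+1))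
      = (-(aa N ((j : ℕ)+1))) * W N (m - ((j : ℕ)+1)) (m - ((j : ℕ)+1)) := fun j => by
    rw [W_pad N (by omega)]
  rw [Finset.sum_congr rfl (fun j _ => hpad j)]
  rw [Fin.sum_univ_eq_sum_range (fun j => (-(aa N (j+1))) * W N (m - (j+1)) (m - (j+1))) m]
  rw [← Finset.sum_range_reflect (fun i => (-(aa N (m - i))) * W N i i) m]
  apply Finset.sum_congr rfl
  intro j hj
  have hjm : j < m := Finset.mem_range.mp hj
  have h1 : m - (m - 1 - j) = j + 1 := by omega
  have h2 : m - 1 - j = m - (j + 1) := by omega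
  rw [h1, h2]

lemma E_eq (N : ℕ) (E : ℕ → ℝ) (h0 : E 0 = 1)
    (hrec : ∀ n : ℕ, 2 ≤ n → Even n →
      ∑ i ∈ Finset.range (n / 2 + 1),
        E (2 * i) / ((Nat.factorial (2 * N + n - 2 * i) : ℝ) * (Nat.factorial (2 * i))) = 0) :
    ∀ m : ℕ, E (2 * m) = (Nat.factorial (2 * m) : ℝ) * W N m m := by
  intro m
  induction m using Nat.strong_induction_on with
  | _ m IH =>
  rcases Nat.eq_zero_or_pos m with rfl | hm
  · simp [h0, W_zero]
  · have hr := hrec (2*m) (by omega) ⟨m, by ring⟩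
    rw [show 2*m/2 = m from by omega, Finset.sum_range_succ,
      show 2*N + 2*m - 2*m = 2*N from by omega] at hr
    have hlast : E (2*m) / ((Nat.factorial (2*N) : ℝ) * (Nat.factorial (2*m)))
        = - ∑ i ∈ Finset.range m,
            E (2*i) / ((Nat.factorial (2*N + 2*m - 2*i) : ℝ) * (Nat.factorial (2*i))) := by
      linarith [hr]
    have hEm : E (2*m) = (- ∑ i ∈ Finset.range m,
          E (2*i) / ((Nat.factorial (2*N + 2*m - 2*i) : ℝ) * (Nat.factorial (2*i))))
        * ((Nat.factorial (2*N) : ℝ) * (Nat.factorial (2*m))) := by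
      rw [← hlast]
      field_simp
    rw [hEm, W_rec' N m hm, Finset.mul_sum, neg_mul, Finset.sum_mul, ← Finset.sum_neg_distrib]
    apply Finset.sum_congr rfl
    intro i hi
    have him : i < m := Finset.mem_range.mp hi
    rw [IH i him, show 2*N + 2*m - 2*i = 2*N + 2*(m-i) from by omega, aa]
    have h1 := fact_ne (2*N)
    have h2 := fact_ne (2*N + 2*(m-i))
    have h3 := fact_ne (2*i)
    field_simp

end HET


/-- Trudi-formula expression: for `N ≥ 0` and `n ≥ 1`,
`E_{N,2n} = (2n)! ∑_{t₁+2t₂+⋯+ntₙ = n} multinomial(t₁+⋯+tₙ; t₁,…,tₙ) (-1)^{t₁+⋯+tₙ}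
∏_{j=1}^n ((2N)!/(2N+2j)!)^{t_j}`, the hypergeometric Euler numbers being defined by
`E_{N,0}=1`, the recurrence, and `E_{N,n}=0` for odd `n`. -/
theorem hypergeometric_euler_trudi (N : ℕ) (E : ℕ → ℝ)
    (h0 : E 0 = 1)
    (hodd : ∀ n : ℕ, Odd n → E n = 0)
    (hrec : ∀ n : ℕ, 2 ≤ n → Even n →
      ∑ i ∈ Finset.range (n / 2 + 1),
        E (2 * i) / ((Nat.factorial (2 * N + n - 2 * i) : ℝ) * (Nat.factorial (2 * i))) = 0) :
    ∀ n : ℕ, 1 ≤ n →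
      E (2 * n) = (Nat.factorial (2 * n) : ℝ) *
        ∑ t ∈ (Fintype.piFinset fun _ : Fin n => Finset.range (n + 1)).filter
            (fun t => ∑ j : Fin n, ((j : ℕ) + 1) * t j = n),
          (Nat.multinomial Finset.univ t : ℝ) * (-1 : ℝ) ^ (∑ j : Fin n, t j) *
            ∏ j : Fin n,
              ((Nat.factorial (2 * N) : ℝ) /
                (Nat.factorial (2 * N + 2 * ((j : ℕ) + 1)) : ℝ)) ^ (t j) := by
  intro n hn
  rw [HET.E_eq N E h0 hrec n]
  congr 1
  rw [HET.W]
  apply Finset.sum_congr rfl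
  intro t ht
  simp [HET.term, HET.aa, HET.multinomial_eq_Mr]
end
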